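/- arXiv:0804.1380 — 5 statements merged into one kernel-verified Lean document; each statement's English description precedes it below -/
import Mathlib

section
/- For fixed positive integers ℓ ≥ 2 and k, there is a bijection between the set of ℓ-cores whose largest part equals k and the set of (ℓ−1)-cores whose largest part is at most k. -/
def IsPartition (l : List ℕ) : Prop := l.Pairwise (· ≥ ·) ∧ ∀ x ∈ l, 0 < x

def hook (l : List ℕ) (a c : ℕ) : ℕ :=
  (l.getD a 0 - c) + ((List.range l.length).filter (fun i => decide (a < i ∧ c ≤ l.getD i 0))).length + 1

def IsCore (ℓ : ℕ) (l : List ℕ) : Prop :=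
  ∀ a < l.length, ∀ c, 1 ≤ c → c ≤ l.getD a 0 → ¬ (ℓ ∣ hook l a c)

def betaList (l : List ℕ) : List ℕ := (List.range l.length).map (fun a => hook l a 1)

namespace StmtAux

lemma sorted_lt_le_of_le {s : List ℕ} (hs : s.Pairwise (· < ·)) :
    ∀ {i j : ℕ}, i ≤ j → (hj : j < s.length) → s.getD i 0 + (j - i) ≤ s.getD j 0 := by
  have key : ∀ (d i : ℕ), (h : i + d < s.length) → s.getD i 0 + d ≤ s.getD (i + d) 0 := by
    intro d
    induction d with
    | zero => intro i h; simp
    | succ d ih =>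
      intro i h
      rw [show i + (d+1) = (i+d)+1 by omega] at *
      have h1 : i + d < s.length := by omega
      have h2 := ih i h1
      have h3 : s.getD (i+d) 0 < s.getD (i+d+1) 0 := by
        rw [List.getD_eq_getElem _ _ h1, List.getD_eq_getElem _ _ h]
        exact List.pairwise_iff_getElem.1 hs _ _ h1 h (by omega)
      omega
  intro i j hij hj
  have := key (j - i) i (by omega)
  rw [(by omega : i + (j - i) = j)] at this
  omega

lemma part_anti {l : List ℕ} (hl : l.Pairwise (· ≥ ·)) {i j : ℕ} (hij : i ≤ j) (hj : j < l.length) :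
    l.getD j 0 ≤ l.getD i 0 := by
  rcases eq_or_lt_of_le hij with rfl | hij
  · exact le_refl _
  · rw [List.getD_eq_getElem _ _ hj, List.getD_eq_getElem _ _ (by omega : i < l.length)]
    exact List.pairwise_iff_getElem.1 hl _ _ (by omega) hj hij

/-- number of rows with part at least `c` -/
def Nc (l : List ℕ) (c : ℕ) : ℕ := ((Finset.range l.length).filter (fun i => c ≤ l.getD i 0)).card

lemma lt_Nc_iff {l : List ℕ} (hl : l.Pairwise (· ≥ ·)) {c i : ℕ} (hi : i < l.length) :
    i < Nc l c ↔ c ≤ l.getD i 0 := by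
  constructor
  · intro h
    by_contra hc
    have hsub : (Finset.range l.length).filter (fun i => c ≤ l.getD i 0) ⊆ Finset.range i := by
      intro j hj
      simp only [Finset.mem_filter, Finset.mem_range] at hj ⊢
      by_contra hji
      exact hc (le_trans hj.2 (part_anti hl (by omega) hj.1))
    have := Finset.card_le_card hsub
    simp only [Finset.card_range] at this
    unfold Nc at h; omega
  · intro h
    have hsub : Finset.range (i+1) ⊆ (Finset.range l.length).filter (fun i => c ≤ l.getD i 0) := by
      intro j hj
      simp only [Finset.mem_range] at hj
      simp only [Finset.mem_filter, Finset.mem_range]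
      exact ⟨by omega, le_trans h (part_anti hl (by omega) hi)⟩
    have := Finset.card_le_card hsub
    simp only [Finset.card_range] at this
    unfold Nc; omega

lemma Nc_le_length (l : List ℕ) (c : ℕ) : Nc l c ≤ l.length := by
  have := Finset.card_le_card (Finset.filter_subset (fun i => c ≤ l.getD i 0) (Finset.range l.length))
  simpa [Nc] using this

/-- the beta number (first-column hook) of row `a` -/
def beta (l : List ℕ) (a : ℕ) : ℕ := l.getD a 0 + (l.length - 1 - a)

def phi (l : List ℕ) (c : ℕ) : ℕ := (c - 1) + (l.length - Nc l c)

lemma hook_eq {l : List ℕ} (hl : l.Pairwise (· ≥ ·)) {a c : ℕ} :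
    hook l a c = (l.getD a 0 - c) + (Nc l c - (a+1)) + 1 := by
  have hfl : ((List.range l.length).filter (fun i => decide (a < i ∧ c ≤ l.getD i 0))).length
      = ((Finset.range l.length).filter (fun i => a < i ∧ c ≤ l.getD i 0)).card := rfl
  have hset : (Finset.range l.length).filter (fun i => a < i ∧ c ≤ l.getD i 0)
      = Finset.Ico (a+1) (Nc l c) := by
    ext i
    simp only [Finset.mem_filter, Finset.mem_range, Finset.mem_Ico]
    constructor
    · rintro ⟨hi, hai, hci⟩
      exact ⟨by omega, (lt_Nc_iff hl hi).2 hci⟩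
    · rintro ⟨hai, hni⟩
      have hi : i < l.length := lt_of_lt_of_le hni (Nc_le_length l c)
      exact ⟨hi, by omega, (lt_Nc_iff hl hi).1 hni⟩
  rw [hook, hfl, hset, Nat.card_Ico]

lemma aN {l : List ℕ} (hl : l.Pairwise (· ≥ ·)) {a c : ℕ} (ha : a < l.length)
    (hc : c ≤ l.getD a 0) : a + 1 ≤ Nc l c := (lt_Nc_iff hl ha).2 hc

lemma hook_add_phi {l : List ℕ} (hl : l.Pairwise (· ≥ ·)) {a c : ℕ} (ha : a < l.length)
    (hc1 : 1 ≤ c) (hc : c ≤ l.getD a 0) : hook l a c + phi l c = beta l a := by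
  have h1 := aN hl ha hc
  have h2 := Nc_le_length l c
  rw [hook_eq hl, phi, beta]; omega

lemma phi_lt_beta {l : List ℕ} (hl : l.Pairwise (· ≥ ·)) {a c : ℕ} (ha : a < l.length)
    (hc1 : 1 ≤ c) (hc : c ≤ l.getD a 0) : phi l c < beta l a := by
  have h1 := aN hl ha hc
  have h2 := Nc_le_length l c
  rw [phi, beta]; omega

lemma phi_ne_beta {l : List ℕ} (hl : l.Pairwise (· ≥ ·)) {c : ℕ} (hc1 : 1 ≤ c) {i : ℕ}
    (hi : i < l.length) : phi l c ≠ beta l i := by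
  have h2 := Nc_le_length l c
  rw [phi, beta]
  by_cases h : c ≤ l.getD i 0
  · have := (lt_Nc_iff hl hi).2 h
    omega
  · have : ¬ (i < Nc l c) := fun hlt => h ((lt_Nc_iff hl hi).1 hlt)
    omega

lemma phi_strictMono {l : List ℕ} {c c' : ℕ} (h1 : 1 ≤ c) (hcc : c < c') :
    phi l c < phi l c' := by
  have ha := Nc_le_length l c'
  have hanti : Nc l c' ≤ Nc l c := by
    apply Finset.card_le_card
    intro j hj
    simp only [Finset.mem_filter] at hj ⊢
    exact ⟨hj.1, le_trans (le_of_lt hcc) hj.2⟩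
  have := Nc_le_length l c
  rw [phi, phi]; omega

lemma beta_strictAnti {l : List ℕ} (hl : l.Pairwise (· ≥ ·)) {i j : ℕ} (hij : i < j)
    (hj : j < l.length) : beta l j < beta l i := by
  have := part_anti hl (le_of_lt hij) hj
  rw [beta, beta]; omega

lemma pos_getD {l : List ℕ} (hp : ∀ x ∈ l, 0 < x) {i : ℕ} (hi : i < l.length) :
    0 < l.getD i 0 := by
  rw [List.getD_eq_getElem _ _ hi]
  exact hp _ (List.getElem_mem hi)

lemma beta_pos {l : List ℕ} (hl : IsPartition l) {i : ℕ} (hi : i < l.length) :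
    0 < beta l i := by
  have := pos_getD hl.2 hi
  rw [beta]; omega

/-- the set of beta numbers -/
def BetaSet (l : List ℕ) : Finset ℕ := (Finset.range l.length).image (beta l)

lemma mem_BetaSet {l : List ℕ} {x : ℕ} : x ∈ BetaSet l ↔ ∃ a, a < l.length ∧ beta l a = x := by
  simp [BetaSet, Finset.mem_image, Finset.mem_range]

lemma card_BetaSet {l : List ℕ} (hl : l.Pairwise (· ≥ ·)) : (BetaSet l).card = l.length := by
  rw [BetaSet, Finset.card_image_of_injOn, Finset.card_range]
  intro i hi j hj hij
  simp only [Finset.mem_coe, Finset.mem_range] at hi hj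
  by_contra hne
  rcases Nat.lt_or_ge i j with h | h
  · have := beta_strictAnti hl h hj; omega
  · have : j < i := by omega
    have := beta_strictAnti hl this hi; omega

lemma hook_one {l : List ℕ} (hl : IsPartition l) {a : ℕ} (ha : a < l.length) :
    hook l a 1 = beta l a := by
  have hpos := pos_getD hl.2 ha
  have := hook_add_phi hl.1 ha (le_refl 1) hpos
  have hN : Nc l 1 = l.length := by
    have h1 := Nc_le_length l 1
    rcases Nat.eq_zero_or_pos l.length with h0 | h0
    · omega
    · have : l.length - 1 < Nc l 1 := (lt_Nc_iff hl.1 (by omega)).2 (pos_getD hl.2 (by omega))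
      omega
  rw [phi, hN] at this
  omega

/-- φ, restricted to [1, l_a], surjects onto [0, beta a) \ BetaSet. -/
lemma phi_surj {l : List ℕ} (hl : IsPartition l) {a : ℕ} (ha : a < l.length) {x : ℕ}
    (hx : x < beta l a) (hxB : x ∉ BetaSet l) :
    ∃ c, 1 ≤ c ∧ c ≤ l.getD a 0 ∧ phi l c = x := by
  classical
  set T : Finset ℕ := (Finset.range (beta l a)) \ BetaSet l with hT
  have himg : (Finset.Icc 1 (l.getD a 0)).image (phi l) = T := by
    apply Finset.eq_of_subset_of_card_le
    · intro y hy
      simp only [Finset.mem_image, Finset.mem_Icc] at hy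
      obtain ⟨c, ⟨hc1, hc2⟩, rfl⟩ := hy
      simp only [hT, Finset.mem_sdiff, Finset.mem_range]
      constructor
      · exact phi_lt_beta hl.1 ha hc1 hc2
      · intro hmem
        obtain ⟨i, hi, hbi⟩ := mem_BetaSet.1 hmem
        exact phi_ne_beta hl.1 hc1 hi hbi.symm
    · -- card T ≤ card image
      have hcImg : ((Finset.Icc 1 (l.getD a 0)).image (phi l)).card = l.getD a 0 := by
        rw [Finset.card_image_of_injOn, Nat.card_Icc]
        · omega
        · intro c hc c' hc' hcc
          simp only [Finset.coe_Icc, Set.mem_Icc] at hc hc'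
          by_contra hne
          rcases Nat.lt_or_ge c c' with h | h
          · exact absurd hcc (Nat.ne_of_lt (phi_strictMono hc.1 h))
          · have : c' < c := by omega
            exact absurd hcc (Nat.ne_of_gt (phi_strictMono hc'.1 this))
      have hcT : T.card = l.getD a 0 := by
        have hsub : BetaSet l ∩ Finset.range (beta l a) = (Finset.Ioo a l.length).image (beta l) := by
          ext y
          simp only [Finset.mem_inter, Finset.mem_range, Finset.mem_image, Finset.mem_Ioo, mem_BetaSet]
          constructor
          · rintro ⟨⟨i, hi, rfl⟩, hy⟩
            refine ⟨i, ⟨?_, hi⟩, rfl⟩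
            rcases lt_trichotomy i a with h | rfl | h
            · have := beta_strictAnti hl.1 h ha; omega
            · omega
            · exact h
          · rintro ⟨i, ⟨hai, hi⟩, rfl⟩
            exact ⟨⟨i, hi, rfl⟩, beta_strictAnti hl.1 hai hi⟩
        have hcard2 : ((Finset.Ioo a l.length).image (beta l)).card = l.length - (a+1) := by
          rw [Finset.card_image_of_injOn, Nat.card_Ioo]
          · omega
          · intro i hi j hj hij
            simp only [Finset.coe_Ioo, Set.mem_Ioo] at hi hj
            by_contra hne
            rcases Nat.lt_or_ge i j with h | h
            · have := beta_strictAnti hl.1 h hj.2; omega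
            · have : j < i := by omega
              have := beta_strictAnti hl.1 this hi.2; omega
        have hbeta : beta l a = l.getD a 0 + (l.length - 1 - a) := rfl
        rw [hT, ← Finset.sdiff_inter_self_right, Finset.card_sdiff_of_subset Finset.inter_subset_right,
          hsub, hcard2, Finset.card_range]
        omega
      omega
  have hxT : x ∈ T := by
    simp only [hT, Finset.mem_sdiff, Finset.mem_range]
    exact ⟨hx, hxB⟩
  rw [← himg] at hxT
  simp only [Finset.mem_image, Finset.mem_Icc] at hxT
  obtain ⟨c, ⟨h1, h2⟩, h3⟩ := hxT
  exact ⟨c, h1, h2, h3⟩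



lemma hook_pos (l : List ℕ) (a c : ℕ) : 0 < hook l a c := by
  rw [hook]; omega

theorem isCore_iff {l : List ℕ} (hl : IsPartition l) {t : ℕ} (ht : 1 ≤ t) :
    IsCore t l ↔ ∀ b ∈ BetaSet l, t ≤ b → b - t ∈ BetaSet l := by
  constructor
  · intro hcore b hb htb
    obtain ⟨a, ha, rfl⟩ := mem_BetaSet.1 hb
    by_contra hnot
    obtain ⟨c, hc1, hc2, hphi⟩ := phi_surj hl ha (by omega) hnot
    have hsum := hook_add_phi hl.1 ha hc1 hc2
    have : hook l a c = t := by omega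
    exact hcore a ha c hc1 hc2 (this ▸ dvd_refl t)
  · intro hclosed a ha c hc1 hc2 hdvd
    have hsum := hook_add_phi hl.1 ha hc1 hc2
    obtain ⟨m, hm⟩ := hdvd
    have hm1 : 1 ≤ m := by
      have := hook_pos l a c
      rcases Nat.eq_zero_or_pos m with rfl | h
      · omega
      · omega
    have claim : ∀ j, t * j ≤ hook l a c → beta l a - t * j ∈ BetaSet l := by
      intro j
      induction j with
      | zero => intro _; simpa using mem_BetaSet.2 ⟨a, ha, rfl⟩
      | succ j ih =>
        intro hjt
        rw [Nat.mul_succ] at hjt ⊢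
        have hprev := ih (by omega)
        have hmem := hclosed _ hprev (by omega)
        rw [show beta l a - t * j - t = beta l a - (t * j + t) by omega] at hmem
        exact hmem
    have := claim m (by omega)
    rw [show beta l a - t * m = phi l c by omega] at this
    obtain ⟨i, hi, hbi⟩ := mem_BetaSet.1 this
    exact phi_ne_beta hl.1 hc1 hi hbi.symm

/-! ### From beta-sets back to partitions -/

/-- getD of a map over a range -/
lemma mapRange_getD {n a : ℕ} (f : ℕ → ℕ) (ha : a < n) :
    ((List.range n).map f).getD a 0 = f a := by
  rw [List.getD_eq_getElem _ _ (by simpa using ha)]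
  simp

/-- the partition whose beta-set is `S` -/
def toPart (S : Finset ℕ) : List ℕ :=
  (List.range S.card).map
    (fun a => (S.sort (· ≤ ·)).getD (S.card - 1 - a) 0 - (S.card - 1 - a))

lemma length_toPart (S : Finset ℕ) : (toPart S).length = S.card := by
  simp [toPart]

lemma sort_getD_ge {S : Finset ℕ} (hS : ∀ x ∈ S, 0 < x) {i : ℕ} (hi : i < S.card) :
    i + 1 ≤ (S.sort (· ≤ ·)).getD i 0 := by
  have hlen : (S.sort (· ≤ ·)).length = S.card := Finset.length_sort _
  have h0 : 1 ≤ (S.sort (· ≤ ·)).getD 0 0 := by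
    apply hS
    rw [← Finset.mem_sort (α := ℕ) (· ≤ ·), List.getD_eq_getElem _ _ (by omega)]
    exact List.getElem_mem _
  have := sorted_lt_le_of_le (Finset.sortedLT_sort S).pairwise (Nat.zero_le i) (by omega)
  omega

lemma toPart_getD {S : Finset ℕ} {a : ℕ} (ha : a < S.card) :
    (toPart S).getD a 0 = (S.sort (· ≤ ·)).getD (S.card - 1 - a) 0 - (S.card - 1 - a) := by
  rw [toPart, mapRange_getD _ ha]

lemma isPartition_toPart {S : Finset ℕ} (hS : ∀ x ∈ S, 0 < x) : IsPartition (toPart S) := by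
  constructor
  · rw [List.pairwise_iff_getElem]
    intro i j hi hj hij
    rw [length_toPart] at hi hj
    rw [← List.getD_eq_getElem _ 0, ← List.getD_eq_getElem _ 0, toPart_getD hi, toPart_getD hj]
    have h1 := sort_getD_ge hS (show S.card - 1 - j < S.card by omega)
    have h2 := sorted_lt_le_of_le (Finset.sortedLT_sort S).pairwise
      (show S.card - 1 - j ≤ S.card - 1 - i by omega)
      (show S.card - 1 - i < (S.sort (· ≤ ·)).length by rw [Finset.length_sort]; omega)
    simp only [ge_iff_le]
    omega
  · intro x hx
    obtain ⟨a, ha, rfl⟩ := List.mem_iff_getElem.1 hx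
    rw [length_toPart] at ha
    rw [← List.getD_eq_getElem _ 0, toPart_getD ha]
    have h1 := sort_getD_ge hS (show S.card - 1 - a < S.card by omega)
    omega

lemma beta_toPart {S : Finset ℕ} (hS : ∀ x ∈ S, 0 < x) {a : ℕ} (ha : a < S.card) :
    beta (toPart S) a = (S.sort (· ≤ ·)).getD (S.card - 1 - a) 0 := by
  rw [beta, length_toPart, toPart_getD ha]
  have h1 := sort_getD_ge hS (show S.card - 1 - a < S.card by omega)
  omega

lemma BetaSet_toPart {S : Finset ℕ} (hS : ∀ x ∈ S, 0 < x) : BetaSet (toPart S) = S := by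
  ext x
  rw [mem_BetaSet, length_toPart]
  constructor
  · rintro ⟨a, ha, rfl⟩
    rw [beta_toPart hS ha, ← Finset.mem_sort (α := ℕ) (· ≤ ·),
      List.getD_eq_getElem _ _ (by rw [Finset.length_sort]; omega)]
    exact List.getElem_mem _
  · intro hx
    rw [← Finset.mem_sort (α := ℕ) (· ≤ ·), List.mem_iff_getElem] at hx
    obtain ⟨i, hi, rfl⟩ := hx
    rw [Finset.length_sort] at hi
    refine ⟨S.card - 1 - i, by omega, ?_⟩
    rw [beta_toPart hS (by omega), show S.card - 1 - (S.card - 1 - i) = i by omega,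
      List.getD_eq_getElem _ _ (by rw [Finset.length_sort]; omega)]

lemma sort_BetaSet {l : List ℕ} (hl : IsPartition l) :
    (BetaSet l).sort (· ≤ ·) = ((List.range l.length).map (beta l)).reverse := by
  refine List.Perm.eq_of_pairwise' (r := (· ≤ ·)) ?_ ?_ ?_
  rotate_right
  · apply List.perm_of_nodup_nodup_toFinset_eq (Finset.sort_nodup _ _)
    · rw [List.nodup_reverse]
      rw [List.nodup_iff_getElem?_ne_getElem?]
      intro i j hij hj
      simp only [List.length_map, List.length_range] at hj
      rw [List.getElem?_eq_getElem (by simpa using by omega : i < ((List.range l.length).map (beta l)).length),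
        List.getElem?_eq_getElem (by simpa using hj)]
      simp only [List.getElem_map, List.getElem_range, ne_eq, Option.some.injEq]
      have := beta_strictAnti hl.1 hij hj
      omega
    · ext y
      simp only [List.mem_toFinset, Finset.mem_sort, List.mem_reverse, List.mem_map,
        List.mem_range, mem_BetaSet]
  · exact (Finset.pairwise_sort _ _)
  · rw [List.pairwise_reverse, List.pairwise_iff_getElem]
    intro i j hi hj hij
    simp only [List.length_map, List.length_range] at hi hj
    simp only [List.getElem_map, List.getElem_range]
    exact le_of_lt (beta_strictAnti hl.1 hij hj)

lemma toPart_BetaSet {l : List ℕ} (hl : IsPartition l) : toPart (BetaSet l) = l := by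
  have hcard := card_BetaSet hl.1
  apply List.ext_getElem
  · rw [length_toPart, hcard]
  · intro a h1 h2
    rw [length_toPart, hcard] at h1
    rw [← List.getD_eq_getElem _ 0, ← List.getD_eq_getElem _ 0, toPart_getD (hcard ▸ h1),
      sort_BetaSet hl, hcard]
    have hrev : (((List.range l.length).map (beta l)).reverse).getD (l.length - 1 - a) 0
        = beta l a := by
      rw [List.getD_eq_getElem _ _ (by simp; omega), List.getElem_reverse]
      simp only [List.getElem_map, List.getElem_range, List.length_map, List.length_range]
      congr 1
      omega
    rw [hrev, beta]
    omega



section VEC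
variable {T : ℕ}



/-- a downward closed finset of naturals is an initial range -/
lemma mul_pred (j t : ℕ) (h : 1 ≤ j) : j * t = (j-1) * t + t := by
  obtain ⟨j', rfl⟩ : ∃ j', j = j'+1 := ⟨j-1, by omega⟩
  simp [Nat.add_mul]

lemma lower_eq_range {J : Finset ℕ} (h : ∀ j ∈ J, ∀ i ≤ j, i ∈ J) :
    J = Finset.range J.card := by
  ext i
  simp only [Finset.mem_range]
  constructor
  · intro hi
    have hsub : Finset.range (i+1) ⊆ J := fun x hx => by
      simp only [Finset.mem_range] at hx
      exact h i hi x (by omega)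
    have := Finset.card_le_card hsub
    simp only [Finset.card_range] at this; omega
  · intro hi
    by_contra hnot
    have hsub : J ⊆ Finset.range i := fun x hx => by
      simp only [Finset.mem_range]
      by_contra hxi
      exact hnot (h x hx i (by omega))
    have := Finset.card_le_card hsub
    simp only [Finset.card_range] at this; omega

/-- the beta-set associated to a vector of class counts -/
def VSet (T : ℕ) (n : Fin T → ℕ) : Finset ℕ :=
  Finset.univ.biUnion (fun r : Fin T => (Finset.range (n r)).image (fun j => ((r:ℕ)+1) + j * (T+1)))

lemma mem_VSet {n : Fin T → ℕ} {x : ℕ} :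
    x ∈ VSet T n ↔ ∃ r : Fin T, ∃ j, j < n r ∧ x = ((r:ℕ)+1) + j * (T+1) := by
  simp only [VSet, Finset.mem_biUnion, Finset.mem_univ, true_and, Finset.mem_image,
    Finset.mem_range]
  constructor
  · rintro ⟨r, j, hj, rfl⟩; exact ⟨r, j, hj, rfl⟩
  · rintro ⟨r, j, hj, rfl⟩; exact ⟨r, j, hj, rfl⟩

lemma VSet_pos {n : Fin T → ℕ} {x : ℕ} (hx : x ∈ VSet T n) : 0 < x := by
  obtain ⟨r, j, hj, rfl⟩ := mem_VSet.1 hx; omega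

lemma VSet_closed {n : Fin T → ℕ} {x : ℕ} (hx : x ∈ VSet T n) (hge : T+1 ≤ x) :
    x - (T+1) ∈ VSet T n := by
  obtain ⟨r, j, hj, rfl⟩ := mem_VSet.1 hx
  have hr : (r:ℕ) < T := r.isLt
  have hj1 : 1 ≤ j := by
    by_contra hj0
    have : j = 0 := by omega
    subst this; simp at hge; omega
  refine mem_VSet.2 ⟨r, j - 1, by omega, ?_⟩
  have h1 := mul_pred j (T+1) hj1
  omega

lemma mod_VSet {r : Fin T} {j : ℕ} : (((r:ℕ)+1) + j * (T+1)) % (T+1) = (r:ℕ)+1 := by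
  rw [Nat.add_mul_mod_self_right, Nat.mod_eq_of_lt (by omega)]

lemma div_VSet {r : Fin T} {j : ℕ} : (((r:ℕ)+1) + j * (T+1)) / (T+1) = j := by
  rw [Nat.add_mul_div_right _ _ (by omega : 0 < T+1), Nat.div_eq_of_lt (by omega)]
  omega

/-- class counts of a finset -/
def nOf (T : ℕ) (S : Finset ℕ) : Fin T → ℕ :=
  fun r => (S.filter (fun x => x % (T+1) = (r:ℕ)+1)).card

lemma nOf_VSet (n : Fin T → ℕ) : nOf T (VSet T n) = n := by
  funext r
  rw [nOf]
  have : (VSet T n).filter (fun x => x % (T+1) = (r:ℕ)+1)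
      = (Finset.range (n r)).image (fun j => ((r:ℕ)+1) + j * (T+1)) := by
    ext x
    simp only [Finset.mem_filter, Finset.mem_image, Finset.mem_range]
    constructor
    · rintro ⟨hx, hmod⟩
      obtain ⟨r', j, hj, rfl⟩ := mem_VSet.1 hx
      rw [mod_VSet] at hmod
      have : r' = r := Fin.ext (by omega)
      subst this
      exact ⟨j, hj, rfl⟩
    · rintro ⟨j, hj, rfl⟩
      exact ⟨mem_VSet.2 ⟨r, j, hj, rfl⟩, mod_VSet⟩
  rw [this, Finset.card_image_of_injOn, Finset.card_range]
  intro i _ j _ hij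
  have hij' : ((r:ℕ)+1) + i * (T+1) = ((r:ℕ)+1) + j * (T+1) := hij
  have : i * (T+1) = j * (T+1) := by omega
  exact Nat.eq_of_mul_eq_mul_right (by omega) this

lemma card_VSet (n : Fin T → ℕ) : (VSet T n).card = ∑ r, n r := by
  rw [VSet, Finset.card_biUnion]
  · congr 1
    funext r
    rw [Finset.card_image_of_injOn, Finset.card_range]
    intro i _ j _ hij
    have hij' : ((r:ℕ)+1) + i * (T+1) = ((r:ℕ)+1) + j * (T+1) := hij
    have : i * (T+1) = j * (T+1) := by omega
    exact Nat.eq_of_mul_eq_mul_right (by omega) this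
  · intro r _ r' _ hrr
    apply Finset.disjoint_left.2
    intro x hx hx'
    simp only [Finset.mem_image, Finset.mem_range] at hx hx'
    obtain ⟨j, _, rfl⟩ := hx
    obtain ⟨j', _, he⟩ := hx'
    have h1 : ((r':ℕ)+1) = ((r:ℕ)+1) := by
      have := @mod_VSet T r' j'
      rw [he, mod_VSet] at this
      omega
    exact hrr (Fin.ext (by omega)).symm

/-- descend in steps of T+1 inside a closed set -/
lemma descend {S : Finset ℕ} (hclosed : ∀ x ∈ S, T+1 ≤ x → x - (T+1) ∈ S) :
    ∀ (d x : ℕ), x ∈ S → d * (T+1) ≤ x → x - d * (T+1) ∈ S := by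
  intro d
  induction d with
  | zero => intro x hx _; simpa using hx
  | succ d ih =>
    intro x hx hd
    have hmul : (d+1) * (T+1) = d * (T+1) + (T+1) := by ring
    have h1 : x - d * (T+1) ∈ S := ih x hx (by omega)
    have h2 := hclosed _ h1 (by omega)
    rw [show x - d * (T+1) - (T+1) = x - (d+1) * (T+1) by omega] at h2
    exact h2

lemma no_mult {S : Finset ℕ} (hpos : ∀ x ∈ S, 0 < x)
    (hclosed : ∀ x ∈ S, T+1 ≤ x → x - (T+1) ∈ S) {x : ℕ} (hx : x ∈ S) :
    ¬ ((T+1) ∣ x) := by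
  rintro ⟨d, rfl⟩
  have hd : 1 ≤ d := by
    have := hpos _ hx
    rcases Nat.eq_zero_or_pos d with rfl | h
    · simp at this
    · exact h
  have hc : (T+1) * d = d * (T+1) := Nat.mul_comm _ _
  have hmp := mul_pred d (T+1) hd
  have := descend hclosed (d-1) _ hx (by omega)
  have heq : (T+1) * d - (d-1) * (T+1) = T+1 := by omega
  rw [heq] at this
  have h2 := hclosed _ this (le_refl _)
  simp only [Nat.sub_self] at h2
  exact absurd (hpos 0 h2) (by omega)

lemma VSet_nOf {S : Finset ℕ} (hpos : ∀ x ∈ S, 0 < x)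
    (hclosed : ∀ x ∈ S, T+1 ≤ x → x - (T+1) ∈ S) : VSet T (nOf T S) = S := by
  have hFG : ∀ r : Fin T, S.filter (fun x => x % (T+1) = (r:ℕ)+1)
      = (Finset.range (nOf T S r)).image (fun j => ((r:ℕ)+1) + j * (T+1)) := by
    intro r
    set F := S.filter (fun x => x % (T+1) = (r:ℕ)+1) with hF
    have hinj : Set.InjOn (fun x => x / (T+1)) F := by
      intro x hx y hy hxy
      simp only [hF, Finset.coe_filter, Set.mem_setOf_eq] at hx hy
      simp only at hxy
      have h1 := Nat.mod_add_div x (T+1)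
      have h2 := Nat.mod_add_div y (T+1)
      have hc1 : (T+1) * (x / (T+1)) = (x / (T+1)) * (T+1) := Nat.mul_comm _ _
      have hc2 : (T+1) * (y / (T+1)) = (y / (T+1)) * (T+1) := Nat.mul_comm _ _
      have hxy' : x / (T+1) = y / (T+1) := hxy
      have h3 : (x / (T+1)) * (T+1) = (y / (T+1)) * (T+1) := by rw [hxy']
      omega
    set J := F.image (fun x => x / (T+1)) with hJ
    have hJcard : J.card = nOf T S r := by
      rw [hJ, Finset.card_image_of_injOn hinj]; rfl
    have hJlow : ∀ j ∈ J, ∀ i ≤ j, i ∈ J := by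
      intro j hj i hi
      simp only [hJ, Finset.mem_image] at hj
      obtain ⟨x, hxF, rfl⟩ := hj
      simp only [hF, Finset.mem_filter] at hxF
      obtain ⟨hxS, hxmod⟩ := hxF
      have hx_eq : x = ((r:ℕ)+1) + (x / (T+1)) * (T+1) := by
        have := Nat.mod_add_div x (T+1)
        have hc1 : (T+1) * (x / (T+1)) = (x / (T+1)) * (T+1) := Nat.mul_comm _ _
        omega
      have hble : (x / (T+1) - i) * (T+1) ≤ (x / (T+1)) * (T+1) :=
        Nat.mul_le_mul_right _ (by omega)
      have hdesc := descend hclosed (x / (T+1) - i) x hxS (by omega)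
      have heq2 : x - (x / (T+1) - i) * (T+1) = ((r:ℕ)+1) + i * (T+1) := by
        have hmul : (x / (T+1) - i) * (T+1) + i * (T+1) = (x / (T+1)) * (T+1) := by
          rw [← Nat.add_mul]
          congr 1
          omega
        omega
      rw [heq2] at hdesc
      simp only [hJ, Finset.mem_image]
      refine ⟨((r:ℕ)+1) + i * (T+1), ?_, div_VSet⟩
      simp only [hF, Finset.mem_filter]
      exact ⟨hdesc, mod_VSet⟩
    have hJr : J = Finset.range (nOf T S r) := by rw [← hJcard]; exact lower_eq_range hJlow
    ext x
    simp only [Finset.mem_image, Finset.mem_range, hF, Finset.mem_filter]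
    constructor
    · rintro ⟨hxS, hxmod⟩
      refine ⟨x / (T+1), ?_, ?_⟩
      · rw [← Finset.mem_range, ← hJr, hJ, Finset.mem_image]
        exact ⟨x, by simp only [hF, Finset.mem_filter]; exact ⟨hxS, hxmod⟩, rfl⟩
      · have := Nat.mod_add_div x (T+1)
        have hc1 : (T+1) * (x / (T+1)) = (x / (T+1)) * (T+1) := Nat.mul_comm _ _
        omega
    · rintro ⟨j, hj, rfl⟩
      rw [← Finset.mem_range, ← hJr, hJ, Finset.mem_image] at hj
      obtain ⟨y, hyF, hyj⟩ := hj
      simp only [hF, Finset.mem_filter] at hyF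
      have hyj' : y / (T+1) = j := hyj
      have hy_eq : y = ((r:ℕ)+1) + j * (T+1) := by
        have := Nat.mod_add_div y (T+1)
        have hc1 : (T+1) * (y / (T+1)) = (y / (T+1)) * (T+1) := Nat.mul_comm _ _
        have h3 : (y / (T+1)) * (T+1) = j * (T+1) := by rw [hyj']
        omega
      exact ⟨hy_eq ▸ hyF.1, mod_VSet⟩
  ext x
  rw [mem_VSet]
  constructor
  · rintro ⟨r, j, hj, rfl⟩
    have : ((r:ℕ)+1) + j * (T+1) ∈ (Finset.range (nOf T S r)).image
        (fun j => ((r:ℕ)+1) + j * (T+1)) := by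
      simp only [Finset.mem_image, Finset.mem_range]
      exact ⟨j, hj, rfl⟩
    rw [← hFG] at this
    exact (Finset.mem_filter.1 this).1
  · intro hx
    have hx0 := hpos _ hx
    have hmod : x % (T+1) ≠ 0 := by
      intro h0
      exact no_mult hpos hclosed hx (Nat.dvd_of_mod_eq_zero h0)
    have hmodlt : x % (T+1) < T+1 := Nat.mod_lt _ (by omega)
    set r : Fin T := ⟨x % (T+1) - 1, by omega⟩ with hr
    have hxF : x ∈ S.filter (fun x => x % (T+1) = (r:ℕ)+1) := by
      simp only [Finset.mem_filter, hr]
      exact ⟨hx, by omega⟩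
    rw [hFG r] at hxF
    simp only [Finset.mem_image, Finset.mem_range] at hxF
    obtain ⟨j, hj, hje⟩ := hxF
    exact ⟨r, j, hj, hje.symm⟩


end VEC


def gv (T : ℕ) (n : Fin T → ℕ) (r : Fin T) : ℕ :=
  if n r = 0 then 0 else ((r:ℕ)+1) + n r * (T+1)

def CondEq (T k : ℕ) (n : Fin T → ℕ) : Prop :=
  Finset.univ.sup (gv T n) + 1 = k + (∑ r, n r) + (T+1)

def CondLe (T k : ℕ) (n : Fin T → ℕ) : Prop :=
  Finset.univ.sup (gv T n) + 1 ≤ k + (∑ r, n r) + (T+1)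

lemma coe_succAbove {M : ℕ} (c : Fin (M+1)) (s : Fin M) :
    ((c.succAbove s : Fin (M+1)) : ℕ) = if (s:ℕ) < (c:ℕ) then (s:ℕ) else (s:ℕ)+1 := by
  rw [Fin.succAbove]
  split_ifs with h1 h2 h2
  · rfl
  · exact absurd (by rwa [Fin.lt_def] at h1) h2
  · exact absurd (Fin.lt_def.2 (by simpa using h2)) h1
  · rfl

/-- index of the class attaining the sup -/
def cIdx (M : ℕ) (n : Fin (M+1) → ℕ) : Fin (M+1) :=
  ⟨(Finset.univ.sup (gv (M+1) n)) % (M+2) - 1, by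
    have := Nat.mod_lt (Finset.univ.sup (gv (M+1) n)) (show 0 < M+2 by omega)
    omega⟩

/-- the case analysis: from the A-side sup inequality to the B-side one -/
lemma AtoB {M c s j q : ℕ} {r : ℕ} (hsM : s + 1 ≤ M) (hcM : c ≤ M)
    (hr : (s < c ∧ r = s) ∨ (c ≤ s ∧ r = s + 1))
    (hA : (r+1) + j * (M+2) ≤ c + 1 + q * (M+2)) :
    (s+1) + j * (M+1) ≤ c + q * (M+1) := by
  rcases le_or_gt j q with hjq | hjq
  · have h1 : j*(M+1) ≤ q*(M+1) := Nat.mul_le_mul_right _ hjq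
    rcases hr with ⟨h2, rfl⟩ | ⟨h2, rfl⟩
    · omega
    · rcases Nat.eq_or_lt_of_le hjq with rfl | hjq'
      · omega
      · have h3 : (j+1)*(M+1) ≤ q*(M+1) := Nat.mul_le_mul_right _ hjq'
        have h4 : (j+1)*(M+1) = j*(M+1) + (M+1) := by ring
        omega
  · have h1 : (q+1)*(M+2) ≤ j*(M+2) := Nat.mul_le_mul_right _ hjq
    have h4 : (q+1)*(M+2) = q*(M+2) + (M+2) := by ring
    rcases hr with ⟨h2, rfl⟩ | ⟨h2, rfl⟩ <;> omega

lemma BtoA {M c s j q : ℕ} {r : ℕ} (hsM : s + 1 ≤ M) (hcM : c ≤ M)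
    (hr : (s < c ∧ r = s) ∨ (c ≤ s ∧ r = s + 1))
    (hB : (s+1) + j * (M+1) ≤ c + q * (M+1)) :
    (r+1) + j * (M+2) ≤ c + 1 + q * (M+2) := by
  have hj2 : j*(M+2) = j*(M+1) + j := by ring
  have hq2 : q*(M+2) = q*(M+1) + q := by ring
  rcases le_or_gt j q with hjq | hjq
  · have h1 : j*(M+1) ≤ q*(M+1) := Nat.mul_le_mul_right _ hjq
    rcases hr with ⟨h2, rfl⟩ | ⟨h2, rfl⟩
    · omega
    · rcases Nat.eq_or_lt_of_le hjq with rfl | hjq'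
      · omega
      · have h3 : (j+1)*(M+2) ≤ q*(M+2) := Nat.mul_le_mul_right _ hjq'
        have h4 : (j+1)*(M+2) = j*(M+2) + (M+2) := by ring
        omega
  · have h1 : (q+1)*(M+1) ≤ j*(M+1) := Nat.mul_le_mul_right _ hjq
    have h4 : (q+1)*(M+1) = q*(M+1) + (M+1) := by ring
    rcases hr with ⟨h2, rfl⟩ | ⟨h2, rfl⟩ <;> omega

/-- facts extracted from `CondEq` -/
lemma factsA {M k : ℕ} (hk : 1 ≤ k) {n : Fin (M+1) → ℕ} (hA : CondEq (M+1) k n) :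
    ∃ q, n (cIdx M n) = q + 1 ∧
      ((cIdx M n : ℕ) + q*(M+1)) + 1 = k + (∑ s, n ((cIdx M n).succAbove s)) ∧
      (∀ r, gv (M+1) n r ≤ gv (M+1) n (cIdx M n)) := by
  obtain ⟨c₀, -, hc₀⟩ := Finset.exists_mem_eq_sup Finset.univ Finset.univ_nonempty (gv (M+1) n)
  have hsup_pos : 0 < Finset.univ.sup (gv (M+1) n) := by
    have := hA
    rw [CondEq] at this
    omega
  have hnc₀ : n c₀ ≠ 0 := by
    intro h0
    rw [hc₀, gv, if_pos h0] at hsup_pos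
    omega
  have hgc₀ : gv (M+1) n c₀ = ((c₀:ℕ)+1) + n c₀ * (M+2) := by rw [gv, if_neg hnc₀]
  have hmod : (Finset.univ.sup (gv (M+1) n)) % (M+2) = (c₀:ℕ)+1 := by
    rw [hc₀, hgc₀, Nat.add_mul_mod_self_right, Nat.mod_eq_of_lt (by omega)]
  have hcc : cIdx M n = c₀ := by
    apply Fin.ext
    rw [cIdx]
    simp only [hmod]
    omega
  rw [hcc]
  refine ⟨n c₀ - 1, by omega, ?_, fun r => hc₀ ▸ Finset.le_sup (Finset.mem_univ r)⟩
  have hsum := Fin.sum_univ_succAbove n c₀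
  have hAq := hA
  rw [CondEq, hc₀, hgc₀] at hAq
  have hex : n c₀ * (M+2) = (n c₀ - 1) * (M+2) + (M+2) := by
    obtain ⟨v, hv⟩ : ∃ v, n c₀ = v + 1 := ⟨n c₀ - 1, by omega⟩
    rw [hv, show v + 1 - 1 = v by omega]
    ring
  have hex2 : (n c₀ - 1) * (M+2) = (n c₀ - 1) * (M+1) + (n c₀ - 1) := by ring
  omega






def fwd (M : ℕ) (n : Fin (M+1) → ℕ) : Fin M → ℕ := n ∘ (cIdx M n).succAbove

def cB (M k S : ℕ) : Fin (M+1) := ⟨(k + S - 1) % (M+1), Nat.mod_lt _ (by omega)⟩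

def qB (M k S : ℕ) : ℕ := (k + S - 1) / (M+1)

def bwd (M k : ℕ) (m : Fin M → ℕ) : Fin (M+1) → ℕ :=
  (cB M k (∑ s, m s)).insertNth (qB M k (∑ s, m s) + 1) m

lemma cB_qB {M k S : ℕ} (hk : 1 ≤ k) :
    ((cB M k S : ℕ) + qB M k S * (M+1)) + 1 = k + S := by
  have h1 := Nat.mod_add_div (k + S - 1) (M+1)
  have h2 : (M+1) * ((k+S-1)/(M+1)) = ((k+S-1)/(M+1)) * (M+1) := Nat.mul_comm _ _
  simp only [cB, qB]
  omega

lemma condLe_fwd {M k : ℕ} (hk : 1 ≤ k) {n : Fin (M+1) → ℕ} (hA : CondEq (M+1) k n) :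
    CondLe M k (fwd M n) := by
  obtain ⟨q, hq, hI, hle⟩ := factsA hk hA
  set c := cIdx M n with hc
  rw [CondLe]
  have hsup : Finset.univ.sup (gv M (fwd M n)) ≤ k + (∑ s, fwd M n s) + M := by
    apply Finset.sup_le
    intro s _
    by_cases h0 : fwd M n s = 0
    · rw [gv, if_pos h0]; omega
    · rw [gv, if_neg h0]
      have hnsa : n (c.succAbove s) = fwd M n s := rfl
      obtain ⟨j, hj⟩ : ∃ j, fwd M n s = j + 1 := ⟨fwd M n s - 1, by omega⟩
      have hlsa := hle (c.succAbove s)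
      rw [gv, if_neg (by rw [hnsa, hj]; omega), gv, if_neg (by rw [hq]; omega)] at hlsa
      rw [hnsa, hj, hq] at hlsa
      have hco := coe_succAbove c s
      have hAin : ((if (s:ℕ) < (c:ℕ) then (s:ℕ) else (s:ℕ)+1) + 1) + j * (M+2)
          ≤ (c:ℕ) + 1 + q * (M+2) := by
        have e1 : (j+1)*(M+1+1) = j*(M+2) + (M+2) := by ring
        have e2 : (q+1)*(M+1+1) = q*(M+2) + (M+2) := by ring
        rw [hco] at hlsa
        omega
      have hconc : ((s:ℕ)+1) + j * (M+1) ≤ (c:ℕ) + q * (M+1) := by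
        apply AtoB (s.isLt) (by omega : (c:ℕ) ≤ M) _ hAin
        split_ifs at hAin ⊢ with hsc
        · exact Or.inl ⟨hsc, rfl⟩
        · exact Or.inr ⟨by omega, rfl⟩
      have e3 : (j+1)*(M+1) = j*(M+1) + (M+1) := by ring
      have hSS : (∑ s : Fin M, fwd M n s) = ∑ s : Fin M, n (c.succAbove s) := rfl
      rw [hj]
      omega
  have : (∑ s, fwd M n s) = ∑ s, n (c.succAbove s) := rfl
  omega

lemma bwd_facts {M k : ℕ} (hk : 1 ≤ k) {m : Fin M → ℕ} (hB : CondLe M k m) :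
    (∀ r, gv (M+1) (bwd M k m) r ≤ gv (M+1) (bwd M k m) (cB M k (∑ s, m s))) ∧
    gv (M+1) (bwd M k m) (cB M k (∑ s, m s))
      = ((cB M k (∑ s, m s) : ℕ) + 1) + (qB M k (∑ s, m s) + 1) * (M+2) := by
  set S := ∑ s, m s with hS
  set c := cB M k S with hc
  set q := qB M k S with hq
  have hI := cB_qB (M := M) (S := S) hk
  rw [← hc, ← hq] at hI
  have hnc : bwd M k m c = q + 1 := by
    rw [bwd, ← hS, ← hc, ← hq, Fin.insertNth_apply_same]
  have hgc : gv (M+1) (bwd M k m) c = ((c:ℕ)+1) + (q+1) * (M+2) := by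
    rw [gv, if_neg (by rw [hnc]; omega), hnc]
  refine ⟨?_, hgc⟩
  intro r
  rcases eq_or_ne r c with rfl | hne
  · exact le_refl _
  · obtain ⟨s, rfl⟩ := Fin.exists_succAbove_eq hne
    have hval : bwd M k m (c.succAbove s) = m s := by
      rw [bwd, ← hS, ← hc, ← hq, Fin.insertNth_apply_succAbove]
    by_cases h0 : m s = 0
    · rw [gv, if_pos (by rw [hval]; exact h0)]
      exact Nat.zero_le _
    · rw [gv, if_neg (by rw [hval]; exact h0), hval, hgc]
      obtain ⟨j, hj⟩ : ∃ j, m s = j + 1 := ⟨m s - 1, by omega⟩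
      have hBs : gv M m s ≤ k + S + M := by
        have h1 : gv M m s ≤ Finset.univ.sup (gv M m) := Finset.le_sup (Finset.mem_univ s)
        rw [CondLe, ← hS] at hB
        omega
      rw [gv, if_neg h0, hj] at hBs
      have hBin : ((s:ℕ)+1) + j * (M+1) ≤ (c:ℕ) + q * (M+1) := by
        have e3 : (j+1)*(M+1) = j*(M+1) + (M+1) := by ring
        omega
      have hco := coe_succAbove c s
      have := BtoA (s.isLt) (by omega : (c:ℕ) ≤ M)
        (r := (if (s:ℕ) < (c:ℕ) then (s:ℕ) else (s:ℕ)+1))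
        (by split_ifs with hsc
            · exact Or.inl ⟨hsc, rfl⟩
            · exact Or.inr ⟨by omega, rfl⟩) hBin
      have e1 : (j+1)*(M+1+1) = j*(M+2) + (M+2) := by ring
      have e2 : (q+1)*(M+1+1) = q*(M+2) + (M+2) := by ring
      have e4 : (q+1)*(M+2) = q*(M+2) + (M+2) := by ring
      rw [hco, hj]
      omega

lemma condEq_bwd {M k : ℕ} (hk : 1 ≤ k) {m : Fin M → ℕ} (hB : CondLe M k m) :
    CondEq (M+1) k (bwd M k m) := by
  obtain ⟨hle, hgc⟩ := bwd_facts hk hB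
  set S := ∑ s, m s with hS
  set c := cB M k S with hc
  set q := qB M k S with hq
  have hI := cB_qB (M := M) (S := S) hk
  rw [← hc, ← hq] at hI
  have hsup : Finset.univ.sup (gv (M+1) (bwd M k m)) = gv (M+1) (bwd M k m) c :=
    le_antisymm (Finset.sup_le fun r _ => hle r) (Finset.le_sup (Finset.mem_univ c))
  have hsum : (∑ r, bwd M k m r) = (q + 1) + S := by
    rw [Fin.sum_univ_succAbove _ c]
    congr 1
    · rw [bwd, ← hS, ← hc, ← hq, Fin.insertNth_apply_same]
    · rw [hS]
      apply Finset.sum_congr rfl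
      intro s _
      rw [bwd, ← hS, ← hc, ← hq, Fin.insertNth_apply_succAbove]
  rw [CondEq, hsup, hgc, hsum]
  have e2 : (q+1)*(M+2) = q*(M+1) + q + (M+2) := by ring
  omega

lemma fwd_bwd {M k : ℕ} (hk : 1 ≤ k) {m : Fin M → ℕ} (hB : CondLe M k m) :
    fwd M (bwd M k m) = m := by
  obtain ⟨hle, hgc⟩ := bwd_facts hk hB
  set S := ∑ s, m s with hS
  set c := cB M k S with hc
  set q := qB M k S with hq
  have hsup : Finset.univ.sup (gv (M+1) (bwd M k m)) = gv (M+1) (bwd M k m) c :=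
    le_antisymm (Finset.sup_le fun r _ => hle r) (Finset.le_sup (Finset.mem_univ c))
  have hcIdx : cIdx M (bwd M k m) = c := by
    apply Fin.ext
    rw [cIdx]
    simp only [hsup, hgc]
    rw [Nat.add_mul_mod_self_right, Nat.mod_eq_of_lt (by omega)]
    omega
  funext s
  rw [fwd]
  simp only [Function.comp_apply, hcIdx]
  rw [bwd, ← hS, ← hc, ← hq, Fin.insertNth_apply_succAbove]

lemma bwd_fwd {M k : ℕ} (hk : 1 ≤ k) {n : Fin (M+1) → ℕ} (hA : CondEq (M+1) k n) :
    bwd M k (fwd M n) = n := by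
  obtain ⟨q, hq, hI, hle⟩ := factsA hk hA
  set c := cIdx M n with hc
  have hS' : (∑ s, fwd M n s) = ∑ s, n (c.succAbove s) := rfl
  set S' := ∑ s, n (c.succAbove s) with hSdef
  have hkS : k + S' - 1 = (c:ℕ) + q * (M+1) := by omega
  have hcB : cB M k S' = c := by
    apply Fin.ext
    rw [cB]
    simp only [hkS]
    rw [Nat.add_mul_mod_self_right, Nat.mod_eq_of_lt (c.isLt)]
  have hqB : qB M k S' = q := by
    rw [qB, hkS, Nat.add_mul_div_right _ _ (by omega : 0 < M+1),
      Nat.div_eq_of_lt (c.isLt)]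
    omega
  rw [bwd, hS', hcB, hqB]
  funext r
  rcases eq_or_ne r c with rfl | hne
  · rw [Fin.insertNth_apply_same, hq]
  · obtain ⟨s, rfl⟩ := Fin.exists_succAbove_eq hne
    rw [Fin.insertNth_apply_succAbove]
    rfl

/-- the vector-level bijection -/
def equivVec (M k : ℕ) (hk : 1 ≤ k) :
    {n : Fin (M+1) → ℕ // CondEq (M+1) k n} ≃ {m : Fin M → ℕ // CondLe M k m} where
  toFun := fun ⟨n, hn⟩ => ⟨fwd M n, condLe_fwd hk hn⟩
  invFun := fun ⟨m, hm⟩ => ⟨bwd M k m, condEq_bwd hk hm⟩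
  left_inv := fun ⟨n, hn⟩ => Subtype.ext (bwd_fwd hk hn)
  right_inv := fun ⟨m, hm⟩ => Subtype.ext (fwd_bwd hk hm)




lemma sup_VSet (T : ℕ) (n : Fin T → ℕ) :
    (VSet T n).sup (fun x => x + (T+1)) = Finset.univ.sup (gv T n) := by
  apply le_antisymm
  · apply Finset.sup_le
    intro x hx
    obtain ⟨r, j, hj, rfl⟩ := mem_VSet.1 hx
    refine le_trans ?_ (Finset.le_sup (Finset.mem_univ r))
    rw [gv, if_neg (by omega)]
    have h1 : (j+1) * (T+1) ≤ n r * (T+1) := Nat.mul_le_mul_right _ (by omega)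
    have h2 : (j+1) * (T+1) = j * (T+1) + (T+1) := by ring
    omega
  · apply Finset.sup_le
    intro r _
    by_cases h0 : n r = 0
    · rw [gv, if_pos h0]
      exact Nat.zero_le _
    · rw [gv, if_neg h0]
      have hmem : ((r:ℕ)+1) + (n r - 1) * (T+1) ∈ VSet T n :=
        mem_VSet.2 ⟨r, n r - 1, by omega, rfl⟩
      have h3 : ((r:ℕ)+1) + (n r - 1) * (T+1) + (T+1)
          ≤ (VSet T n).sup (fun x => x + (T+1)) :=
        Finset.le_sup (f := fun x => x + (T+1)) hmem
      have h2 := mul_pred (n r) (T+1) (by omega)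
      omega

lemma headD_getD (l : List ℕ) : l.headD 0 = l.getD 0 0 := by cases l <;> rfl

lemma beta_le_zero {l : List ℕ} (hl : l.Pairwise (· ≥ ·)) {a : ℕ} (ha : a < l.length) :
    beta l a ≤ beta l 0 := by
  rcases Nat.eq_zero_or_pos a with rfl | h
  · exact le_refl _
  · exact le_of_lt (beta_strictAnti hl h ha)

lemma sup_BetaSet {l : List ℕ} (hl : IsPartition l) (h0 : 0 < l.length) (t : ℕ) :
    (BetaSet l).sup (fun x => x + t) = beta l 0 + t := by
  apply le_antisymm
  · apply Finset.sup_le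
    intro x hx
    obtain ⟨a, ha, rfl⟩ := mem_BetaSet.1 hx
    have := beta_le_zero hl.1 ha
    omega
  · exact Finset.le_sup (f := fun x => x + t) (mem_BetaSet.2 ⟨0, h0, rfl⟩)

lemma head_eq_iff {l : List ℕ} (hl : IsPartition l) {t k : ℕ} (ht : 1 ≤ t) (hk : 1 ≤ k) :
    l.headD 0 = k ↔ (BetaSet l).sup (fun x => x + t) + 1 = k + (BetaSet l).card + t := by
  rcases Nat.eq_zero_or_pos l.length with h0 | h0
  · obtain rfl : l = [] := List.length_eq_zero_iff.1 h0
    simp only [BetaSet, List.length_nil, Finset.range_zero, Finset.image_empty,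
      Finset.sup_empty, Finset.card_empty, List.headD_nil]
    rw [show (⊥:ℕ) = 0 from rfl]
    constructor <;> (intro h; omega)
  · rw [sup_BetaSet hl h0, card_BetaSet hl.1, headD_getD]
    have hb : beta l 0 = l.getD 0 0 + (l.length - 1 - 0) := rfl
    constructor <;> (intro h; omega)

lemma head_le_iff {l : List ℕ} (hl : IsPartition l) {t k : ℕ} (ht : 1 ≤ t) :
    l.headD 0 ≤ k ↔ (BetaSet l).sup (fun x => x + t) + 1 ≤ k + (BetaSet l).card + t := by
  rcases Nat.eq_zero_or_pos l.length with h0 | h0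
  · obtain rfl : l = [] := List.length_eq_zero_iff.1 h0
    simp only [BetaSet, List.length_nil, Finset.range_zero, Finset.image_empty,
      Finset.sup_empty, Finset.card_empty, List.headD_nil]
    rw [show (⊥:ℕ) = 0 from rfl]
    constructor <;> (intro h; omega)
  · rw [sup_BetaSet hl h0, card_BetaSet hl.1, headD_getD]
    have hb : beta l 0 = l.getD 0 0 + (l.length - 1 - 0) := rfl
    constructor <;> (intro h; omega)

lemma BetaSet_pos {l : List ℕ} (hp : IsPartition l) : ∀ x ∈ BetaSet l, 0 < x := by
  intro x hx
  obtain ⟨a, ha, rfl⟩ := mem_BetaSet.1 hx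
  exact beta_pos hp ha

/-- partitions that are (T+1)-cores with head k correspond to count vectors -/
def equivEq (T k : ℕ) (hk : 1 ≤ k) :
    {l : List ℕ // IsPartition l ∧ IsCore (T+1) l ∧ l.headD 0 = k} ≃
    {n : Fin T → ℕ // CondEq T k n} where
  toFun := fun ⟨l, hp, hc, hh⟩ => ⟨nOf T (BetaSet l), by
    have hclosed := (isCore_iff hp (by omega)).1 hc
    have hV : VSet T (nOf T (BetaSet l)) = BetaSet l := VSet_nOf (BetaSet_pos hp) hclosed
    have hcardEq : (∑ r, nOf T (BetaSet l) r) = (BetaSet l).card := by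
      rw [← card_VSet, hV]
    rw [CondEq, hcardEq, ← sup_VSet, hV]
    exact (head_eq_iff hp (by omega) hk).1 hh⟩
  invFun := fun ⟨n, hn⟩ => ⟨toPart (VSet T n), by
    have hpos : ∀ x ∈ VSet T n, 0 < x := fun x hx => VSet_pos hx
    have hpart := isPartition_toPart hpos
    have hBS : BetaSet (toPart (VSet T n)) = VSet T n := BetaSet_toPart hpos
    refine ⟨hpart, ?_, ?_⟩
    · exact (isCore_iff hpart (by omega)).2
        (by rw [hBS]; exact fun b hb hge => VSet_closed hb hge)
    · rw [head_eq_iff (t := T+1) hpart (by omega) hk, hBS, sup_VSet, card_VSet]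
      exact hn⟩
  left_inv := fun ⟨l, hp, hc, hh⟩ => Subtype.ext (by
    have hclosed := (isCore_iff hp (by omega)).1 hc
    simp only
    rw [VSet_nOf (BetaSet_pos hp) hclosed, toPart_BetaSet hp])
  right_inv := fun ⟨n, hn⟩ => Subtype.ext (by
    have hpos : ∀ x ∈ VSet T n, 0 < x := fun x hx => VSet_pos hx
    simp only
    rw [BetaSet_toPart hpos, nOf_VSet])

/-- partitions that are (T+1)-cores with head at most k correspond to count vectors -/
def equivLe (T k : ℕ) :
    {l : List ℕ // IsPartition l ∧ IsCore (T+1) l ∧ l.headD 0 ≤ k} ≃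
    {n : Fin T → ℕ // CondLe T k n} where
  toFun := fun ⟨l, hp, hc, hh⟩ => ⟨nOf T (BetaSet l), by
    have hclosed := (isCore_iff hp (by omega)).1 hc
    have hV : VSet T (nOf T (BetaSet l)) = BetaSet l := VSet_nOf (BetaSet_pos hp) hclosed
    have hcardEq : (∑ r, nOf T (BetaSet l) r) = (BetaSet l).card := by
      rw [← card_VSet, hV]
    rw [CondLe, hcardEq, ← sup_VSet, hV]
    exact (head_le_iff hp (by omega)).1 hh⟩
  invFun := fun ⟨n, hn⟩ => ⟨toPart (VSet T n), by
    have hpos : ∀ x ∈ VSet T n, 0 < x := fun x hx => VSet_pos hx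
    have hpart := isPartition_toPart hpos
    have hBS : BetaSet (toPart (VSet T n)) = VSet T n := BetaSet_toPart hpos
    refine ⟨hpart, ?_, ?_⟩
    · exact (isCore_iff hpart (by omega)).2
        (by rw [hBS]; exact fun b hb hge => VSet_closed hb hge)
    · rw [head_le_iff (t := T+1) hpart (by omega), hBS, sup_VSet, card_VSet]
      exact hn⟩
  left_inv := fun ⟨l, hp, hc, hh⟩ => Subtype.ext (by
    have hclosed := (isCore_iff hp (by omega)).1 hc
    simp only
    rw [VSet_nOf (BetaSet_pos hp) hclosed, toPart_BetaSet hp])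
  right_inv := fun ⟨n, hn⟩ => Subtype.ext (by
    have hpos : ∀ x ∈ VSet T n, 0 < x := fun x hx => VSet_pos hx
    simp only
    rw [BetaSet_toPart hpos, nOf_VSet])

end StmtAux

open StmtAux in
/-- For ℓ ≥ 2 and k ≥ 1 there is a bijection between ℓ-cores with largest part
equal to k and (ℓ-1)-cores with largest part at most k. -/
theorem stmt2 (ℓ k : ℕ) (hℓ : 2 ≤ ℓ) (hk : 0 < k) :
    Nonempty ({l : List ℕ // IsPartition l ∧ IsCore ℓ l ∧ l.headD 0 = k} ≃
              {l : List ℕ // IsPartition l ∧ IsCore (ℓ - 1) l ∧ l.headD 0 ≤ k}) := by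
  obtain ⟨M, rfl⟩ : ∃ M, ℓ = M + 2 := ⟨ℓ - 2, by omega⟩
  exact ⟨(equivEq (M+1) k hk).trans ((equivVec M k hk).trans (equivLe M k).symm)⟩
end

section
/- The number of ℓ-cores with largest part equal to k is the binomial coefficient C(k+ℓ−2, k). -/
open Finset

lemma listfilter_card (r : ℕ) (p : ℕ → Prop) [DecidablePred p] :
    ((List.range r).filter (fun i => decide (p i))).length = ((Finset.range r).filter p).card := by
  simp [Finset.filter, Finset.card, Finset.range, Multiset.filter_coe, Multiset.range]

/-- the count of boxes below in column c -/
def armN (l : List ℕ) (a c : ℕ) : ℕ := ((Finset.Ioo a l.length).filter (fun i => c ≤ l.getD i 0)).card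

lemma hook_eq (l : List ℕ) (a c : ℕ) :
    hook l a c = (l.getD a 0 - c) + armN l a c + 1 := by
  unfold hook armN
  rw [listfilter_card l.length (fun i => a < i ∧ c ≤ l.getD i 0)]
  have : (Finset.range l.length).filter (fun i => a < i ∧ c ≤ l.getD i 0)
      = (Finset.Ioo a l.length).filter (fun i => c ≤ l.getD i 0) := by
    ext i
    simp only [Finset.mem_filter, Finset.mem_range, Finset.mem_Ioo]
    tauto
  rw [this]

def beta (l : List ℕ) (a : ℕ) : ℕ := l.getD a 0 + (l.length - 1 - a)

lemma betaList_length (l : List ℕ) : (betaList l).length = l.length := by simp [betaList]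

section
variable {l : List ℕ} {a : ℕ} (hl : IsPartition l)
include hl

lemma getD_pos (h : a < l.length) : 0 < l.getD a 0 := by
  rw [List.getD_eq_getElem l 0 h]
  exact hl.2 _ (List.getElem_mem h)

lemma getD_mono {a b : ℕ} (hab : a ≤ b) (hb : b < l.length) : l.getD b 0 ≤ l.getD a 0 := by
  rcases eq_or_lt_of_le hab with rfl | hab
  · rfl
  · rw [List.getD_eq_getElem l 0 hb, List.getD_eq_getElem l 0 (lt_trans hab hb)]
    exact hl.1.rel_get_of_lt (a := ⟨a, lt_trans hab hb⟩) (b := ⟨b, hb⟩) hab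

lemma beta_lt {a b : ℕ} (hab : a < b) (hb : b < l.length) : beta l b < beta l a := by
  have h1 := getD_mono hl (le_of_lt hab) hb
  unfold beta; omega

lemma beta_le {a b : ℕ} (hab : a ≤ b) (hb : b < l.length) : beta l b ≤ beta l a := by
  have h1 := getD_mono hl hab hb
  unfold beta; omega

lemma beta_pos (h : a < l.length) : 0 < beta l a := by
  have := getD_pos hl h; unfold beta; omega

lemma hook_one (h : a < l.length) : hook l a 1 = beta l a := by
  have hpos := getD_pos hl h
  have hN : armN l a 1 = l.length - 1 - a := by
    unfold armN
    have he : (Finset.Ioo a l.length).filter (fun i => 1 ≤ l.getD i 0) = Finset.Ioo a l.length :=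
      Finset.filter_true_of_mem (fun i hi => getD_pos hl (Finset.mem_Ioo.1 hi).2)
    rw [he, Nat.card_Ioo]
    omega
  rw [hook_eq, hN]; unfold beta; omega

lemma betaList_getElem (h : a < l.length) :
    (betaList l)[a]'(by simpa [betaList_length]) = beta l a := by
  simp [betaList]
  exact hook_one hl h

lemma mem_betaList {x : ℕ} : x ∈ betaList l ↔ ∃ a, a < l.length ∧ beta l a = x := by
  simp only [betaList, List.mem_map, List.mem_range]
  constructor
  · rintro ⟨a, ha, rfl⟩; exact ⟨a, ha, (hook_one hl ha).symm⟩
  · rintro ⟨a, ha, rfl⟩; exact ⟨a, ha, hook_one hl ha⟩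

lemma betaList_sorted : (betaList l).Pairwise (· > ·) := by
  rw [List.pairwise_iff_get]
  intro i j hij
  have hi : (i : ℕ) < l.length := by have := i.2; simpa [betaList_length] using this
  have hj : (j : ℕ) < l.length := by have := j.2; simpa [betaList_length] using this
  simp only [List.get_eq_getElem]
  rw [betaList_getElem hl hi, betaList_getElem hl hj]
  exact beta_lt hl hij hj

end
section
variable {l : List ℕ} {a c i : ℕ} (hl : IsPartition l)
include hl

lemma armN_ge (ha : a < i) (hi : i < l.length) (hc : c ≤ l.getD i 0) :
    i - a ≤ armN l a c := by
  unfold armN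
  have hsub : Finset.Ioc a i ⊆ (Finset.Ioo a l.length).filter (fun j => c ≤ l.getD j 0) := by
    intro j hj
    rw [Finset.mem_Ioc] at hj
    rw [Finset.mem_filter, Finset.mem_Ioo]
    refine ⟨⟨hj.1, lt_of_le_of_lt hj.2 hi⟩, le_trans hc (getD_mono hl hj.2 hi)⟩
  calc i - a = (Finset.Ioc a i).card := (Nat.card_Ioc a i).symm
  _ ≤ _ := Finset.card_le_card hsub

lemma armN_le_of_lt (ha : a < i) (hi : i < l.length) (hc : l.getD i 0 < c) :
    armN l a c ≤ i - a - 1 := by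
  unfold armN
  have hsub : (Finset.Ioo a l.length).filter (fun j => c ≤ l.getD j 0) ⊆ Finset.Ioo a i := by
    intro j hj
    rw [Finset.mem_filter, Finset.mem_Ioo] at hj
    rw [Finset.mem_Ioo]
    refine ⟨hj.1.1, ?_⟩
    by_contra hcon
    push_neg at hcon
    exact absurd (le_trans hj.2 (getD_mono hl hcon hj.1.2)) (not_le.2 hc)
  calc _ ≤ (Finset.Ioo a i).card := Finset.card_le_card hsub
  _ = i - a - 1 := by rw [Nat.card_Ioo]

lemma armN_le (ha : a < l.length) : armN l a c ≤ l.length - a - 1 := by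
  unfold armN
  calc _ ≤ (Finset.Ioo a l.length).card := Finset.card_le_card (Finset.filter_subset _ _)
  _ = _ := by rw [Nat.card_Ioo]

/-- hooks of row a avoid the beta differences -/
lemma hook_ne_beta_sub (ha : a < i) (hi : i < l.length) (hc1 : 1 ≤ c) (hc2 : c ≤ l.getD a 0) :
    hook l a c ≠ beta l a - beta l i := by
  have hmono := getD_mono hl (le_of_lt ha) hi
  rcases le_or_gt c (l.getD i 0) with hcase | hcase
  · have h1 := armN_ge hl ha hi hcase
    rw [hook_eq]; unfold beta; omega
  · have h1 := armN_le_of_lt hl ha hi hcase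
    have h2 := getD_pos hl hi
    rw [hook_eq]; unfold beta; omega

lemma hook_le_beta (ha : a < l.length) (hc1 : 1 ≤ c) : hook l a c ≤ beta l a := by
  have h1 := armN_le (l := l) (a := a) (c := c) hl ha
  have h2 := getD_pos hl ha
  rw [hook_eq]; unfold beta; omega

lemma hook_pos : 1 ≤ hook l a c := by rw [hook_eq]; omega

lemma hook_strict (hc1 : 1 ≤ c) (hcc : c < c') (hc2 : c' ≤ l.getD a 0) :
    hook l a c' < hook l a c := by
  have hN : armN l a c' ≤ armN l a c := by
    unfold armN
    apply Finset.card_le_card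
    intro j hj
    rw [Finset.mem_filter] at hj ⊢
    exact ⟨hj.1, le_trans (le_of_lt hcc) hj.2⟩
  rw [hook_eq, hook_eq]; omega

/-- the excluded values -/
lemma excl_stuff (ha : a < l.length) :
    ((Finset.Ioo a l.length).image (fun i => beta l a - beta l i)).card = l.length - a - 1 ∧
    (Finset.Ioo a l.length).image (fun i => beta l a - beta l i) ⊆ Finset.Icc 1 (beta l a) := by
  constructor
  · rw [Finset.card_image_of_injOn, Nat.card_Ioo]
    intro x hx y hy hxy
    rw [Finset.mem_coe, Finset.mem_Ioo] at hx hy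
    have hbx := beta_lt hl hx.1 hx.2
    have hby := beta_lt hl hy.1 hy.2
    have hxy' : beta l a - beta l x = beta l a - beta l y := hxy
    have : beta l x = beta l y := by omega
    by_contra hne
    rcases Nat.lt_or_ge x y with h | h
    · exact absurd this (ne_of_gt (beta_lt hl h hy.2))
    · have h' : y < x := by omega
      exact absurd this.symm (ne_of_gt (beta_lt hl h' hx.2))
  · intro x hx
    rw [Finset.mem_image] at hx
    obtain ⟨j, hj, rfl⟩ := hx
    rw [Finset.mem_Ioo] at hj
    have h1 := beta_lt hl hj.1 hj.2
    rw [Finset.mem_Icc]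
    omega

lemma hrow_eq (ha : a < l.length) :
    (Finset.Icc 1 (l.getD a 0)).image (fun c => hook l a c) =
      Finset.Icc 1 (beta l a) \ (Finset.Ioo a l.length).image (fun i => beta l a - beta l i) := by
  obtain ⟨hcard, hsub⟩ := excl_stuff hl ha
  apply Finset.eq_of_subset_of_card_le
  · intro x hx
    rw [Finset.mem_image] at hx
    obtain ⟨c, hc, rfl⟩ := hx
    rw [Finset.mem_Icc] at hc
    rw [Finset.mem_sdiff, Finset.mem_Icc]
    refine ⟨⟨hook_pos hl, hook_le_beta hl ha hc.1⟩, ?_⟩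
    rw [Finset.mem_image]
    rintro ⟨i, hi, hbad⟩
    rw [Finset.mem_Ioo] at hi
    exact hook_ne_beta_sub hl hi.1 hi.2 hc.1 hc.2 hbad.symm
  · rw [Finset.card_sdiff_of_subset hsub, hcard, Nat.card_Icc]
    rw [Finset.card_image_of_injOn]
    · rw [Nat.card_Icc]
      have := beta_pos hl ha
      have h2 : l.getD a 0 + (l.length - 1 - a) = beta l a := rfl
      omega
    · intro x hx y hy hxy
      rw [Finset.mem_coe, Finset.mem_Icc] at hx hy
      have hxy' : hook l a x = hook l a y := hxy
      by_contra hne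
      rcases Nat.lt_or_ge x y with h | h
      · exact absurd hxy' (ne_of_gt (hook_strict hl hx.1 h hy.2))
      · have h' : y < x := by omega
        exact absurd hxy'.symm (ne_of_gt (hook_strict hl hy.1 h' hx.2))

end
section
variable {l : List ℕ} {ℓ : ℕ} (hl : IsPartition l)
include hl

lemma isCore_iff (hℓ : 1 ≤ ℓ) :
    IsCore ℓ l ↔ ∀ a < l.length, ∀ m : ℕ, 1 ≤ m → m * ℓ ≤ beta l a →
      ∃ i, a < i ∧ i < l.length ∧ beta l i = beta l a - m * ℓ := by
  constructor
  · intro hcore a ha m hm hmb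
    by_cases hmem : m * ℓ ∈ (Finset.Ioo a l.length).image (fun i => beta l a - beta l i)
    · rw [Finset.mem_image] at hmem
      obtain ⟨i, hi, heq⟩ := hmem
      rw [Finset.mem_Ioo] at hi
      have hlt := beta_lt hl hi.1 hi.2
      exact ⟨i, hi.1, hi.2, by omega⟩
    · have hml : 1 ≤ m * ℓ := Nat.mul_pos hm hℓ
      have hthis : m * ℓ ∈ Finset.Icc 1 (beta l a) \
          (Finset.Ioo a l.length).image (fun i => beta l a - beta l i) :=
        Finset.mem_sdiff.2 ⟨Finset.mem_Icc.2 ⟨hml, hmb⟩, hmem⟩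
      rw [← hrow_eq hl ha, Finset.mem_image] at hthis
      obtain ⟨c, hc, hcv⟩ := hthis
      rw [Finset.mem_Icc] at hc
      exact absurd (hcv ▸ dvd_mul_left ℓ m) (hcore a ha c hc.1 hc.2)
  · intro hE a ha c hc1 hc2 hdvd
    obtain ⟨m, hm⟩ := hdvd
    have hpos : 1 ≤ hook l a c := hook_pos hl
    have hm1 : 1 ≤ m := by
      rcases Nat.eq_zero_or_pos m with rfl | h
      · simp at hm; omega
      · exact h
    have hm' : hook l a c = m * ℓ := by rw [hm, mul_comm]
    have hle : m * ℓ ≤ beta l a := hm' ▸ hook_le_beta hl ha hc1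
    obtain ⟨i, hi1, hi2, hieq⟩ := hE a ha m hm1 hle
    exact hook_ne_beta_sub hl hi1 hi2 hc1 hc2 (by omega)

lemma isCore_iff_step (hℓ : 2 ≤ ℓ) :
    IsCore ℓ l ↔ ∀ a < l.length, ¬ ℓ ∣ beta l a ∧
      (ℓ ≤ beta l a → ∃ i < l.length, beta l i = beta l a - ℓ) := by
  rw [isCore_iff hl (by omega)]
  constructor
  · intro hE a ha
    constructor
    · rintro ⟨m, hm⟩
      have hbpos := beta_pos hl ha
      have hm1 : 1 ≤ m := by
        rcases Nat.eq_zero_or_pos m with rfl | h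
        · simp at hm; omega
        · exact h
      have hm' : beta l a = m * ℓ := by rw [hm, mul_comm]
      obtain ⟨i, hi1, hi2, hieq⟩ := hE a ha m hm1 (le_of_eq hm'.symm)
      have := beta_pos hl hi2
      omega
    · intro hla
      obtain ⟨i, hi1, hi2, hieq⟩ := hE a ha 1 le_rfl (by simpa using hla)
      exact ⟨i, hi2, by simpa using hieq⟩
  · intro hstep
    have key : ∀ m a, a < l.length → 1 ≤ m → m * ℓ ≤ beta l a →
        ∃ i, i < l.length ∧ beta l i = beta l a - m * ℓ := by
      intro m
      induction m with
      | zero => intro a ha h; omega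
      | succ m ih =>
        intro a ha hm hle
        rcases Nat.eq_zero_or_pos m with rfl | hmpos
        · obtain ⟨i, hi, hieq⟩ := (hstep a ha).2 (by simpa using hle)
          exact ⟨i, hi, by simpa using hieq⟩
        · have hsucc : (m + 1) * ℓ = m * ℓ + ℓ := by ring
          have hle' : m * ℓ ≤ beta l a := by omega
          obtain ⟨i, hi, hieq⟩ := ih a ha hmpos hle'
          have h1 : ℓ ≤ beta l i := by omega
          obtain ⟨i', hi', hieq'⟩ := (hstep i hi).2 h1
          exact ⟨i', hi', by omega⟩
    intro a ha m hm hle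
    obtain ⟨i, hi, hieq⟩ := key m a ha hm hle
    refine ⟨i, ?_, hi, hieq⟩
    have h1 : 1 ≤ m * ℓ := Nat.mul_pos hm (by omega)
    have hbpos := beta_pos hl hi
    have h2 : beta l i < beta l a := by omega
    by_contra hcon
    push_neg at hcon
    exact absurd (beta_le hl hcon ha) (by omega)

end
def partOfBeta (b : List ℕ) : List ℕ :=
  (List.range b.length).map (fun a => b.getD a 0 - (b.length - 1 - a))

lemma pob_length (b : List ℕ) : (partOfBeta b).length = b.length := by simp [partOfBeta]

lemma headD_eq_getD (l : List ℕ) : l.headD 0 = l.getD 0 0 := by cases l <;> rfl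

section
variable {b : List ℕ} {a : ℕ} (hb : b.Pairwise (· > ·)) (hbpos : ∀ x ∈ b, 0 < x)

include hb in
lemma sorted_gt_getD {a a' : ℕ} (h : a ≤ a') (h' : a' < b.length) :
    b.getD a' 0 + (a' - a) ≤ b.getD a 0 := by
  induction a' with
  | zero =>
    have : a = 0 := by omega
    subst this; omega
  | succ a' ih =>
    rcases Nat.eq_or_lt_of_le h with rfl | hlt
    · omega
    · have ha' : a' < b.length := by omega
      have step : b.getD (a' + 1) 0 < b.getD a' 0 := by
        rw [List.getD_eq_getElem b 0 h', List.getD_eq_getElem b 0 ha']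
        exact hb.rel_get_of_lt (a := ⟨a', ha'⟩) (b := ⟨a' + 1, h'⟩) (by simp)
      have := ih (by omega) ha'
      omega

include hb hbpos in
lemma b_ge (h : a < b.length) : (b.length - 1 - a) + 1 ≤ b.getD a 0 := by
  have hlen : b.length - 1 < b.length := by omega
  have hlast : 0 < b.getD (b.length - 1) 0 := by
    rw [List.getD_eq_getElem b 0 hlen]
    exact hbpos _ (List.getElem_mem hlen)
  have := sorted_gt_getD hb (a := a) (a' := b.length - 1) (by omega) hlen
  omega

lemma pob_getD (h : a < b.length) :
    (partOfBeta b).getD a 0 = b.getD a 0 - (b.length - 1 - a) := by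
  rw [List.getD_eq_getElem _ 0 (by simpa [pob_length] using h)]
  simp [partOfBeta]

include hb hbpos in
lemma pob_partition : IsPartition (partOfBeta b) := by
  constructor
  · rw [List.pairwise_iff_get]
    intro i j hij
    have hi : (i : ℕ) < b.length := by have := i.2; simpa [pob_length] using this
    have hj : (j : ℕ) < b.length := by have := j.2; simpa [pob_length] using this
    simp only [List.get_eq_getElem, ← List.getD_eq_getElem _ 0]
    rw [pob_getD hi, pob_getD hj]
    have h1 := sorted_gt_getD hb (le_of_lt hij) hj
    have h2 := b_ge hb hbpos hj
    simp only [ge_iff_le]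
    omega
  · intro x hx
    simp only [partOfBeta, List.mem_map, List.mem_range] at hx
    obtain ⟨a', ha', rfl⟩ := hx
    have := b_ge hb hbpos ha'
    omega

include hb hbpos in
lemma pob_beta (h : a < b.length) : beta (partOfBeta b) a = b.getD a 0 := by
  unfold beta
  rw [pob_length, pob_getD h]
  have := b_ge hb hbpos h
  omega

include hb hbpos in
lemma pob_betaList : betaList (partOfBeta b) = b := by
  apply List.ext_getElem (by simp [betaList_length, pob_length])
  intro a h1 h2
  have hp : a < (partOfBeta b).length := by simpa [pob_length] using h2
  rw [betaList_getElem (pob_partition hb hbpos) hp, pob_beta hb hbpos h2]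
  exact List.getD_eq_getElem b 0 h2

end

lemma partOfBeta_betaList {l : List ℕ} (hl : IsPartition l) : partOfBeta (betaList l) = l := by
  apply List.ext_getElem (by simp [pob_length, betaList_length])
  intro a h1 h2
  rw [← List.getD_eq_getElem _ 0 h1, pob_getD (by simpa [betaList_length] using h2)]
  rw [List.getD_eq_getElem _ 0 (by simpa [betaList_length] using h2),
    betaList_getElem hl h2, betaList_length]
  rw [← List.getD_eq_getElem l 0 h2]
  have : beta l a = l.getD a 0 + (l.length - 1 - a) := rfl
  omega

def sortDesc (B : Finset ℕ) : List ℕ := (B.sort (· ≤ ·)).reverse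

lemma sortDesc_sorted (B : Finset ℕ) : (sortDesc B).Pairwise (· > ·) := by
  unfold sortDesc
  rw [List.pairwise_reverse]
  exact (B.sortedLT_sort).pairwise

lemma mem_sortDesc {B : Finset ℕ} {x : ℕ} : x ∈ sortDesc B ↔ x ∈ B := by
  simp [sortDesc, Finset.mem_sort]

lemma sortDesc_length (B : Finset ℕ) : (sortDesc B).length = B.card := by
  simp [sortDesc]

lemma sortDesc_nodup (B : Finset ℕ) : (sortDesc B).Nodup := by
  simp [sortDesc, Finset.sort_nodup]

lemma sortDesc_toFinset (B : Finset ℕ) : (sortDesc B).toFinset = B := by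
  ext x
  simp [List.mem_toFinset, mem_sortDesc]

instance : IsAntisymm ℕ (· > ·) := ⟨fun a b h1 h2 => by omega⟩

lemma sortDesc_of_sorted {b : List ℕ} (hb : b.Pairwise (· > ·)) : sortDesc b.toFinset = b := by
  refine List.Perm.eq_of_pairwise' (sortDesc_sorted _) hb ?_
  apply List.perm_of_nodup_nodup_toFinset_eq (sortDesc_nodup _) hb.nodup
  rw [sortDesc_toFinset]

lemma headD_sortDesc (B : Finset ℕ) : (sortDesc B).headD 0 = B.sup id := by
  rcases B.eq_empty_or_nonempty with rfl | hne
  · simp [sortDesc]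
  · have hlen : (sortDesc B).length ≠ 0 := by
      rw [sortDesc_length]
      simpa using hne.card_pos.ne'
    rcases hL : sortDesc B with _ | ⟨x, t⟩
    · rw [hL] at hlen; simp at hlen
    · have hs := sortDesc_sorted B
      rw [hL, List.pairwise_cons] at hs
      apply le_antisymm
      · have : x ∈ B := mem_sortDesc.1 (by rw [hL]; simp)
        exact Finset.le_sup (f := id) this
      · apply Finset.sup_le
        intro y hy
        have : y ∈ sortDesc B := mem_sortDesc.2 hy
        rw [hL, List.mem_cons] at this
        rcases this with rfl | h
        · simp
        · exact le_of_lt (hs.1 _ h)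
def AbacusSet (ℓ : ℕ) (B : Finset ℕ) : Prop :=
  ∀ β ∈ B, 0 < β ∧ ¬ ℓ ∣ β ∧ (ℓ ≤ β → β - ℓ ∈ B)

def maxPart (B : Finset ℕ) : ℕ := B.sup id - (B.card - 1)

def toB (ℓ : ℕ) (n : ℕ → ℕ) : Finset ℕ :=
  (Finset.Icc 1 (ℓ - 1)).biUnion (fun j => (Finset.range (n j)).image (fun m => j + m * ℓ))

def cnt (ℓ : ℕ) (B : Finset ℕ) : ℕ → ℕ := fun j => (B.filter (fun β => β % ℓ = j)).card

section
variable {ℓ : ℕ}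

lemma mem_toB (hℓ : 2 ≤ ℓ) {n : ℕ → ℕ} {x : ℕ} :
    x ∈ toB ℓ n ↔ x % ℓ ≠ 0 ∧ x / ℓ < n (x % ℓ) := by
  unfold toB
  simp only [Finset.mem_biUnion, Finset.mem_Icc, Finset.mem_image, Finset.mem_range]
  constructor
  · rintro ⟨j, ⟨hj1, hj2⟩, m, hm, rfl⟩
    have hjl : j < ℓ := by omega
    have hmod : (j + m * ℓ) % ℓ = j := by
      rw [Nat.add_mul_mod_self_right, Nat.mod_eq_of_lt hjl]
    have hdiv : (j + m * ℓ) / ℓ = m := by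
      rw [Nat.add_mul_div_right _ _ (by omega : 0 < ℓ), Nat.div_eq_of_lt hjl]
      omega
    rw [hmod, hdiv]
    exact ⟨by omega, hm⟩
  · rintro ⟨h1, h2⟩
    refine ⟨x % ℓ, ⟨by omega, ?_⟩, x / ℓ, h2, ?_⟩
    · have := Nat.mod_lt x (show 0 < ℓ by omega); omega
    · rw [Nat.mod_add_div' x ℓ]

lemma initSeg {M : Finset ℕ} (hM : ∀ m, m + 1 ∈ M → m ∈ M) {m : ℕ} :
    m ∈ M ↔ m < M.card := by
  have down : ∀ d m, m ∈ M → m - d ∈ M := by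
    intro d
    induction d with
    | zero => simpa using fun _ h => h
    | succ d ih =>
      intro m hm
      have h1 := ih m hm
      rcases Nat.eq_zero_or_pos (m - d) with h0 | hp
      · have heq : m - (d + 1) = m - d := by omega
        rw [heq]; exact h1
      · have heq : (m - (d + 1)) + 1 = m - d := by omega
        apply hM; rw [heq]; exact h1
  have hEq : M = Finset.range M.card := by
    rcases M.eq_empty_or_nonempty with rfl | hne
    · simp
    · have hmax := Finset.max'_mem M hne
      have h2 : M = Finset.range (M.max' hne + 1) := by
        ext x
        rw [Finset.mem_range]
        constructor
        · intro hx; have := Finset.le_max' M x hx; omega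
        · intro hx
          have hd := down (M.max' hne - x) _ hmax
          have hx' : M.max' hne - (M.max' hne - x) = x := by omega
          rwa [hx'] at hd
      have h3 : M.card = M.max' hne + 1 := by
        have := congrArg Finset.card h2
        rwa [Finset.card_range] at this
      rw [h3]; exact h2
  conv_lhs => rw [hEq]
  exact Finset.mem_range

lemma mem_abacus (hℓ : 2 ≤ ℓ) {B : Finset ℕ} (hB : AbacusSet ℓ B) {x : ℕ} :
    x ∈ B ↔ x % ℓ ≠ 0 ∧ x / ℓ < cnt ℓ B (x % ℓ) := by
  have hlpos : 0 < ℓ := by omega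
  by_cases hj : x % ℓ = 0
  · constructor
    · intro hx
      exact absurd (Nat.dvd_of_mod_eq_zero hj) (hB x hx).2.1
    · intro h; exact absurd hj h.1
  · set j := x % ℓ with hjdef
    set Bj := B.filter (fun β => β % ℓ = j) with hBj
    set Mj := Bj.image (fun β => β / ℓ) with hMj
    have hjl : j < ℓ := Nat.mod_lt x hlpos
    have hmemM : ∀ m : ℕ, m ∈ Mj ↔ j + m * ℓ ∈ B := by
      intro m
      rw [hMj, Finset.mem_image]
      constructor
      · rintro ⟨β, hβ, rfl⟩
        rw [hBj, Finset.mem_filter] at hβ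
        have heq : j + β / ℓ * ℓ = β := by rw [← hβ.2]; exact Nat.mod_add_div' β ℓ
        rw [heq]; exact hβ.1
      · intro hm
        refine ⟨j + m * ℓ, ?_, ?_⟩
        · rw [hBj, Finset.mem_filter]
          exact ⟨hm, by rw [Nat.add_mul_mod_self_right, Nat.mod_eq_of_lt hjl]⟩
        · rw [Nat.add_mul_div_right _ _ hlpos, Nat.div_eq_of_lt hjl]; omega
    have hdown : ∀ m, m + 1 ∈ Mj → m ∈ Mj := by
      intro m hm
      rw [hmemM] at hm ⊢
      have hring : (m + 1) * ℓ = m * ℓ + ℓ := by ring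
      have hle : ℓ ≤ j + (m + 1) * ℓ := by omega
      have hmem := (hB _ hm).2.2 hle
      have heq : j + (m + 1) * ℓ - ℓ = j + m * ℓ := by omega
      rwa [heq] at hmem
    have hcard : Mj.card = cnt ℓ B j := by
      rw [hMj, Finset.card_image_of_injOn]
      · rfl
      · intro u hu v hv huv
        rw [Finset.mem_coe, hBj, Finset.mem_filter] at hu hv
        have h1 : u % ℓ + u / ℓ * ℓ = u := Nat.mod_add_div' u ℓ
        have h2 : v % ℓ + v / ℓ * ℓ = v := Nat.mod_add_div' v ℓ
        have h3 : u / ℓ = v / ℓ := huv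
        rw [h3] at h1
        have h4 := hu.2
        have h5 := hv.2
        omega
    have hx_iff : x ∈ B ↔ x / ℓ ∈ Mj := by
      rw [hmemM]
      have heq : j + x / ℓ * ℓ = x := Nat.mod_add_div' x ℓ
      rw [heq]
    rw [hx_iff, initSeg hdown, hcard]
    exact ⟨fun h => ⟨hj, h⟩, fun h => h.2⟩

lemma toB_cnt (hℓ : 2 ≤ ℓ) {B : Finset ℕ} (hB : AbacusSet ℓ B) : toB ℓ (cnt ℓ B) = B := by
  ext x
  rw [mem_toB hℓ, mem_abacus hℓ hB]

lemma toB_abacus (hℓ : 2 ≤ ℓ) (n : ℕ → ℕ) : AbacusSet ℓ (toB ℓ n) := by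
  intro β hβ
  rw [mem_toB hℓ] at hβ
  have hlpos : 0 < ℓ := by omega
  have hmodlt : β % ℓ < ℓ := Nat.mod_lt β hlpos
  have hb0 : β ≠ 0 := by rintro rfl; exact hβ.1 (Nat.zero_mod ℓ)
  refine ⟨Nat.pos_of_ne_zero hb0, fun hdvd => hβ.1 (Nat.mod_eq_zero_of_dvd hdvd), ?_⟩
  intro hle
  have hmod2 : (β - ℓ) % ℓ = β % ℓ := by
    conv_rhs => rw [← Nat.sub_add_cancel hle]
    rw [Nat.add_mod_right]
  have hdiv2 : (β - ℓ) / ℓ = β / ℓ - 1 := by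
    have h := Nat.add_div_right (β - ℓ) hlpos
    rw [Nat.sub_add_cancel hle] at h
    rw [h]
    exact (Nat.succ_sub_one _).symm
  have hq1 : 1 ≤ β / ℓ := by
    have hxeq : β % ℓ + β / ℓ * ℓ = β := Nat.mod_add_div' β ℓ
    rcases Nat.eq_zero_or_pos (β / ℓ) with h0 | h
    · rw [h0] at hxeq; simp at hxeq; omega
    · exact h
  rw [mem_toB hℓ, hmod2, hdiv2]
  exact ⟨hβ.1, lt_of_le_of_lt (Nat.sub_le _ _) hβ.2⟩

lemma cnt_toB (hℓ : 2 ≤ ℓ) {n : ℕ → ℕ} (hsupp : ∀ j, n j ≠ 0 → 1 ≤ j ∧ j ≤ ℓ - 1) :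
    cnt ℓ (toB ℓ n) = n := by
  funext j
  by_cases hj : 1 ≤ j ∧ j ≤ ℓ - 1
  · have hjl : j < ℓ := by omega
    have hfilter : (toB ℓ n).filter (fun β => β % ℓ = j) =
        (Finset.range (n j)).image (fun m => j + m * ℓ) := by
      ext x
      rw [Finset.mem_filter, mem_toB hℓ, Finset.mem_image]
      simp only [Finset.mem_range]
      constructor
      · rintro ⟨⟨h1, h2⟩, h3⟩
        refine ⟨x / ℓ, by rwa [h3] at h2, ?_⟩
        rw [← h3]
        exact Nat.mod_add_div' x ℓ
      · rintro ⟨m, hm, rfl⟩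
        have hmod : (j + m * ℓ) % ℓ = j := by
          rw [Nat.add_mul_mod_self_right, Nat.mod_eq_of_lt hjl]
        have hdiv : (j + m * ℓ) / ℓ = m := by
          rw [Nat.add_mul_div_right _ _ (by omega : 0 < ℓ), Nat.div_eq_of_lt hjl]; omega
        exact ⟨⟨by omega, by rw [hmod, hdiv]; exact hm⟩, hmod⟩
    have hinj : Function.Injective (fun m => j + m * ℓ) := by
      intro u v huv
      simp only at huv
      exact Nat.eq_of_mul_eq_mul_right (by omega : 0 < ℓ) (by omega)
    show (Finset.filter _ _).card = n j
    rw [hfilter, Finset.card_image_of_injective _ hinj, Finset.card_range]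
  · have h0 : n j = 0 := by
      by_contra h; exact hj (hsupp j h)
    rw [h0]
    apply Finset.card_eq_zero.2
    rw [Finset.filter_eq_empty_iff]
    intro x hx
    rw [mem_toB hℓ] at hx
    intro hxm
    rw [hxm] at hx
    have h1 : x % ℓ < ℓ := Nat.mod_lt x (by omega)
    rw [hxm] at h1
    exact hj ⟨by omega, by omega⟩

lemma card_toB (hℓ : 2 ≤ ℓ) (n : ℕ → ℕ) :
    (toB ℓ n).card = ∑ j ∈ Finset.Icc 1 (ℓ - 1), n j := by
  unfold toB
  rw [Finset.card_biUnion]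
  · apply Finset.sum_congr rfl
    intro j hj
    have hinj : Function.Injective (fun m => j + m * ℓ) := by
      intro u v huv
      simp only at huv
      exact Nat.eq_of_mul_eq_mul_right (by omega : 0 < ℓ) (by omega)
    rw [Finset.card_image_of_injective _ hinj, Finset.card_range]
  · intro j hj j' hj' hne
    rw [Finset.mem_coe, Finset.mem_Icc] at hj hj'
    apply Finset.disjoint_left.2
    intro x hx hx'
    rw [Finset.mem_image] at hx hx'
    obtain ⟨m, _, rfl⟩ := hx
    obtain ⟨m', _, heq⟩ := hx'
    have h1 : (j + m * ℓ) % ℓ = j := by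
      rw [Nat.add_mul_mod_self_right, Nat.mod_eq_of_lt (by omega)]
    have h2 : (j' + m' * ℓ) % ℓ = j' := by
      rw [Nat.add_mul_mod_self_right, Nat.mod_eq_of_lt (by omega)]
    rw [heq] at h2
    exact hne (by omega)

lemma sup_toB (hℓ : 2 ≤ ℓ) {n : ℕ → ℕ} {t N : ℕ} (ht1 : 1 ≤ t) (ht2 : t ≤ ℓ - 1)
    (hN : n t = N) (hN1 : 1 ≤ N)
    (hlt : ∀ j, j < t → n j ≤ N) (hgt : ∀ j, t < j → n j ≤ N - 1) :
    (toB ℓ n).sup id = t + (N - 1) * ℓ := by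
  apply le_antisymm
  · apply Finset.sup_le
    intro x hx
    rw [mem_toB hℓ] at hx
    have hxeq : x % ℓ + x / ℓ * ℓ = x := Nat.mod_add_div' x ℓ
    have hjl : x % ℓ < ℓ := Nat.mod_lt x (by omega)
    rcases lt_trichotomy (x % ℓ) t with h | h | h
    · have hm : x / ℓ ≤ N - 1 := by have h2 := hx.2; have h3 := hlt _ h; omega
      have hmul : x / ℓ * ℓ ≤ (N - 1) * ℓ := Nat.mul_le_mul_right ℓ hm
      show x ≤ _
      omega
    · have hm : x / ℓ ≤ N - 1 := by have h2 := hx.2; rw [h, hN] at h2; omega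
      have hmul : x / ℓ * ℓ ≤ (N - 1) * ℓ := Nat.mul_le_mul_right ℓ hm
      show x ≤ _
      omega
    · have hm : x / ℓ + 1 ≤ N - 1 := by have h2 := hx.2; have h3 := hgt _ h; omega
      have hmul : (x / ℓ + 1) * ℓ ≤ (N - 1) * ℓ := Nat.mul_le_mul_right ℓ hm
      have hring : (x / ℓ + 1) * ℓ = x / ℓ * ℓ + ℓ := by ring
      show x ≤ _
      omega
  · apply Finset.le_sup (f := id) (b := t + (N - 1) * ℓ)
    rw [mem_toB hℓ]
    have hjl : t < ℓ := by omega
    have hmod : (t + (N - 1) * ℓ) % ℓ = t := by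
      rw [Nat.add_mul_mod_self_right, Nat.mod_eq_of_lt hjl]
    have hdiv : (t + (N - 1) * ℓ) / ℓ = N - 1 := by
      rw [Nat.add_mul_div_right _ _ (by omega : 0 < ℓ), Nat.div_eq_of_lt hjl]; omega
    rw [hmod, hdiv, hN]
    exact ⟨by omega, by omega⟩

end
def tOf (ℓ : ℕ) (n : ℕ → ℕ) : ℕ := (toB ℓ n).sup id % ℓ

def fwdU (ℓ : ℕ) (n : ℕ → ℕ) : ℕ → ℕ := fun j =>
  if j = tOf ℓ n then n j
  else if j < tOf ℓ n then n (tOf ℓ n) - n j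
  else n (tOf ℓ n) - 1 - n j

def fwdX (ℓ : ℕ) (n : ℕ → ℕ) (hℓ : 2 ≤ ℓ) : Fin (ℓ - 1) → ℕ := fun i => fwdU ℓ n (i.1 + 1)

def bwdY (ℓ : ℕ) (x : Fin (ℓ - 1) → ℕ) : ℕ → ℕ := fun j =>
  if h : 1 ≤ j ∧ j ≤ ℓ - 1 then x ⟨j - 1, by omega⟩ else 0

def bwdM (ℓ : ℕ) (x : Fin (ℓ - 1) → ℕ) : ℕ := (Finset.Icc 1 (ℓ - 1)).sup (bwdY ℓ x)

def bwdT (ℓ : ℕ) (x : Fin (ℓ - 1) → ℕ) : ℕ :=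
  ((Finset.Icc 1 (ℓ - 1)).filter (fun j => bwdY ℓ x j = bwdM ℓ x)).sup id

def bwdN (ℓ : ℕ) (x : Fin (ℓ - 1) → ℕ) : ℕ → ℕ := fun j =>
  if j = bwdT ℓ x then bwdM ℓ x
  else if 1 ≤ j ∧ j < bwdT ℓ x then bwdM ℓ x - bwdY ℓ x j
  else if bwdT ℓ x < j ∧ j ≤ ℓ - 1 then bwdM ℓ x - 1 - bwdY ℓ x j
  else 0

section
variable {ℓ : ℕ}

lemma marked_mem (hℓ : 2 ≤ ℓ) {n : ℕ → ℕ} {t N : ℕ} (ht1 : 1 ≤ t) (ht2 : t ≤ ℓ - 1)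
    (hN : n t = N) (hN1 : 1 ≤ N) : t + (N - 1) * ℓ ∈ toB ℓ n := by
  rw [mem_toB hℓ]
  have hjl : t < ℓ := by omega
  have hmod : (t + (N - 1) * ℓ) % ℓ = t := by
    rw [Nat.add_mul_mod_self_right, Nat.mod_eq_of_lt hjl]
  have hdiv : (t + (N - 1) * ℓ) / ℓ = N - 1 := by
    rw [Nat.add_mul_div_right _ _ (by omega : 0 < ℓ), Nat.div_eq_of_lt hjl]; omega
  rw [hmod, hdiv, hN]
  exact ⟨by omega, by omega⟩

lemma tOf_marked (hℓ : 2 ≤ ℓ) {n : ℕ → ℕ} {t N : ℕ} (ht1 : 1 ≤ t) (ht2 : t ≤ ℓ - 1)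
    (hN : n t = N) (hN1 : 1 ≤ N)
    (hlt : ∀ j, j < t → n j ≤ N) (hgt : ∀ j, t < j → n j ≤ N - 1) :
    tOf ℓ n = t := by
  unfold tOf
  rw [sup_toB hℓ ht1 ht2 hN hN1 hlt hgt]
  rw [Nat.add_mul_mod_self_right, Nat.mod_eq_of_lt (by omega : t < ℓ)]

lemma maxPart_marked (hℓ : 2 ≤ ℓ) {n : ℕ → ℕ} {t N : ℕ} (ht1 : 1 ≤ t) (ht2 : t ≤ ℓ - 1)
    (hN : n t = N) (hN1 : 1 ≤ N)
    (hlt : ∀ j, j < t → n j ≤ N) (hgt : ∀ j, t < j → n j ≤ N - 1) :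
    maxPart (toB ℓ n) + ((toB ℓ n).card + (ℓ - 1 - t)) = ℓ * N := by
  have hsup := sup_toB hℓ ht1 ht2 hN hN1 hlt hgt
  have hmem := marked_mem hℓ ht1 ht2 hN hN1
  have hone : 1 ≤ (toB ℓ n).card := Finset.card_pos.2 ⟨_, hmem⟩
  have hsub : toB ℓ n ⊆ Finset.Icc 1 ((toB ℓ n).sup id) := fun x hx =>
    Finset.mem_Icc.2 ⟨(toB_abacus hℓ n x hx).1, Finset.le_sup (f := id) hx⟩
  have hcard_le : (toB ℓ n).card ≤ (toB ℓ n).sup id := by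
    have h := Finset.card_le_card hsub
    rwa [Nat.card_Icc, Nat.add_sub_cancel] at h
  have hring : ℓ * N = (N - 1) * ℓ + ℓ := by
    have hNeq : N = (N - 1) + 1 := by omega
    calc ℓ * N = ℓ * ((N - 1) + 1) := by rw [← hNeq]
    _ = (N - 1) * ℓ + ℓ := by ring
  unfold maxPart
  rw [hsup] at hcard_le ⊢
  omega

/-- if the abacus is nonempty, its data is marked at `tOf` -/
lemma abacus_marked (hℓ : 2 ≤ ℓ) {n : ℕ → ℕ} (hsupp : ∀ j, n j ≠ 0 → 1 ≤ j ∧ j ≤ ℓ - 1)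
    (hne : (toB ℓ n).Nonempty) :
    1 ≤ tOf ℓ n ∧ tOf ℓ n ≤ ℓ - 1 ∧ 1 ≤ n (tOf ℓ n) ∧
      (∀ j, j < tOf ℓ n → n j ≤ n (tOf ℓ n)) ∧
      (∀ j, tOf ℓ n < j → n j ≤ n (tOf ℓ n) - 1) := by
  have hlpos : 0 < ℓ := by omega
  obtain ⟨S, hS, hSeq⟩ := Finset.exists_mem_eq_sup _ hne id
  have hSsup : (toB ℓ n).sup id = S := hSeq
  have hmem := hS
  rw [mem_toB hℓ] at hmem
  obtain ⟨hm1, hm2⟩ := hmem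
  have ht : tOf ℓ n = S % ℓ := by unfold tOf; rw [hSsup]
  have hmodlt : S % ℓ < ℓ := Nat.mod_lt S hlpos
  have hSdecomp : S % ℓ + S / ℓ * ℓ = S := Nat.mod_add_div' S ℓ
  -- every runner's top bead is at most S
  have htop : ∀ j, 1 ≤ n j → j + (n j - 1) * ℓ ≤ S := by
    intro j hj
    have hjI := hsupp j (by omega)
    have hmem2 : j + (n j - 1) * ℓ ∈ toB ℓ n := marked_mem hℓ hjI.1 hjI.2 rfl hj
    have h := Finset.le_sup (f := id) hmem2
    rw [hSsup] at h
    exact h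
  rw [ht]
  generalize hgen : S % ℓ = r at hm1 hm2 hmodlt hSdecomp
  generalize hgen2 : S / ℓ = q at hm2 hSdecomp
  have hnt : n r = q + 1 := by
    have h2 := htop r (by omega)
    have h3 : (n r - 1) * ℓ ≤ q * ℓ := by omega
    have h4 : n r - 1 ≤ q := Nat.le_of_mul_le_mul_right h3 hlpos
    omega
  refine ⟨by omega, by omega, by omega, ?_, ?_⟩
  · intro j hj
    rcases Nat.eq_zero_or_pos (n j) with h0 | hpos
    · omega
    · have h2 := htop j hpos
      by_contra hcon
      push_neg at hcon
      have h5 : q + 1 ≤ n j - 1 := by omega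
      have h6 : (q + 1) * ℓ ≤ (n j - 1) * ℓ := Nat.mul_le_mul_right ℓ h5
      have h7 : (q + 1) * ℓ = q * ℓ + ℓ := by ring
      omega
  · intro j hj
    rcases Nat.eq_zero_or_pos (n j) with h0 | hpos
    · omega
    · have h2 := htop j hpos
      by_contra hcon
      push_neg at hcon
      have h5 : q ≤ n j - 1 := by omega
      have h6 : q * ℓ ≤ (n j - 1) * ℓ := Nat.mul_le_mul_right ℓ h5
      omega

lemma toB_empty_iff (hℓ : 2 ≤ ℓ) {n : ℕ → ℕ} (hsupp : ∀ j, n j ≠ 0 → 1 ≤ j ∧ j ≤ ℓ - 1) :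
    toB ℓ n = ∅ ↔ ∀ j, n j = 0 := by
  constructor
  · intro h j
    by_contra hj
    have hjI := hsupp j hj
    have hm : j + (n j - 1) * ℓ ∈ toB ℓ n := marked_mem hℓ hjI.1 hjI.2 rfl (by omega)
    rw [h] at hm
    simp at hm
  · intro h
    rw [Finset.eq_empty_iff_forall_notMem]
    intro x hx
    rw [mem_toB hℓ] at hx
    rw [h (x % ℓ)] at hx
    exact Nat.not_lt_zero _ hx.2

lemma sum_marked (hℓ : 2 ≤ ℓ) {t N : ℕ} (ht1 : 1 ≤ t) (ht2 : t ≤ ℓ - 1) (u v : ℕ → ℕ)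
    (huv : ∀ j, 1 ≤ j → j ≤ ℓ - 1 →
      u j + v j + (if t < j then 1 else 0) = N + (if j = t then N else 0)) :
    (∑ j ∈ Finset.Icc 1 (ℓ - 1), u j) + (∑ j ∈ Finset.Icc 1 (ℓ - 1), v j) + (ℓ - 1 - t)
      = ℓ * N := by
  have h1 : ∑ j ∈ Finset.Icc 1 (ℓ - 1), (u j + v j + (if t < j then 1 else 0))
      = ∑ j ∈ Finset.Icc 1 (ℓ - 1), (N + (if j = t then N else 0)) :=
    Finset.sum_congr rfl (fun j hj => by
      rw [Finset.mem_Icc] at hj; exact huv j hj.1 hj.2)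
  rw [Finset.sum_add_distrib, Finset.sum_add_distrib, Finset.sum_add_distrib] at h1
  have h2 : ∑ j ∈ Finset.Icc 1 (ℓ - 1), (if t < j then (1:ℕ) else 0) = ℓ - 1 - t := by
    rw [Finset.sum_boole]
    have hf : (Finset.Icc 1 (ℓ - 1)).filter (fun j => t < j) = Finset.Ioc t (ℓ - 1) := by
      ext j
      rw [Finset.mem_filter, Finset.mem_Icc, Finset.mem_Ioc]
      omega
    rw [hf, Nat.card_Ioc]
    simp
  have h3 : ∑ _j ∈ Finset.Icc 1 (ℓ - 1), N = (ℓ - 1) * N := by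
    rw [Finset.sum_const, Nat.card_Icc, Nat.add_sub_cancel, smul_eq_mul]
  have h4 : ∑ j ∈ Finset.Icc 1 (ℓ - 1), (if j = t then N else 0) = N := by
    rw [Finset.sum_ite_eq' (Finset.Icc 1 (ℓ - 1)) t (fun _ => N)]
    rw [if_pos (Finset.mem_Icc.2 ⟨ht1, ht2⟩)]
  have h5 : (ℓ - 1) * N + N = ℓ * N := by
    have hℓeq : ℓ - 1 + 1 = ℓ := by omega
    calc (ℓ - 1) * N + N = (ℓ - 1 + 1) * N := by ring
    _ = ℓ * N := by rw [hℓeq]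
  omega

lemma sum_fin_icc (hℓ : 2 ≤ ℓ) (x : Fin (ℓ - 1) → ℕ) (u : ℕ → ℕ)
    (h : ∀ j (h1 : 1 ≤ j) (h2 : j ≤ ℓ - 1), u j = x ⟨j - 1, by omega⟩) :
    ∑ j ∈ Finset.Icc 1 (ℓ - 1), u j = ∑ i, x i := by
  have hIcc : Finset.Icc 1 (ℓ - 1) = Finset.Ico 1 ℓ := by
    ext j; rw [Finset.mem_Icc, Finset.mem_Ico]; omega
  rw [hIcc, Finset.sum_Ico_eq_sum_range]
  rw [← Fin.sum_univ_eq_sum_range (fun j => u (1 + j)) (ℓ - 1)]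
  apply Finset.sum_congr rfl
  intro i _
  have hi := i.2
  rw [h (1 + i.1) (by omega) (by omega)]
  congr 1
  apply Fin.ext
  show 1 + i.1 - 1 = i.1
  omega
end
section
variable {ℓ k : ℕ}

lemma fwdU_eq_t (n : ℕ → ℕ) : fwdU ℓ n (tOf ℓ n) = n (tOf ℓ n) := if_pos rfl

lemma fwdU_lt (n : ℕ → ℕ) {j : ℕ} (h : j < tOf ℓ n) :
    fwdU ℓ n j = n (tOf ℓ n) - n j := by
  unfold fwdU; rw [if_neg (by omega), if_pos h]

lemma fwdU_gt (n : ℕ → ℕ) {j : ℕ} (h : tOf ℓ n < j) :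
    fwdU ℓ n j = n (tOf ℓ n) - 1 - n j := by
  unfold fwdU; rw [if_neg (by omega), if_neg (by omega)]

lemma bwdY_spec (hℓ : 2 ≤ ℓ) (x : Fin (ℓ - 1) → ℕ) (i : Fin (ℓ - 1)) :
    bwdY ℓ x (i.1 + 1) = x i := by
  unfold bwdY
  have hi := i.2
  rw [dif_pos (by omega : 1 ≤ i.1 + 1 ∧ i.1 + 1 ≤ ℓ - 1)]
  have he : (⟨i.1 + 1 - 1, by omega⟩ : Fin (ℓ - 1)) = i := Fin.ext (by simp)
  rw [he]

lemma bwdY_spec' (hℓ : 2 ≤ ℓ) (x : Fin (ℓ - 1) → ℕ) {j : ℕ} (h1 : 1 ≤ j) (h2 : j ≤ ℓ - 1) :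
    bwdY ℓ x j = x ⟨j - 1, by omega⟩ := by
  unfold bwdY
  rw [dif_pos ⟨h1, h2⟩]

lemma bwdY_le (x : Fin (ℓ - 1) → ℕ) {j : ℕ} (hj : j ∈ Finset.Icc 1 (ℓ - 1)) :
    bwdY ℓ x j ≤ bwdM ℓ x := Finset.le_sup hj

lemma bwdT_mem (hℓ : 2 ≤ ℓ) (x : Fin (ℓ - 1) → ℕ) :
    bwdT ℓ x ∈ Finset.Icc 1 (ℓ - 1) ∧ bwdY ℓ x (bwdT ℓ x) = bwdM ℓ x := by
  have hne : ((Finset.Icc 1 (ℓ - 1)).filter (fun j => bwdY ℓ x j = bwdM ℓ x)).Nonempty := by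
    obtain ⟨j0, hj0, hj0eq⟩ := Finset.exists_mem_eq_sup (Finset.Icc 1 (ℓ - 1))
      (Finset.nonempty_Icc.2 (by omega)) (bwdY ℓ x)
    exact ⟨j0, Finset.mem_filter.2 ⟨hj0, hj0eq.symm⟩⟩
  obtain ⟨j1, hj1, hj1eq⟩ := Finset.exists_mem_eq_sup _ hne id
  have hT : bwdT ℓ x = j1 := hj1eq
  rw [hT]
  exact ⟨(Finset.mem_filter.1 hj1).1, (Finset.mem_filter.1 hj1).2⟩

lemma bwdT_last (hℓ : 2 ≤ ℓ) (x : Fin (ℓ - 1) → ℕ) {j : ℕ} (hj : j ∈ Finset.Icc 1 (ℓ - 1))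
    (hgt : bwdT ℓ x < j) : bwdY ℓ x j < bwdM ℓ x := by
  have hle : bwdY ℓ x j ≤ bwdM ℓ x := Finset.le_sup hj
  rcases lt_or_eq_of_le hle with h | h
  · exact h
  · exfalso
    have hmem : j ∈ (Finset.Icc 1 (ℓ - 1)).filter (fun j => bwdY ℓ x j = bwdM ℓ x) :=
      Finset.mem_filter.2 ⟨hj, h⟩
    have h2 : j ≤ bwdT ℓ x := Finset.le_sup (f := id) hmem
    omega

lemma bwdN_eq_t (x : Fin (ℓ - 1) → ℕ) : bwdN ℓ x (bwdT ℓ x) = bwdM ℓ x := if_pos rfl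

lemma bwdN_lt (x : Fin (ℓ - 1) → ℕ) {j : ℕ} (h1 : 1 ≤ j) (h2 : j < bwdT ℓ x) :
    bwdN ℓ x j = bwdM ℓ x - bwdY ℓ x j := by
  unfold bwdN; rw [if_neg (by omega), if_pos ⟨h1, h2⟩]

lemma bwdN_gt (x : Fin (ℓ - 1) → ℕ) {j : ℕ} (h1 : bwdT ℓ x < j) (h2 : j ≤ ℓ - 1) :
    bwdN ℓ x j = bwdM ℓ x - 1 - bwdY ℓ x j := by
  unfold bwdN; rw [if_neg (by omega), if_neg (by omega), if_pos ⟨h1, h2⟩]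

lemma bwdN_out (hℓ : 2 ≤ ℓ) (x : Fin (ℓ - 1) → ℕ) {j : ℕ} (h : ¬(1 ≤ j ∧ j ≤ ℓ - 1)) :
    bwdN ℓ x j = 0 := by
  have ht := (bwdT_mem hℓ x).1
  rw [Finset.mem_Icc] at ht
  unfold bwdN
  rw [if_neg (by omega), if_neg (by omega), if_neg (by omega)]

lemma bwdN_supp (hℓ : 2 ≤ ℓ) (x : Fin (ℓ - 1) → ℕ) :
    ∀ j, bwdN ℓ x j ≠ 0 → 1 ≤ j ∧ j ≤ ℓ - 1 := by
  intro j hj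
  by_contra h
  exact hj (bwdN_out hℓ x h)

lemma bwdN_marked (hℓ : 2 ≤ ℓ) (x : Fin (ℓ - 1) → ℕ) :
    bwdN ℓ x (bwdT ℓ x) = bwdM ℓ x ∧
    (∀ j, j < bwdT ℓ x → bwdN ℓ x j ≤ bwdM ℓ x) ∧
    (∀ j, bwdT ℓ x < j → bwdN ℓ x j ≤ bwdM ℓ x - 1) := by
  have ht := (bwdT_mem hℓ x).1
  rw [Finset.mem_Icc] at ht
  refine ⟨bwdN_eq_t x, ?_, ?_⟩
  · intro j hj
    rcases Nat.eq_zero_or_pos j with rfl | h1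
    · rw [bwdN_out hℓ x (by omega)]; omega
    · rw [bwdN_lt x h1 hj]; omega
  · intro j hj
    rcases le_or_gt j (ℓ - 1) with h2 | h2
    · rw [bwdN_gt x hj h2]; omega
    · rw [bwdN_out hℓ x (by omega)]; omega

lemma fwdX_zero (hℓ : 2 ≤ ℓ) {n : ℕ → ℕ} (hn : ∀ j, n j = 0) (i : Fin (ℓ - 1)) :
    fwdX ℓ n hℓ i = 0 := by
  unfold fwdX fwdU
  split_ifs <;> simp [hn]

lemma maxPart_empty : maxPart (∅ : Finset ℕ) = 0 := by
  simp [maxPart]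

/-- forward lands in T -/
lemma fwd_sum (hℓ : 2 ≤ ℓ) {n : ℕ → ℕ} (hsupp : ∀ j, n j ≠ 0 → 1 ≤ j ∧ j ≤ ℓ - 1) :
    ∑ i, fwdX ℓ n hℓ i = maxPart (toB ℓ n) := by
  by_cases hE : toB ℓ n = ∅
  · have hn0 := (toB_empty_iff hℓ hsupp).1 hE
    rw [hE, maxPart_empty]
    exact Finset.sum_eq_zero (fun i _ => fwdX_zero hℓ hn0 i)
  · have hne : (toB ℓ n).Nonempty := Finset.nonempty_iff_ne_empty.2 hE
    obtain ⟨ht1, ht2, hN1, hlt, hgt⟩ := abacus_marked hℓ hsupp hne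
    have hmax := maxPart_marked hℓ ht1 ht2 rfl hN1 hlt hgt
    have hcard := card_toB hℓ n
    have hsum := sum_marked hℓ (N := n (tOf ℓ n)) ht1 ht2 (fwdU ℓ n) n (by
      intro j h1 h2
      rcases lt_trichotomy j (tOf ℓ n) with hj | hj | hj
      · have hb := hlt j hj
        rw [fwdU_lt n hj]
        split_ifs <;> omega
      · subst hj
        rw [fwdU_eq_t n]
        split_ifs <;> omega
      · have hb := hgt j hj
        rw [fwdU_gt n hj]
        split_ifs <;> omega)
    have hconv := sum_fin_icc hℓ (fwdX ℓ n hℓ) (fwdU ℓ n) (fun j h1 h2 => by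
      show fwdU ℓ n j = fwdU ℓ n (j - 1 + 1)
      congr 1
      omega)
    omega

/-- backward lands in SN -/
lemma bwd_maxPart (hℓ : 2 ≤ ℓ) (x : Fin (ℓ - 1) → ℕ) :
    maxPart (toB ℓ (bwdN ℓ x)) = ∑ i, x i := by
  have ht := (bwdT_mem hℓ x).1
  have hyt := (bwdT_mem hℓ x).2
  rw [Finset.mem_Icc] at ht
  by_cases hM : bwdM ℓ x = 0
  · have hn0 : ∀ j, bwdN ℓ x j = 0 := by
      intro j
      rcases lt_trichotomy j (bwdT ℓ x) with hj | hj | hj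
      · rcases Nat.eq_zero_or_pos j with rfl | h1
        · exact bwdN_out hℓ x (by omega)
        · rw [bwdN_lt x h1 hj]; omega
      · subst hj; rw [bwdN_eq_t x]; exact hM
      · rcases le_or_gt j (ℓ - 1) with h2 | h2
        · rw [bwdN_gt x hj h2]; omega
        · exact bwdN_out hℓ x (by omega)
    have hE : toB ℓ (bwdN ℓ x) = ∅ := (toB_empty_iff hℓ (bwdN_supp hℓ x)).2 hn0
    rw [hE, maxPart_empty]
    symm
    apply Finset.sum_eq_zero
    intro i _
    have h1 := bwdY_le x (Finset.mem_Icc.2 (by have := i.2; omega : 1 ≤ i.1 + 1 ∧ i.1 + 1 ≤ ℓ - 1))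
    rw [bwdY_spec hℓ x i] at h1
    omega
  · obtain ⟨hNt, hlt, hgt⟩ := bwdN_marked hℓ x
    have hM1 : 1 ≤ bwdM ℓ x := by omega
    have hmax := maxPart_marked hℓ ht.1 ht.2 hNt hM1 hlt hgt
    have hcard := card_toB hℓ (bwdN ℓ x)
    have hsum := sum_marked hℓ (N := bwdM ℓ x) ht.1 ht.2 (bwdY ℓ x) (bwdN ℓ x) (by
      intro j h1 h2
      have hyle := bwdY_le x (Finset.mem_Icc.2 ⟨h1, h2⟩)
      rcases lt_trichotomy j (bwdT ℓ x) with hj | hj | hj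
      · rw [bwdN_lt x h1 hj]
        split_ifs <;> omega
      · subst hj
        rw [bwdN_eq_t x, hyt]
        split_ifs <;> omega
      · have hylt := bwdT_last hℓ x (Finset.mem_Icc.2 ⟨h1, h2⟩) hj
        rw [bwdN_gt x hj h2]
        split_ifs <;> omega)
    have hconv := sum_fin_icc hℓ x (bwdY ℓ x) (fun j h1 h2 => bwdY_spec' hℓ x h1 h2)
    omega

/-- round trip 1 -/
lemma bwd_fwd (hℓ : 2 ≤ ℓ) {n : ℕ → ℕ} (hsupp : ∀ j, n j ≠ 0 → 1 ≤ j ∧ j ≤ ℓ - 1) :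
    bwdN ℓ (fwdX ℓ n hℓ) = n := by
  by_cases hE : toB ℓ n = ∅
  · have hn0 := (toB_empty_iff hℓ hsupp).1 hE
    have hx0 : ∀ i, fwdX ℓ n hℓ i = 0 := fwdX_zero hℓ hn0
    have hy0 : ∀ j, bwdY ℓ (fwdX ℓ n hℓ) j = 0 := by
      intro j
      unfold bwdY
      split_ifs with h
      · exact hx0 _
      · rfl
    have hM0 : bwdM ℓ (fwdX ℓ n hℓ) = 0 := by
      apply Nat.le_zero.1
      apply Finset.sup_le
      intro j _
      rw [hy0 j]
    funext j
    have ht := (bwdT_mem hℓ (fwdX ℓ n hℓ)).1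
    rw [Finset.mem_Icc] at ht
    rw [hn0 j]
    rcases lt_trichotomy j (bwdT ℓ (fwdX ℓ n hℓ)) with hj | hj | hj
    · rcases Nat.eq_zero_or_pos j with rfl | h1
      · exact bwdN_out hℓ _ (by omega)
      · rw [bwdN_lt _ h1 hj]; omega
    · subst hj; rw [bwdN_eq_t]; exact hM0
    · rcases le_or_gt j (ℓ - 1) with h2 | h2
      · rw [bwdN_gt _ hj h2]; omega
      · exact bwdN_out hℓ _ (by omega)
  · have hne : (toB ℓ n).Nonempty := Finset.nonempty_iff_ne_empty.2 hE
    obtain ⟨ht1, ht2, hN1, hlt, hgt⟩ := abacus_marked hℓ hsupp hne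
    have hy : ∀ j, 1 ≤ j → j ≤ ℓ - 1 → bwdY ℓ (fwdX ℓ n hℓ) j = fwdU ℓ n j := by
      intro j h1 h2
      rw [bwdY_spec' hℓ _ h1 h2]
      show fwdU ℓ n (j - 1 + 1) = fwdU ℓ n j
      congr 1
      omega
    have hyle : ∀ j, 1 ≤ j → j ≤ ℓ - 1 → bwdY ℓ (fwdX ℓ n hℓ) j ≤ n (tOf ℓ n) := by
      intro j h1 h2
      rw [hy j h1 h2]
      rcases lt_trichotomy j (tOf ℓ n) with hj | hj | hj
      · rw [fwdU_lt n hj]; omega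
      · subst hj; rw [fwdU_eq_t n]
      · rw [fwdU_gt n hj]; omega
    have hyt : bwdY ℓ (fwdX ℓ n hℓ) (tOf ℓ n) = n (tOf ℓ n) := by
      rw [hy _ ht1 ht2, fwdU_eq_t n]
    have hM : bwdM ℓ (fwdX ℓ n hℓ) = n (tOf ℓ n) := by
      apply le_antisymm
      · apply Finset.sup_le
        intro j hj
        rw [Finset.mem_Icc] at hj
        exact hyle j hj.1 hj.2
      · rw [← hyt]
        exact Finset.le_sup (Finset.mem_Icc.2 ⟨ht1, ht2⟩)
    have hT : bwdT ℓ (fwdX ℓ n hℓ) = tOf ℓ n := by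
      apply le_antisymm
      · apply Finset.sup_le
        intro j hj
        simp only [id_eq]
        rw [Finset.mem_filter, Finset.mem_Icc] at hj
        by_contra hcon
        push_neg at hcon
        have h3 := hgt j hcon
        have h4 : bwdY ℓ (fwdX ℓ n hℓ) j = bwdM ℓ (fwdX ℓ n hℓ) := hj.2
        rw [hy j hj.1.1 hj.1.2, fwdU_gt n hcon, hM] at h4
        omega
      · apply Finset.le_sup (f := id)
        rw [Finset.mem_filter]
        refine ⟨Finset.mem_Icc.2 ⟨ht1, ht2⟩, ?_⟩
        show bwdY ℓ (fwdX ℓ n hℓ) (tOf ℓ n) = bwdM ℓ (fwdX ℓ n hℓ)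
        rw [hyt, hM]
    funext j
    rcases lt_trichotomy j (tOf ℓ n) with hj | hj | hj
    · rcases Nat.eq_zero_or_pos j with rfl | h1
      · rw [bwdN_out hℓ _ (by omega)]
        rcases Nat.eq_zero_or_pos (n 0) with h0 | h0
        · omega
        · exact absurd (hsupp 0 (by omega)).1 (by omega)
      · rw [bwdN_lt _ h1 (by rw [hT]; exact hj), hM, hy j h1 (by omega), fwdU_lt n hj]
        have := hlt j hj
        omega
    · subst hj
      calc bwdN ℓ (fwdX ℓ n hℓ) (tOf ℓ n)
          = bwdN ℓ (fwdX ℓ n hℓ) (bwdT ℓ (fwdX ℓ n hℓ)) := by rw [hT]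
      _ = bwdM ℓ (fwdX ℓ n hℓ) := bwdN_eq_t _
      _ = n (tOf ℓ n) := hM
    · rcases le_or_gt j (ℓ - 1) with h2 | h2
      · rw [bwdN_gt _ (by rw [hT]; exact hj) h2, hM, hy j (by omega) h2, fwdU_gt n hj]
        have := hgt j hj
        omega
      · rw [bwdN_out hℓ _ (by omega)]
        rcases Nat.eq_zero_or_pos (n j) with h0 | h0
        · omega
        · exact absurd (hsupp j (by omega)).2 (by omega)

/-- round trip 2 -/
lemma fwd_bwd (hℓ : 2 ≤ ℓ) (x : Fin (ℓ - 1) → ℕ) :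
    fwdX ℓ (bwdN ℓ x) hℓ = x := by
  have ht := (bwdT_mem hℓ x).1
  have hytM := (bwdT_mem hℓ x).2
  rw [Finset.mem_Icc] at ht
  by_cases hM : bwdM ℓ x = 0
  · have hx0 : ∀ i : Fin (ℓ - 1), x i = 0 := by
      intro i
      have h1 := bwdY_le x (Finset.mem_Icc.2 (by have := i.2; omega : 1 ≤ i.1 + 1 ∧ i.1 + 1 ≤ ℓ - 1))
      rw [bwdY_spec hℓ x i] at h1
      omega
    have hn0 : ∀ j, bwdN ℓ x j = 0 := by
      intro j
      rcases lt_trichotomy j (bwdT ℓ x) with hj | hj | hj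
      · rcases Nat.eq_zero_or_pos j with rfl | h1
        · exact bwdN_out hℓ x (by omega)
        · rw [bwdN_lt x h1 hj]; omega
      · subst hj; rw [bwdN_eq_t x]; exact hM
      · rcases le_or_gt j (ℓ - 1) with h2 | h2
        · rw [bwdN_gt x hj h2]; omega
        · exact bwdN_out hℓ x (by omega)
    funext i
    rw [fwdX_zero hℓ hn0 i, hx0 i]
  · obtain ⟨hNt, hlt, hgt⟩ := bwdN_marked hℓ x
    have hM1 : 1 ≤ bwdM ℓ x := by omega
    have htOf : tOf ℓ (bwdN ℓ x) = bwdT ℓ x :=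
      tOf_marked hℓ ht.1 ht.2 hNt hM1 hlt hgt
    funext i
    show fwdU ℓ (bwdN ℓ x) (i.1 + 1) = x i
    rw [← bwdY_spec hℓ x i]
    have hj1 : 1 ≤ i.1 + 1 := by omega
    have hj2 : i.1 + 1 ≤ ℓ - 1 := by have := i.2; omega
    have hyle := bwdY_le x (Finset.mem_Icc.2 ⟨hj1, hj2⟩)
    rcases lt_trichotomy (i.1 + 1) (bwdT ℓ x) with hj | hj | hj
    · rw [fwdU_lt (bwdN ℓ x) (show i.1 + 1 < tOf ℓ (bwdN ℓ x) by rw [htOf]; exact hj),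
        htOf, hNt, bwdN_lt x hj1 hj]
      omega
    · calc fwdU ℓ (bwdN ℓ x) (i.1 + 1)
          = fwdU ℓ (bwdN ℓ x) (tOf ℓ (bwdN ℓ x)) := by rw [htOf, ← hj]
      _ = bwdN ℓ x (tOf ℓ (bwdN ℓ x)) := fwdU_eq_t _
      _ = bwdN ℓ x (bwdT ℓ x) := by rw [htOf]
      _ = bwdM ℓ x := bwdN_eq_t x
      _ = bwdY ℓ x (i.1 + 1) := by rw [hj, hytM]
    · have hylt := bwdT_last hℓ x (Finset.mem_Icc.2 ⟨hj1, hj2⟩) hj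
      rw [fwdU_gt (bwdN ℓ x) (show tOf ℓ (bwdN ℓ x) < i.1 + 1 by rw [htOf]; exact hj),
        htOf, hNt, bwdN_gt x hj hj2]
      omega

end
section
variable {ℓ k : ℕ}

lemma cnt_supp (hℓ : 2 ≤ ℓ) {B : Finset ℕ} (hB : AbacusSet ℓ B) :
    ∀ j, cnt ℓ B j ≠ 0 → 1 ≤ j ∧ j ≤ ℓ - 1 := by
  intro j h
  obtain ⟨β, hβ⟩ := Finset.card_pos.1 (Nat.pos_of_ne_zero h)
  rw [Finset.mem_filter] at hβ
  have h1 : β % ℓ ≠ 0 := by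
    intro h0
    exact (hB β hβ.1).2.1 (Nat.dvd_of_mod_eq_zero h0)
  have h2 : β % ℓ < ℓ := Nat.mod_lt β (by omega)
  rw [hβ.2] at h1 h2
  omega

noncomputable def equivSNT (hℓ : 2 ≤ ℓ) (k : ℕ) :
    {n : ℕ → ℕ // (∀ j, n j ≠ 0 → 1 ≤ j ∧ j ≤ ℓ - 1) ∧ maxPart (toB ℓ n) = k} ≃
      {x : Fin (ℓ - 1) → ℕ // ∑ i, x i = k} where
  toFun n := ⟨fwdX ℓ n.1 hℓ, by rw [fwd_sum hℓ n.2.1]; exact n.2.2⟩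
  invFun x := ⟨bwdN ℓ x.1, bwdN_supp hℓ x.1, by rw [bwd_maxPart hℓ x.1]; exact x.2⟩
  left_inv n := Subtype.ext (bwd_fwd hℓ n.2.1)
  right_inv x := Subtype.ext (fwd_bwd hℓ x.1)

noncomputable def equivSBSN (hℓ : 2 ≤ ℓ) (k : ℕ) :
    {B : Finset ℕ // AbacusSet ℓ B ∧ maxPart B = k} ≃
      {n : ℕ → ℕ // (∀ j, n j ≠ 0 → 1 ≤ j ∧ j ≤ ℓ - 1) ∧ maxPart (toB ℓ n) = k} where
  toFun B := ⟨cnt ℓ B.1, cnt_supp hℓ B.2.1, by rw [toB_cnt hℓ B.2.1]; exact B.2.2⟩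
  invFun n := ⟨toB ℓ n.1, toB_abacus hℓ n.1, n.2.2⟩
  left_inv B := Subtype.ext (toB_cnt hℓ B.2.1)
  right_inv n := Subtype.ext (cnt_toB hℓ n.2.1)

instance : IsIrrefl ℕ (· > ·) := ⟨fun a => lt_irrefl a⟩

lemma maxPart_betaList {l : List ℕ} (hl : IsPartition l) :
    maxPart ((betaList l).toFinset) = l.headD 0 := by
  rcases Nat.eq_zero_or_pos l.length with h0 | hpos
  · have : l = [] := List.length_eq_zero_iff.1 h0
    subst this
    simp [betaList, maxPart]
  · have hnodup : (betaList l).Nodup := (betaList_sorted hl).nodup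
    have hcard : (betaList l).toFinset.card = l.length := by
      rw [List.toFinset_card_of_nodup hnodup, betaList_length]
    have hsup : (betaList l).toFinset.sup id = beta l 0 := by
      apply le_antisymm
      · apply Finset.sup_le
        intro x hx
        rw [List.mem_toFinset, mem_betaList hl] at hx
        obtain ⟨a, ha, rfl⟩ := hx
        exact beta_le hl (Nat.zero_le a) ha
      · exact Finset.le_sup (f := id)
          (List.mem_toFinset.2 ((mem_betaList hl).2 ⟨0, hpos, rfl⟩))
    unfold maxPart
    rw [hcard, hsup, headD_eq_getD]
    have hb : beta l 0 = l.getD 0 0 + (l.length - 1 - 0) := rfl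
    omega

lemma getD_mem {l : List ℕ} {a : ℕ} (h : a < l.length) : l.getD a 0 ∈ l := by
  rw [List.getD_eq_getElem l 0 h]
  exact List.getElem_mem h

noncomputable def equivSSB (hℓ : 2 ≤ ℓ) (k : ℕ) :
    {l : List ℕ // l ∈ {l : List ℕ | IsPartition l ∧ IsCore ℓ l ∧ l.headD 0 = k}} ≃
      {B : Finset ℕ // AbacusSet ℓ B ∧ maxPart B = k} where
  toFun l := by
    refine ⟨(betaList l.1).toFinset, ?_, ?_⟩
    · have hl : IsPartition l.1 ∧ IsCore ℓ l.1 ∧ l.1.headD 0 = k := l.2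
      have hstep := (isCore_iff_step hl.1 hℓ).1 hl.2.1
      intro β hβ
      rw [List.mem_toFinset, mem_betaList hl.1] at hβ
      obtain ⟨a, ha, rfl⟩ := hβ
      obtain ⟨h1, h2⟩ := hstep a ha
      refine ⟨beta_pos hl.1 ha, h1, fun hle => ?_⟩
      obtain ⟨i, hi, hieq⟩ := h2 hle
      rw [List.mem_toFinset, mem_betaList hl.1]
      exact ⟨i, hi, hieq⟩
    · have hl : IsPartition l.1 ∧ IsCore ℓ l.1 ∧ l.1.headD 0 = k := l.2
      rw [maxPart_betaList hl.1]
      exact hl.2.2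
  invFun B := by
    refine ⟨partOfBeta (sortDesc B.1), ?_⟩
    have hsorted := sortDesc_sorted B.1
    have hpos : ∀ x ∈ sortDesc B.1, 0 < x := fun x hx =>
      (B.2.1 x (mem_sortDesc.1 hx)).1
    have hpart := pob_partition hsorted hpos
    have hbl := pob_betaList hsorted hpos
    refine ⟨hpart, ?_, ?_⟩
    · rw [isCore_iff_step hpart hℓ]
      intro a ha
      rw [pob_length] at ha
      have hbeta : beta (partOfBeta (sortDesc B.1)) a = (sortDesc B.1).getD a 0 :=
        pob_beta hsorted hpos ha
      have hmem : (sortDesc B.1).getD a 0 ∈ B.1 := mem_sortDesc.1 (getD_mem ha)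
      obtain ⟨hp, hnd, hcl⟩ := B.2.1 _ hmem
      refine ⟨by rw [hbeta]; exact hnd, fun hle => ?_⟩
      rw [hbeta] at hle ⊢
      have hmem2 := hcl hle
      rw [← mem_sortDesc (B := B.1)] at hmem2
      obtain ⟨i, hilen, hieq⟩ := List.mem_iff_getElem.1 hmem2
      refine ⟨i, by rw [pob_length]; exact hilen, ?_⟩
      rw [pob_beta hsorted hpos hilen, List.getD_eq_getElem _ 0 hilen, hieq]
    · rcases Nat.eq_zero_or_pos B.1.card with h0 | hpos'
      · have hBe : B.1 = ∅ := Finset.card_eq_zero.1 h0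
        have hnil : sortDesc B.1 = [] := by
          rw [hBe]
          simp [sortDesc]
        rw [hnil]
        have hk := B.2.2
        rw [hBe, maxPart_empty] at hk
        show (partOfBeta []).headD 0 = k
        simpa [partOfBeta] using hk
      · have hlen : 0 < (sortDesc B.1).length := by rw [sortDesc_length]; exact hpos'
        rw [headD_eq_getD, pob_getD hlen]
        have h1 : (sortDesc B.1).getD 0 0 = B.1.sup id := by
          rw [← headD_sortDesc, headD_eq_getD]
        have h2 : (sortDesc B.1).length = B.1.card := sortDesc_length B.1
        have hk := B.2.2
        unfold maxPart at hk
        omega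
  left_inv l := by
    have hl : IsPartition l.1 ∧ IsCore ℓ l.1 ∧ l.1.headD 0 = k := l.2
    apply Subtype.ext
    show partOfBeta (sortDesc ((betaList l.1).toFinset)) = l.1
    rw [sortDesc_of_sorted (betaList_sorted hl.1), partOfBeta_betaList hl.1]
  right_inv B := by
    apply Subtype.ext
    show (betaList (partOfBeta (sortDesc B.1))).toFinset = B.1
    have hsorted := sortDesc_sorted B.1
    have hpos : ∀ x ∈ sortDesc B.1, 0 < x := fun x hx =>
      (B.2.1 x (mem_sortDesc.1 hx)).1
    rw [pob_betaList hsorted hpos, sortDesc_toFinset]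

end

def equivTSym (m k : ℕ) : {x : Fin m → ℕ // ∑ i, x i = k} ≃ Sym (Fin m) k where
  toFun x := ⟨∑ i, Multiset.replicate (x.1 i) i, by
    have hhom : Multiset.card (∑ i, Multiset.replicate (x.1 i) i)
        = ∑ i, Multiset.card (Multiset.replicate (x.1 i) i) :=
      map_sum (⟨⟨Multiset.card, Multiset.card_zero⟩, Multiset.card_add⟩ : Multiset (Fin m) →+ ℕ) _ _
    rw [hhom]
    simp only [Multiset.card_replicate]
    exact x.2⟩
  invFun s := ⟨fun i => s.1.count i, by
    have h1 : ∑ i ∈ s.1.toFinset, s.1.count i = Multiset.card s.1 :=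
      Multiset.toFinset_sum_count_eq s.1
    have h2 : ∑ i, s.1.count i = ∑ i ∈ s.1.toFinset, s.1.count i := by
      symm
      apply Finset.sum_subset (Finset.subset_univ _)
      intro i _ hi
      exact Multiset.count_eq_zero_of_notMem (by simpa using hi)
    rw [h2, h1, s.2]⟩
  left_inv x := by
    apply Subtype.ext
    funext i
    show Multiset.count i (∑ j, Multiset.replicate (x.1 j) j) = x.1 i
    rw [Multiset.count_sum']
    simp only [Multiset.count_replicate]
    rw [Finset.sum_ite_eq' Finset.univ i x.1]
    simp
  right_inv s := by
    apply Subtype.ext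
    show (∑ j, Multiset.replicate (s.1.count j) j) = s.1
    apply Multiset.ext.2
    intro a
    rw [Multiset.count_sum']
    simp only [Multiset.count_replicate]
    rw [Finset.sum_ite_eq' Finset.univ a (fun j => s.1.count j)]
    simp

/-- The number of ℓ-cores with largest part equal to k is C(k+ℓ-2, k). -/
theorem stmt3 (ℓ k : ℕ) (hℓ : 2 ≤ ℓ) :
    {l : List ℕ | IsPartition l ∧ IsCore ℓ l ∧ l.headD 0 = k}.ncard =
      Nat.choose (k + ℓ - 2) k := by
  rw [← Nat.card_coe_set_eq]
  have e : {l : List ℕ // l ∈ {l : List ℕ | IsPartition l ∧ IsCore ℓ l ∧ l.headD 0 = k}} ≃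
      Sym (Fin (ℓ - 1)) k :=
    (equivSSB hℓ k).trans ((equivSBSN hℓ k).trans ((equivSNT hℓ k).trans (equivTSym (ℓ - 1) k)))
  rw [Nat.card_congr e, Nat.card_eq_fintype_card, Sym.card_sym_eq_multichoose,
    Nat.multichoose_eq, Fintype.card_fin]
  congr 1
  omega
end

section
/- Let λ be an ℓ-core with at least one part, and let i be the residue modulo ℓ of the content of the last box of the bottom row of λ. Then every box of λ with content congruent to i mod ℓ that lies at the end of its row also lies at the end of its column (i.e., it is removable), and removing all such boxes yields an ℓ-core. -/
/-- Residue (mod ℓ) of the content of the rightmost box of the bottom row. -/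
def bottomRes (ℓ : ℕ) (l : List ℕ) : ℤ := ((l.getD (l.length - 1) 0 : ℤ) - l.length) % ℓ

/-- Remove one box from each row whose rightmost box has the residue of the
bottom row's rightmost box, dropping rows that become empty. -/
def removeRes (ℓ : ℕ) (l : List ℕ) : List ℕ :=
  ((List.range l.length).map (fun a =>
    if ((l.getD a 0 : ℤ) - (a + 1)) % ℓ = bottomRes ℓ l
    then l.getD a 0 - 1 else l.getD a 0)).filter (fun x => decide (0 < x))

namespace S4

def lam (l : List ℕ) (a : ℕ) : ℕ := l.getD a 0
def beta (l : List ℕ) (a : ℕ) : ℕ := lam l a + (l.length - 1 - a)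
def Ff (l : List ℕ) (a c : ℕ) : ℕ :=
  ((Finset.range l.length).filter (fun i => a < i ∧ c ≤ lam l i)).card
def Gg (l : List ℕ) (a c : ℕ) : ℕ :=
  ((Finset.range l.length).filter (fun i => a < i ∧ lam l i < c)).card
def xv (l : List ℕ) (a c : ℕ) : ℕ := c - 1 + Gg l a c
def Closed (ℓ : ℕ) (l : List ℕ) : Prop :=
  ∀ a < l.length, ℓ ≤ beta l a → ∃ b < l.length, beta l b = beta l a - ℓ

variable {l : List ℕ} {ℓ a b c n v : ℕ}

lemma listlen_card (n : ℕ) (p : ℕ → Bool) :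
    ((List.range n).filter p).length = ((Finset.range n).filter (fun i => p i = true)).card := by
  induction n with
  | zero => rfl
  | succ n ih =>
    rw [Finset.range_add_one, List.range_succ, List.filter_append, Finset.filter_insert]
    by_cases h : p n = true
    · simp [h, Finset.card_insert_of_notMem, ih]
    · simp [h, ih]

lemma lam_pos (hp : IsPartition l) (h : a < l.length) : 1 ≤ lam l a := by
  have he : l.getD a 0 = l.get ⟨a, h⟩ := by
    simp [List.getD_eq_getElem?_getD, List.getElem?_eq_getElem h]
  unfold lam
  rw [he]
  exact hp.2 _ (List.get_mem _ _)

lemma lam_anti (hp : IsPartition l) (hab : a ≤ b) : lam l b ≤ lam l a := by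
  rcases Nat.lt_or_ge b l.length with hb | hb
  · rcases eq_or_lt_of_le hab with rfl | hab'
    · exact le_refl _
    · have ha : a < l.length := lt_trans hab' hb
      have h1 : l.getD a 0 = l.get ⟨a, ha⟩ := by
        simp [List.getD_eq_getElem?_getD, List.getElem?_eq_getElem ha]
      have h2 : l.getD b 0 = l.get ⟨b, hb⟩ := by
        simp [List.getD_eq_getElem?_getD, List.getElem?_eq_getElem hb]
      have := List.Pairwise.rel_get_of_lt hp.1 (a := ⟨a, ha⟩) (b := ⟨b, hb⟩) hab'
      unfold lam
      rw [h1, h2]; exact this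
  · have : lam l b = 0 := List.getD_eq_default _ _ hb
    omega

lemma beta_lt (hp : IsPartition l) (hab : a < b) (hb : b < l.length) :
    beta l b < beta l a := by
  have h1 := lam_anti hp (le_of_lt hab)
  have h2 := lam_pos hp hb
  unfold beta at *; omega

lemma beta_le (hp : IsPartition l) (hab : a ≤ b) (hb : b < l.length) :
    beta l b ≤ beta l a := by
  rcases eq_or_lt_of_le hab with rfl | h
  · exact le_refl _
  · exact le_of_lt (beta_lt hp h hb)

lemma FG (h : a < l.length) : Ff l a c + Gg l a c = l.length - 1 - a := by
  classical
  have h1 : Ff l a c + Gg l a c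
      = ((Finset.range l.length).filter (fun i => a < i)).card := by
    rw [← Finset.card_filter_add_card_filter_not
      (s := (Finset.range l.length).filter (fun i => a < i)) (p := fun i => c ≤ lam l i)]
    congr 1
    · rw [Finset.filter_filter]
      unfold Ff
      exact congrArg Finset.card (by
        ext i
        simp only [Finset.mem_filter, Finset.mem_range, not_le])
    · rw [Finset.filter_filter]
      unfold Gg
      exact congrArg Finset.card (by
        ext i
        simp only [Finset.mem_filter, Finset.mem_range, not_le])
  have h2 : (Finset.range l.length).filter (fun i => a < i) = Finset.Ioo a l.length := by
    ext i
    simp [Finset.mem_Ioo, and_comm]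
  rw [h1, h2, Nat.card_Ioo]
  omega

lemma hook_xv (hp : IsPartition l) (ha : a < l.length) (hc1 : 1 ≤ c) (hc2 : c ≤ lam l a) :
    hook l a c + xv l a c = beta l a := by
  classical
  have hF : ((List.range l.length).filter (fun i => decide (a < i ∧ c ≤ l.getD i 0))).length
      = Ff l a c := by
    rw [listlen_card]
    unfold Ff
    congr 1
    ext i
    simp [lam]
  have hfg := FG (l := l) (c := c) ha
  unfold hook
  rw [hF]
  unfold xv beta lam at *
  omega

lemma Gg_mono (hcc : c ≤ v) : Gg l a c ≤ Gg l a v := by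
  apply Finset.card_le_card
  intro i hi
  simp only [Finset.mem_filter, Finset.mem_range] at *
  omega

lemma xv_lt_xv (hc1 : 1 ≤ c) (hcc : c < v) : xv l a c < xv l a v := by
  have := Gg_mono (l := l) (a := a) (le_of_lt hcc)
  unfold xv; omega

lemma xv_top (hp : IsPartition l) (ha : a < l.length) : xv l a (lam l a + 1) = beta l a := by
  classical
  have hF : Ff l a (lam l a + 1) = 0 := by
    unfold Ff
    rw [Finset.card_eq_zero, Finset.filter_eq_empty_iff]
    intro i hi
    rintro ⟨hai, hci⟩
    have := lam_anti hp (le_of_lt hai)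
    omega
  have hfg := FG (l := l) (c := lam l a + 1) ha
  unfold xv beta
  omega

lemma xv_not_beta (hp : IsPartition l) (ha : a < l.length) (hc1 : 1 ≤ c) (hc2 : c ≤ lam l a)
    (hab : a < b) (hb : b < l.length) : beta l b ≠ xv l a c := by
  classical
  by_cases hcb : c ≤ lam l b
  · have hsub : (Finset.range l.length).filter (fun i => a < i ∧ lam l i < c)
        ⊆ Finset.Ioo b l.length := by
      intro i hi
      simp only [Finset.mem_filter, Finset.mem_range, Finset.mem_Ioo] at *
      refine ⟨?_, hi.1⟩
      by_contra hib
      have := lam_anti hp (a := i) (b := b) (by omega)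
      omega
    have hG : Gg l a c ≤ l.length - b - 1 := by
      have := Finset.card_le_card hsub
      rwa [Nat.card_Ioo] at this
    unfold beta xv
    have hlb : c ≤ lam l b := hcb
    omega
  · have hsub : Finset.Ico b l.length
        ⊆ (Finset.range l.length).filter (fun i => a < i ∧ lam l i < c) := by
      intro i hi
      simp only [Finset.mem_filter, Finset.mem_range, Finset.mem_Ico] at *
      have := lam_anti hp (b := i) (a := b) hi.1
      exact ⟨hi.2, by omega, by omega⟩
    have hG : l.length - b ≤ Gg l a c := by
      have := Finset.card_le_card hsub
      rwa [Nat.card_Ico] at this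
    unfold beta xv
    omega

lemma xv_lt_beta (hp : IsPartition l) (ha : a < l.length) (hc1 : 1 ≤ c) (hc2 : c ≤ lam l a) :
    xv l a c < beta l a := by
  have := xv_lt_xv (l := l) (a := a) hc1 (show c < lam l a + 1 by omega)
  rw [xv_top hp ha] at this; exact this

lemma surj (hp : IsPartition l) (ha : a < l.length) (hv : v < beta l a)
    (hnb : ∀ b, a < b → b < l.length → beta l b ≠ v) :
    ∃ c, 1 ≤ c ∧ c ≤ lam l a ∧ xv l a c = v := by
  classical
  set n := l.length with hn
  set S : Finset ℕ := (Finset.Icc 1 (lam l a + 1)).image (xv l a) with hS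
  set T : Finset ℕ := (Finset.range (beta l a + 1)) \ ((Finset.Ioo a n).image (beta l)) with hT
  have hxle : ∀ c, 1 ≤ c → c ≤ lam l a + 1 → xv l a c ≤ beta l a := by
    intro c hc1 hc2
    rcases eq_or_lt_of_le hc2 with rfl | h
    · rw [xv_top hp ha]
    · exact le_of_lt (xv_lt_beta hp ha hc1 (by omega))
  have hST : S ⊆ T := by
    intro w hw
    simp only [hS, Finset.mem_image, Finset.mem_Icc] at hw
    obtain ⟨c, ⟨hc1, hc2⟩, rfl⟩ := hw
    simp only [hT, Finset.mem_sdiff, Finset.mem_range, Finset.mem_image, Finset.mem_Ioo, not_exists]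
    constructor
    · have := hxle c hc1 hc2; omega
    · rintro b ⟨⟨hab, hbn⟩, hbv⟩
      rcases eq_or_lt_of_le hc2 with rfl | h
      · rw [xv_top hp ha] at hbv
        exact absurd hbv (ne_of_lt (beta_lt hp hab hbn))
      · exact xv_not_beta hp ha hc1 (by omega) hab hbn hbv
  have hinj1 : Set.InjOn (xv l a) ↑(Finset.Icc 1 (lam l a + 1)) := by
    intro x hx y hy hxy
    simp only [Finset.coe_Icc, Set.mem_Icc] at hx hy
    by_contra hne
    rcases Nat.lt_or_ge x y with h | h
    · exact absurd hxy (ne_of_lt (xv_lt_xv hx.1 h))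
    · have : y < x := by omega
      exact absurd hxy.symm (ne_of_lt (xv_lt_xv hy.1 this))
  have hSc : S.card = lam l a + 1 := by
    rw [hS, Finset.card_image_of_injOn hinj1, Nat.card_Icc]
    omega
  have hinj2 : Set.InjOn (beta l) ↑(Finset.Ioo a n) := by
    intro x hx y hy hxy
    simp only [Finset.coe_Ioo, Set.mem_Ioo] at hx hy
    by_contra hne
    rcases Nat.lt_or_ge x y with h | h
    · exact absurd hxy.symm (ne_of_lt (beta_lt hp h hy.2))
    · have : y < x := by omega
      exact absurd hxy (ne_of_lt (beta_lt hp this hx.2))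
  have hsub2 : Finset.image (beta l) (Finset.Ioo a n) ⊆ Finset.range (beta l a + 1) := by
    intro w hw
    simp only [Finset.mem_image, Finset.mem_Ioo] at hw
    obtain ⟨b, ⟨hab, hbn⟩, rfl⟩ := hw
    simp only [Finset.mem_range]
    have := beta_lt hp hab hbn
    omega
  have hTc : T.card = lam l a + 1 := by
    rw [hT, Finset.card_sdiff_of_subset hsub2, Finset.card_image_of_injOn hinj2, Nat.card_Ioo,
      Finset.card_range]
    unfold beta
    omega
  have hE := Finset.eq_of_subset_of_card_le hST (le_of_eq (by omega))
  have hvT : v ∈ T := by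
    simp only [hT, Finset.mem_sdiff, Finset.mem_range, Finset.mem_image, Finset.mem_Ioo, not_exists]
    exact ⟨by omega, fun b hb => hnb b hb.1.1 hb.1.2 hb.2⟩
  rw [← hE] at hvT
  simp only [hS, Finset.mem_image, Finset.mem_Icc] at hvT
  obtain ⟨c, ⟨hc1, hc2⟩, hxc⟩ := hvT
  refine ⟨c, hc1, ?_, hxc⟩
  rcases eq_or_lt_of_le hc2 with rfl | h
  · rw [xv_top hp ha] at hxc
    omega
  · omega

lemma hook_repr (hp : IsPartition l) (ha : a < l.length) (hc1 : 1 ≤ c) (hc2 : c ≤ lam l a) :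
    hook l a c = beta l a - xv l a c := by
  have h1 := hook_xv hp ha hc1 hc2
  omega

lemma core_to_closed (hℓ : 1 ≤ ℓ) (hp : IsPartition l) (hc : IsCore ℓ l) : Closed ℓ l := by
  intro a ha hla
  by_contra hno
  push_neg at hno
  have hv : beta l a - ℓ < beta l a := by omega
  obtain ⟨c, hc1, hc2, hxc⟩ := surj hp ha hv (fun b _ hb => hno b hb)
  have : hook l a c = ℓ := by
    rw [hook_repr hp ha hc1 hc2, hxc]; omega
  exact hc a ha c hc1 hc2 (this ▸ dvd_refl ℓ)

lemma closed_to_core (hℓ : 1 ≤ ℓ) (hp : IsPartition l) (hcl : Closed ℓ l) : IsCore ℓ l := by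
  have key : ∀ k, ∀ a, a < l.length → ∀ v, v < beta l a →
      (∀ b, a < b → b < l.length → beta l b ≠ v) → beta l a - v ≠ (k + 1) * ℓ := by
    intro k
    induction k with
    | zero =>
      intro a ha v hv hnb heq
      have hba : ℓ ≤ beta l a := by omega
      obtain ⟨b, hb, hbv⟩ := hcl a ha hba
      have hab : a < b := by
        by_contra h
        have := beta_le hp (le_of_not_gt h) ha
        omega
      exact hnb b hab hb (by omega)
    | succ k ih =>
      intro a ha v hv hnb heq
      have e1 : (k + 1 + 1) * ℓ = (k + 1) * ℓ + ℓ := by ring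
      have hkl : 1 ≤ (k + 1) * ℓ := Nat.mul_pos (by omega) hℓ
      have hba : ℓ ≤ beta l a := by omega
      obtain ⟨b, hb, hbv⟩ := hcl a ha hba
      have hab : a < b := by
        by_contra h
        have := beta_le hp (le_of_not_gt h) ha
        omega
      exact ih b hb v (by omega) (fun b' hb' hbn' => hnb b' (lt_trans hab hb') hbn')
        (by omega)
  intro a ha c hc1 hc2 hdvd
  obtain ⟨k, hk⟩ := hdvd
  have hc2' : c ≤ lam l a := hc2
  have h1 : 1 ≤ hook l a c := by unfold hook; omega
  have hk1 : 1 ≤ k := by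
    rcases Nat.eq_zero_or_pos k with rfl | h
    · omega
    · exact h
  have hrep := hook_repr hp ha hc1 hc2'
  have hlt := xv_lt_beta hp ha hc1 hc2'
  have hnb : ∀ b, a < b → b < l.length → beta l b ≠ xv l a c :=
    fun b hab hb => xv_not_beta hp ha hc1 hc2' hab hb
  have := key (k - 1) a ha (xv l a c) hlt hnb
  have e : (k - 1 + 1) * ℓ = ℓ * k := by
    rw [Nat.sub_add_cancel hk1]; ring
  omega

lemma beta_min (hp : IsPartition l) (hb : b < l.length) :
    beta l (l.length - 1) ≤ beta l b :=
  beta_le hp (by omega) (by omega)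

lemma beta_last_eq : beta l (l.length - 1) = l.getD (l.length - 1) 0 := by
  unfold beta lam; omega

lemma res_iff (ℓ : ℕ) (hne : l ≠ []) (ha : a < l.length) :
    (((l.getD a 0 : ℤ) - (a + 1)) % ℓ = bottomRes ℓ l) ↔
      beta l a % ℓ = beta l (l.length - 1) % ℓ := by
  have hn : 1 ≤ l.length := List.length_pos_iff.2 hne
  have key : ((l.getD a 0 : ℤ) - (a + 1)) = (beta l a : ℤ) - l.length := by
    have h1 : beta l a + a + 1 = l.getD a 0 + l.length := by
      unfold beta lam; omega
    have h2 := congrArg (fun t : ℕ => (t : ℤ)) h1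
    push_cast at h2
    linarith
  have e2 : bottomRes ℓ l = ((beta l (l.length - 1) : ℤ) - l.length) % ℓ := by
    unfold bottomRes
    rw [beta_last_eq]
  rw [e2, key]
  constructor
  · intro h
    have h' : Int.ModEq (ℓ : ℤ) ((beta l a : ℤ) - l.length) ((beta l (l.length - 1) : ℤ) - l.length) := h
    have h3 := Int.ModEq.add_right (l.length : ℤ) h'
    simp only [sub_add_cancel] at h3
    have h4 : (beta l a : ℤ) % ℓ = (beta l (l.length - 1) : ℤ) % ℓ := h3
    exact_mod_cast h4
  · intro h
    have h2 : (beta l a : ℤ) % ℓ = (beta l (l.length - 1) : ℤ) % ℓ := by exact_mod_cast h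
    exact Int.ModEq.sub_right _ h2

lemma P_last (ℓ : ℕ) (hne : l ≠ []) :
    ((l.getD (l.length - 1) 0 : ℤ) - ((l.length - 1 : ℕ) + 1)) % ℓ = bottomRes ℓ l := by
  have hn : 1 ≤ l.length := List.length_pos_iff.2 hne
  unfold bottomRes
  have h : ((l.length - 1 : ℕ) : ℤ) + 1 = (l.length : ℤ) := by omega
  rw [h]

lemma beta_last_lt (hℓ : 1 ≤ ℓ) (hp : IsPartition l) (hcl : Closed ℓ l) (hne : l ≠ []) :
    beta l (l.length - 1) < ℓ := by
  by_contra h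
  push_neg at h
  have hn : 1 ≤ l.length := List.length_pos_iff.2 hne
  have hm : l.length - 1 < l.length := by omega
  obtain ⟨b, hb, hbv⟩ := hcl _ hm h
  have h1 := beta_min hp hb
  omega

lemma chain (hℓ : 1 ≤ ℓ) (hp : IsPartition l) (hcl : Closed ℓ l) (hne : l ≠ []) :
    ∀ v, (∃ b, b < l.length ∧ beta l b = v) →
      v % ℓ = (beta l (l.length - 1) + ℓ - 1) % ℓ → False := by
  intro v
  induction v using Nat.strong_induction_on with
  | _ v ih =>
    rintro ⟨b, hb, rfl⟩ hr
    have hn : 1 ≤ l.length := List.length_pos_iff.2 hne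
    have hm : l.length - 1 < l.length := by omega
    have hbm := beta_min hp hb
    have h1 : 1 ≤ beta l (l.length - 1) := by
      have := lam_pos hp hm
      unfold beta
      omega
    have h2 : beta l (l.length - 1) < ℓ := beta_last_lt hℓ hp hcl hne
    have hr' : (beta l (l.length - 1) + ℓ - 1) % ℓ = beta l (l.length - 1) - 1 := by
      have he : beta l (l.length - 1) + ℓ - 1 = (beta l (l.length - 1) - 1) + ℓ := by omega
      rw [he, Nat.add_mod_right, Nat.mod_eq_of_lt (by omega)]
    rcases Nat.lt_or_ge (beta l b) ℓ with h | h
    · rw [Nat.mod_eq_of_lt h, hr'] at hr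
      omega
    · obtain ⟨b', hb', hbv'⟩ := hcl b hb h
      apply ih (beta l b - ℓ) (by omega) ⟨b', hb', hbv'⟩
      rw [← hr]
      have he : beta l b = (beta l b - ℓ) + ℓ := by omega
      conv_rhs => rw [he]
      rw [Nat.add_mod_right]

lemma removable (hℓ : 2 ≤ ℓ) (hp : IsPartition l) (hc : IsCore ℓ l) (hne : l ≠ []) :
    ∀ a, a < l.length → ((l.getD a 0 : ℤ) - (a + 1)) % ℓ = bottomRes ℓ l →
      l.getD (a + 1) 0 < l.getD a 0 := by
  intro a ha hres
  have hcl := core_to_closed (by omega) hp hc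
  have hn : 1 ≤ l.length := List.length_pos_iff.2 hne
  rcases Nat.lt_or_ge (a + 1) l.length with h1 | h1
  · by_contra hlt
    push_neg at hlt
    have hle := lam_anti hp (show a ≤ a + 1 by omega)
    have hbeq : beta l (a + 1) = beta l a - 1 := by
      unfold beta lam at *
      omega
    have hra := (res_iff ℓ hne ha).mp hres
    apply chain (by omega) hp hcl hne (beta l (a + 1)) ⟨a + 1, h1, rfl⟩
    have hba1 : 1 ≤ beta l a := by
      have := lam_pos hp ha
      unfold beta
      omega
    calc beta l (a + 1) % ℓ = (beta l a - 1 + ℓ) % ℓ := by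
          rw [hbeq, Nat.add_mod_right]
      _ = (beta l a + (ℓ - 1)) % ℓ := by congr 1; omega
      _ = (beta l a % ℓ + (ℓ - 1) % ℓ) % ℓ := by rw [Nat.add_mod]
      _ = (beta l (l.length - 1) % ℓ + (ℓ - 1) % ℓ) % ℓ := by rw [hra]
      _ = (beta l (l.length - 1) + (ℓ - 1)) % ℓ := by rw [← Nat.add_mod]
      _ = (beta l (l.length - 1) + ℓ - 1) % ℓ := by congr 1; omega
  · have h0 : l.getD (a + 1) 0 = 0 := List.getD_eq_default _ _ (by omega)
    have := lam_pos hp ha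
    unfold lam at this
    omega

/-- The row-shrinking function. -/
def ff (ℓ : ℕ) (l : List ℕ) (a : ℕ) : ℕ :=
  if ((l.getD a 0 : ℤ) - (a + 1)) % ℓ = bottomRes ℓ l then l.getD a 0 - 1 else l.getD a 0

lemma removeRes_eq (ℓ : ℕ) (l : List ℕ) :
    removeRes ℓ l = ((List.range l.length).map (ff ℓ l)).filter (fun x => decide (0 < x)) := rfl

lemma getD_map_range {f : ℕ → ℕ} {n a : ℕ} (h : a < n) :
    ((List.range n).map f).getD a 0 = f a := by
  have h' : a < ((List.range n).map f).length := by simpa using h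
  rw [List.getD_eq_getElem?_getD, List.getElem?_eq_getElem h']
  simp

lemma sorted_map_range {f : ℕ → ℕ} {n : ℕ} (h : ∀ i, i + 1 < n → f (i + 1) ≤ f i) :
    ((List.range n).map f).Pairwise (· ≥ ·) := by
  have key : ∀ j, j < n → ∀ i, i ≤ j → f j ≤ f i := by
    intro j hj
    induction j with
    | zero =>
      intro i hi
      have : i = 0 := by omega
      subst this
      exact le_refl _
    | succ j ihj =>
      intro i hi
      rcases Nat.eq_or_lt_of_le hi with rfl | h'
      · exact le_refl _
      · exact le_trans (h j hj) (ihj (by omega) i (by omega))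
  rw [List.pairwise_map, List.pairwise_iff_get]
  intro i j hij
  simp only [List.get_eq_getElem, List.getElem_range]
  exact key j.1 (by simpa using j.isLt) i.1 (le_of_lt hij)

lemma ff_le (ℓ : ℕ) (a : ℕ) : ff ℓ l a ≤ l.getD a 0 := by
  unfold ff
  split <;> omega

lemma ff_step (hℓ : 2 ≤ ℓ) (hp : IsPartition l) (hc : IsCore ℓ l) (hne : l ≠ [])
    (hi : a + 1 < l.length) : ff ℓ l (a + 1) ≤ ff ℓ l a := by
  have h2 := ff_le (l := l) ℓ (a + 1)
  have h3 : l.getD (a + 1) 0 ≤ ff ℓ l a := by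
    unfold ff
    split
    · next hP =>
      have := removable hℓ hp hc hne a (by omega) hP
      omega
    · next hP =>
      have := lam_anti hp (show a ≤ a + 1 by omega)
      unfold lam at this
      omega
  omega

lemma part_removeRes (hℓ : 2 ≤ ℓ) (hp : IsPartition l) (hc : IsCore ℓ l) (hne : l ≠ []) :
    IsPartition (removeRes ℓ l) := by
  constructor
  · rw [removeRes_eq]
    exact List.Pairwise.sublist List.filter_sublist
      (sorted_map_range (fun i hi => ff_step hℓ hp hc hne hi))
  · intro x hx
    rw [removeRes_eq] at hx
    have := List.of_mem_filter hx
    simpa using this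

lemma removeRes_struct (hℓ : 2 ≤ ℓ) (hp : IsPartition l) (hc : IsCore ℓ l) (hne : l ≠ []) :
    ∃ d, d ≤ 1 ∧ (removeRes ℓ l).length + d = l.length ∧
      (∀ a, a < (removeRes ℓ l).length → (removeRes ℓ l).getD a 0 = ff ℓ l a) ∧
      (d = 1 → l.getD (l.length - 1) 0 = 1) := by
  have hn : 1 ≤ l.length := List.length_pos_iff.2 hne
  by_cases hcase : l.getD (l.length - 1) 0 = 1
  · -- bottom row has one box: it disappears
    have hffm : ff ℓ l (l.length - 1) = 0 := by
      unfold ff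
      rw [if_pos (P_last ℓ hne)]
      omega
    have hpos : ∀ x ∈ (List.range (l.length - 1)).map (ff ℓ l), decide (0 < x) = true := by
      intro x hx
      simp only [List.mem_map, List.mem_range] at hx
      obtain ⟨a, haa, rfl⟩ := hx
      simp only [decide_eq_true_eq]
      unfold ff
      split
      · next hP =>
        have h1 := removable hℓ hp hc hne a (by omega) hP
        have h2 := lam_pos hp (show a + 1 < l.length by omega)
        unfold lam at h2
        omega
      · next hP =>
        have := lam_pos hp (show a < l.length by omega)
        unfold lam at this
        omega
    have hsplit : List.range l.length = List.range (l.length - 1) ++ [l.length - 1] := by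
      conv_lhs => rw [show l.length = (l.length - 1) + 1 by omega]
      rw [List.range_succ]
    have hl'' : removeRes ℓ l = (List.range (l.length - 1)).map (ff ℓ l) := by
      rw [removeRes_eq, hsplit, List.map_append, List.filter_append,
        List.filter_eq_self.mpr hpos]
      simp [hffm]
    refine ⟨1, le_refl 1, ?_, ?_, fun _ => hcase⟩
    · rw [hl'']
      simp
      omega
    · intro a ha
      rw [hl''] at ha ⊢
      simp only [List.length_map, List.length_range] at ha
      rw [getD_map_range ha]
  · -- bottom row has at least two boxes: no row disappears
    have hcase' : 2 ≤ l.getD (l.length - 1) 0 := by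
      have := lam_pos hp (show l.length - 1 < l.length by omega)
      unfold lam at this
      omega
    have hpos : ∀ x ∈ (List.range l.length).map (ff ℓ l), decide (0 < x) = true := by
      intro x hx
      simp only [List.mem_map, List.mem_range] at hx
      obtain ⟨a, haa, rfl⟩ := hx
      simp only [decide_eq_true_eq]
      have hmono := lam_anti hp (show a ≤ l.length - 1 by omega)
      unfold lam at hmono
      unfold ff
      split <;> omega
    have hl'' : removeRes ℓ l = (List.range l.length).map (ff ℓ l) := by
      rw [removeRes_eq, List.filter_eq_self.mpr hpos]
    refine ⟨0, by omega, ?_, ?_, by omega⟩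
    · rw [hl'']
      simp
    · intro a ha
      rw [hl''] at ha ⊢
      simp only [List.length_map, List.length_range] at ha
      rw [getD_map_range ha]

lemma closed_removeRes (hℓ : 2 ≤ ℓ) (hp : IsPartition l) (hc : IsCore ℓ l) (hne : l ≠ []) :
    Closed ℓ (removeRes ℓ l) := by
  have hn : 1 ≤ l.length := List.length_pos_iff.2 hne
  have hcl := core_to_closed (by omega) hp hc
  obtain ⟨d, hd1, hlen, hgetD, hdB⟩ := removeRes_struct hℓ hp hc hne
  set l' := removeRes ℓ l with hl'
  intro a ha hla
  have hban : a < l.length := by omega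
  have hbeta' : ∀ x, x < l'.length → beta l' x + d +
      (if ((l.getD x 0 : ℤ) - (x + 1)) % ℓ = bottomRes ℓ l then 1 else 0) = beta l x := by
    intro x hx
    have hg := hgetD x hx
    have hlx : 1 ≤ l.getD x 0 := by
      have := lam_pos hp (show x < l.length by omega)
      unfold lam at this
      exact this
    have e1 : beta l' x = l'.getD x 0 + (l'.length - 1 - x) := rfl
    have e2 : beta l x = l.getD x 0 + (l.length - 1 - x) := rfl
    rw [e1, e2, hg]
    unfold ff
    by_cases hP : ((l.getD x 0 : ℤ) - (x + 1)) % ℓ = bottomRes ℓ l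
    · rw [if_pos hP, if_pos hP]
      omega
    · rw [if_neg hP, if_neg hP]
      omega
  have hAa := hbeta' a ha
  have hchia : (if ((l.getD a 0 : ℤ) - (a + 1)) % ℓ = bottomRes ℓ l then 1 else 0) ≤ 1 := by
    split <;> omega
  have hba : ℓ ≤ beta l a := by omega
  obtain ⟨b, hb, hbv⟩ := hcl a hban hba
  have hmod : beta l b % ℓ = beta l a % ℓ := by
    have he : beta l a = (beta l a - ℓ) + ℓ := by omega
    rw [hbv]
    conv_rhs => rw [he]
    rw [Nat.add_mod_right]
  have hPiff : (((l.getD b 0 : ℤ) - (b + 1)) % ℓ = bottomRes ℓ l) ↔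
      (((l.getD a 0 : ℤ) - (a + 1)) % ℓ = bottomRes ℓ l) := by
    rw [res_iff ℓ hne hb, res_iff ℓ hne hban, hmod]
  have hbl' : b < l'.length := by
    rcases Nat.le_one_iff_eq_zero_or_eq_one.mp hd1 with rfl | rfl
    · omega
    · have hlam1 := hdB rfl
      have hbm1 : beta l (l.length - 1) = 1 := by rw [beta_last_eq, hlam1]
      by_contra hge
      have hbm : b = l.length - 1 := by omega
      subst hbm
      by_cases hPa : ((l.getD a 0 : ℤ) - (a + 1)) % ℓ = bottomRes ℓ l
      · rw [if_pos hPa] at hAa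
        omega
      · exact hPa (hPiff.mp (P_last ℓ hne))
  have hAb := hbeta' b hbl'
  refine ⟨b, hbl', ?_⟩
  by_cases hPa : ((l.getD a 0 : ℤ) - (a + 1)) % ℓ = bottomRes ℓ l
  · rw [if_pos hPa] at hAa
    rw [if_pos (hPiff.mpr hPa)] at hAb
    omega
  · rw [if_neg hPa] at hAa
    rw [if_neg (fun h => hPa (hPiff.mp h))] at hAb
    omega

end S4

/-- Every end-of-row box whose residue equals that of the bottom row's last box is
also at the end of its column (removable), and removing all such boxes again
yields an ℓ-core. -/
theorem stmt4 (ℓ : ℕ) (hℓ : 2 ≤ ℓ) (l : List ℕ)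
    (hp : IsPartition l) (hc : IsCore ℓ l) (hne : l ≠ []) :
    (∀ a < l.length, ((l.getD a 0 : ℤ) - (a + 1)) % ℓ = bottomRes ℓ l →
        l.getD (a + 1) 0 < l.getD a 0) ∧
    IsPartition (removeRes ℓ l) ∧ IsCore ℓ (removeRes ℓ l) := by
  refine ⟨S4.removable hℓ hp hc hne, S4.part_removeRes hℓ hp hc hne, ?_⟩
  exact S4.closed_to_core (by omega) (S4.part_removeRes hℓ hp hc hne)
    (S4.closed_removeRes hℓ hp hc hne)
end

section
/- Let λ be an ℓ-core with balanced flush abacus given by the root-lattice vector (a₁,...,a_ℓ) (a_i is the largest bead level on runner i−1, Σ a_i = 0). Let a_i be the rightmost occurrence of the maximum coordinate. Then the largest part of λ equals (a_i − 1)ℓ + i. -/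
/-- Bead positions of the flush abacus with ℓ runners whose largest bead level on
runner i is `a i`. -/
def Beads (ℓ : ℕ) (a : Fin ℓ → ℤ) : Set ℤ :=
  {x | ∃ i : Fin ℓ, ∃ r : ℤ, r ≤ a i ∧ x = r * ℓ + (i : ℤ)}

/-- The (doubly infinite) beta-number set of a partition: its first-column hook
lengths together with all negative integers. -/
def BetaSet (l : List ℕ) : Set ℤ :=
  {x | (∃ a < l.length, x = (hook l a 1 : ℤ)) ∨ x < 0}

/-- The abacus determined by `a` represents the partition `l`
(up to the normalizing shift `s`). -/
def Corresponds (ℓ : ℕ) (a : Fin ℓ → ℤ) (l : List ℕ) : Prop :=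
  ∃ s : ℤ, Beads ℓ a = (fun x => x + s) '' BetaSet l

lemma len_filter_lt (b : ℕ) : ∀ n, ((List.range n).filter (fun i => decide (b < i))).length = n - (b+1) := by
  intro n
  induction n with
  | zero => simp
  | succ n ih =>
    rw [List.range_succ, List.filter_append, List.length_append, ih]
    by_cases h : b < n
    · simp [h]; omega
    · simp [h]; omega

lemma hook_formula (l : List ℕ) (hpos : ∀ x ∈ l, 0 < x) {b : ℕ} (hb : b < l.length) :
    hook l b 1 = l.getD b 0 + (l.length - (b+1)) := by
  unfold hook
  have h1 : (List.range l.length).filter (fun i => decide (b < i ∧ 1 ≤ l.getD i 0))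
      = (List.range l.length).filter (fun i => decide (b < i)) := by
    apply List.filter_congr
    intro i hi
    simp only [List.mem_range] at hi
    have : 0 < l.getD i 0 := by
      rw [List.getD_eq_getElem l 0 hi]
      exact hpos _ (List.getElem_mem hi)
    simp only [decide_eq_decide]
    omega
  rw [h1, len_filter_lt]
  have : 0 < l.getD b 0 := by
    rw [List.getD_eq_getElem l 0 hb]
    exact hpos _ (List.getElem_mem hb)
  omega

lemma getD_mono_s7 (l : List ℕ) (hs : l.Pairwise (· ≥ ·)) {b c : ℕ} (hbc : b ≤ c) (hc : c < l.length) :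
    l.getD c 0 ≤ l.getD b 0 := by
  rw [List.getD_eq_getElem l 0 hc, List.getD_eq_getElem l 0 (lt_of_le_of_lt hbc hc)]
  rcases eq_or_lt_of_le hbc with rfl | h
  · exact le_refl _
  · exact List.pairwise_iff_getElem.mp hs b c (lt_of_le_of_lt hbc hc) hc h

lemma hook_lt (l : List ℕ) (hsort : l.Pairwise (· ≥ ·)) (hpos : ∀ x ∈ l, 0 < x)
    {b b' : ℕ} (hbb : b < b') (hb' : b' < l.length) : hook l b' 1 < hook l b 1 := by
  have h1 := hook_formula l hpos (lt_trans hbb hb')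
  have h2 := hook_formula l hpos hb'
  have h3 := getD_mono_s7 l hsort (le_of_lt hbb) hb'
  omega

lemma runner_unique {ℓ : ℕ} (hl : (1:ℤ) ≤ ℓ) {r r' j j' : ℤ} (hj : 0 ≤ j) (hj2 : j < ℓ)
    (hj' : 0 ≤ j') (hj2' : j' < ℓ) (h : r * ℓ + j = r' * ℓ + j') : r = r' ∧ j = j' := by
  have h1 : (r - r') * ℓ = j' - j := by ring_nf; linarith [h]
  have hr : r = r' := by
    by_contra hne
    rcases lt_or_gt_of_ne hne with h2 | h2
    · have h3 : r - r' ≤ -1 := by omega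
      nlinarith
    · have h3 : 1 ≤ r - r' := by omega
      nlinarith
  subst hr
  exact ⟨rfl, by linarith⟩


/-- If the balanced flush abacus of the ℓ-core l is given by a (with a i the
rightmost maximum coordinate, 0-based), then λ₁ = (a_i - 1)ℓ + (i+1). -/
theorem stmt7 (ℓ : ℕ) (hℓ : 2 ≤ ℓ) (a : Fin ℓ → ℤ) (ha : ∑ i, a i = 0)
    (l : List ℕ) (hp : IsPartition l) (hc : IsCore ℓ l) (hcor : Corresponds ℓ a l)
    (i : Fin ℓ) (hmax : ∀ j, a j ≤ a i) (hright : ∀ j, i < j → a j < a i) :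
    (l.headD 0 : ℤ) = (a i - 1) * ℓ + ((i : ℕ) + 1) := by
  obtain ⟨hsort, hpos⟩ := hp
  obtain ⟨s, hs⟩ := hcor
  have hl0 : (0:ℤ) < ℓ := by exact_mod_cast Nat.lt_of_lt_of_le Nat.zero_lt_two hℓ
  have hl1 : (1:ℤ) ≤ ℓ := hl0
  have hheadD0 : (0:ℤ) ≤ (l.headD 0 : ℤ) := Int.natCast_nonneg _
  -- choose a large K
  obtain ⟨K, hKa, hK1, hKs⟩ :
      ∃ K : ℤ, (∀ j, |a j| + 1 ≤ K) ∧ 1 ≤ K ∧ |s| + (l.headD 0 : ℤ) + l.length + 1 ≤ K := by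
    refine ⟨|s| + (l.headD 0 : ℤ) + l.length + (∑ j, |a j|) + 1, fun j => ?_, ?_, ?_⟩
    · have h1 : |a j| ≤ ∑ j, |a j| :=
        Finset.single_le_sum (fun k _ => abs_nonneg (a k)) (Finset.mem_univ j)
      have h2 : (0:ℤ) ≤ |s| := abs_nonneg _
      have h3 : (0:ℤ) ≤ (l.length : ℤ) := Int.natCast_nonneg _
      linarith
    · have h1 : (0:ℤ) ≤ ∑ j, |a j| := Finset.sum_nonneg fun k _ => abs_nonneg _
      have h2 : (0:ℤ) ≤ |s| := abs_nonneg _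
      have h3 : (0:ℤ) ≤ (l.length : ℤ) := Int.natCast_nonneg _
      linarith
    · have h1 : (0:ℤ) ≤ ∑ j, |a j| := Finset.sum_nonneg fun k _ => abs_nonneg _
      linarith
  have hKl : K ≤ K * ℓ := le_mul_of_one_le_right (by linarith) hl1
  have hsleK : s ≤ K - 1 := by have := le_abs_self s; linarith
  have hsgeK : -(K-1) ≤ s := by have := neg_abs_le s; linarith
  have hheadD : l.headD 0 = l.getD 0 0 := by cases l <;> rfl
  have hookbound : ∀ b, b < l.length → (hook l b 1 : ℤ) ≤ (l.headD 0 : ℤ) + l.length - 1 := by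
    intro b hb
    have h1 := hook_formula l hpos hb
    have h2 : l.getD b 0 ≤ l.getD 0 0 := getD_mono_s7 l hsort (Nat.zero_le b) hb
    rw [hheadD]
    omega
  -- the two finsets
  set F1 : Finset ℤ :=
    Finset.univ.biUnion (fun j : Fin ℓ => (Finset.Ico (-K) (a j + 1)).image (fun r => r * (ℓ:ℤ) + (j : ℤ))) with hF1
  set F2 : Finset ℤ :=
    Finset.Ico (-(K*ℓ)) s ∪ (Finset.range l.length).image (fun b => (hook l b 1 : ℤ) + s) with hF2
  have hmem1 : ∀ x : ℤ, x ∈ F1 ↔ (x ∈ Beads ℓ a ∧ -(K*ℓ) ≤ x ∧ x < K*ℓ) := by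
    intro x
    simp only [hF1, Finset.mem_biUnion, Finset.mem_univ, true_and, Finset.mem_image,
      Finset.mem_Ico, Beads, Set.mem_setOf_eq]
    constructor
    · rintro ⟨j, r, ⟨hr1, hr2⟩, rfl⟩
      have hjl : ((j:ℕ):ℤ) < ℓ := by exact_mod_cast j.isLt
      have hj0 : (0:ℤ) ≤ ((j:ℕ):ℤ) := Int.natCast_nonneg _
      have haj : a j ≤ K - 1 := by have := hKa j; have := le_abs_self (a j); linarith
      refine ⟨⟨j, r, by omega, rfl⟩, ?_, ?_⟩
      · have h1 : -K * ℓ ≤ r * ℓ := mul_le_mul_of_nonneg_right hr1 hl0.le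
        have h2 : -K * ℓ = -(K*ℓ) := by ring
        linarith
      · have hrK : r ≤ K - 1 := by omega
        have h1 : r * ℓ ≤ (K-1) * ℓ := mul_le_mul_of_nonneg_right hrK hl0.le
        have h2 : (K-1) * ℓ = K*ℓ - ℓ := by ring
        linarith
    · rintro ⟨⟨j, r, hr, rfl⟩, hlo, hhi⟩
      have hjl : ((j:ℕ):ℤ) < ℓ := by exact_mod_cast j.isLt
      have hj0 : (0:ℤ) ≤ ((j:ℕ):ℤ) := Int.natCast_nonneg _
      refine ⟨j, r, ⟨?_, by omega⟩, rfl⟩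
      have h1 : (-K - 1) * ℓ < r * ℓ := by
        have h2 : (-K-1) * ℓ = -(K*ℓ) - ℓ := by ring
        linarith
      have := lt_of_mul_lt_mul_right h1 hl0.le
      omega
  have hmem2 : ∀ x : ℤ, x ∈ F2 ↔
      (x ∈ (fun y => y + s) '' BetaSet l ∧ -(K*ℓ) ≤ x ∧ x < K*ℓ) := by
    intro x
    simp only [hF2, Finset.mem_union, Finset.mem_Ico, Finset.mem_image, Finset.mem_range,
      Set.mem_image, BetaSet, Set.mem_setOf_eq]
    constructor
    · rintro (⟨h1, h2⟩ | ⟨b, hb, rfl⟩)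
      · exact ⟨⟨x - s, Or.inr (by omega), by ring⟩, h1, by linarith⟩
      · have hhb := hookbound b hb
        have hhb0 : (0:ℤ) ≤ (hook l b 1 : ℤ) := Int.natCast_nonneg _
        have hnK : (l.length : ℤ) ≤ K - 1 - |s| - (l.headD 0 : ℤ) := by linarith
        have hsabs := le_abs_self s
        refine ⟨⟨(hook l b 1 : ℤ), Or.inl ⟨b, hb, rfl⟩, rfl⟩, by linarith, by linarith⟩
    · rintro ⟨⟨y, (⟨b, hb, rfl⟩ | hneg), rfl⟩, hlo, hhi⟩
      · exact Or.inr ⟨b, hb, rfl⟩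
      · exact Or.inl ⟨hlo, by linarith⟩
  have hfin : F1 = F2 := by
    ext x
    rw [hmem1 x, hmem2 x, hs]
  -- card of F1
  have hcard1 : ((F1.card : ℤ)) = ℓ * (1 + K) := by
    rw [hF1, Finset.card_biUnion]
    · have hc1 : ∀ j : Fin ℓ,
          ((Finset.Ico (-K) (a j + 1)).image (fun r => r * (ℓ:ℤ) + (j : ℤ))).card
            = (a j + 1 + K).toNat := by
        intro j
        rw [Finset.card_image_of_injective _ (fun x y h => by
          have h2 : x * (ℓ:ℤ) = y * ℓ := by linarith
          exact mul_right_cancel₀ (by linarith : (ℓ:ℤ) ≠ 0) h2), Int.card_Ico]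
        congr 1; ring
      rw [Finset.sum_congr rfl (fun j _ => hc1 j)]
      have h2 : ∀ j : Fin ℓ, ((a j + 1 + K).toNat : ℤ) = a j + 1 + K := fun j =>
        Int.toNat_of_nonneg (by have := hKa j; have := neg_abs_le (a j); linarith)
      calc ((∑ j, (a j + 1 + K).toNat : ℕ) : ℤ) = ∑ j, ((a j + 1 + K).toNat : ℤ) := by
            push_cast; ring
        _ = ∑ j, (a j + (1 + K)) := by
            refine Finset.sum_congr rfl (fun j _ => ?_)
            rw [h2 j]; ring
        _ = (∑ j, a j) + ∑ _j : Fin ℓ, (1 + K) := by rw [Finset.sum_add_distrib]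
        _ = ℓ * (1 + K) := by
            rw [ha, Finset.sum_const, Finset.card_univ, Fintype.card_fin, zero_add,
              nsmul_eq_mul]
    · intro j _ j' _ hne
      rw [Function.onFun, Finset.disjoint_left]
      intro x hx hx'
      simp only [Finset.mem_image, Finset.mem_Ico] at hx hx'
      obtain ⟨r, hr, rfl⟩ := hx
      obtain ⟨r', hr', heq⟩ := hx'
      have hjl : ((j:ℕ):ℤ) < ℓ := by exact_mod_cast j.isLt
      have hjl' : ((j':ℕ):ℤ) < ℓ := by exact_mod_cast j'.isLt
      have hu := runner_unique hl1 (Int.natCast_nonneg _) hjl' (Int.natCast_nonneg _) hjl heq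
      exact hne (Fin.ext (by exact_mod_cast hu.2.symm))
  -- card of F2
  have hsKl0 : (0:ℤ) ≤ s + K * ℓ := by linarith
  have hcard2 : ((F2.card : ℤ)) = (s + K*ℓ) + l.length := by
    rw [hF2, Finset.card_union_of_disjoint, Int.card_Ico,
      Finset.card_image_of_injOn]
    · rw [Finset.card_range]
      push_cast
      rw [Int.toNat_of_nonneg (by linarith : (0:ℤ) ≤ s - -(K*ℓ))]
      ring
    · intro b hb b' hb' heq
      simp only [Finset.coe_range, Set.mem_Iio] at hb hb'
      replace heq : (hook l b 1 : ℤ) + s = (hook l b' 1 : ℤ) + s := heq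
      by_contra hne
      rcases Nat.lt_or_ge b b' with h | h
      · have := hook_lt l hsort hpos h hb'
        have : (hook l b' 1 : ℤ) < (hook l b 1 : ℤ) := by exact_mod_cast this
        omega
      · have hbb : b' < b := by omega
        have := hook_lt l hsort hpos hbb hb
        have : (hook l b 1 : ℤ) < (hook l b' 1 : ℤ) := by exact_mod_cast this
        omega
    · rw [Finset.disjoint_left]
      intro x hx hx'
      simp only [Finset.mem_Ico] at hx
      simp only [Finset.mem_image, Finset.mem_range] at hx'
      obtain ⟨b, hb, rfl⟩ := hx'
      have : (0:ℤ) ≤ (hook l b 1 : ℤ) := Int.natCast_nonneg _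
      omega
  have hcards : (ℓ:ℤ) * (1 + K) = (s + K*ℓ) + l.length := by
    rw [← hcard1, ← hcard2, hfin]
  have hsval : s = (ℓ:ℤ) - l.length := by
    have hr : (ℓ:ℤ) * (1 + K) = ℓ + K * ℓ := by ring
    linarith
  -- max of Beads
  have hM2 : ∀ x ∈ Beads ℓ a, x ≤ a i * ℓ + (i:ℤ) := by
    rintro x ⟨j, r, hr, rfl⟩
    have hjl : ((j:ℕ):ℤ) < ℓ := by exact_mod_cast j.isLt
    have hj0 : (0:ℤ) ≤ ((j:ℕ):ℤ) := Int.natCast_nonneg _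
    have hi0 : (0:ℤ) ≤ ((i:ℕ):ℤ) := Int.natCast_nonneg _
    have hrl : r * ℓ ≤ a j * ℓ := mul_le_mul_of_nonneg_right hr hl0.le
    by_cases hji : (j:ℕ) ≤ (i:ℕ)
    · have h1 : a j * ℓ ≤ a i * ℓ := mul_le_mul_of_nonneg_right (hmax j) hl0.le
      have h2 : ((j:ℕ):ℤ) ≤ ((i:ℕ):ℤ) := by exact_mod_cast hji
      linarith
    · have hij : i < j := by
        rw [Fin.lt_def]; omega
      have h1 : a j ≤ a i - 1 := by have := hright j hij; omega
      have h2 : a j * ℓ ≤ (a i - 1) * ℓ := mul_le_mul_of_nonneg_right h1 hl0.le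
      have h3 : (a i - 1) * ℓ = a i * ℓ - ℓ := by ring
      linarith
  by_cases hnz : l.length = 0
  · -- empty partition case
    have hlnil : l = [] := List.length_eq_zero_iff.mp hnz
    have hnz' : ((l.length : ℕ):ℤ) = 0 := by exact_mod_cast hnz
    have hsl : s = ℓ := by omega
    have hmem : ∀ x : ℤ, x ∈ Beads ℓ a ↔ x < ℓ := by
      intro x
      rw [hs]
      simp only [Set.mem_image, BetaSet, Set.mem_setOf_eq, hnz]
      constructor
      · rintro ⟨y, (⟨b, hb, rfl⟩ | hy), rfl⟩
        · omega
        · linarith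
      · intro hx
        exact ⟨x - s, Or.inr (by omega), by ring⟩
    have h1 : a i * ℓ + (i:ℤ) < ℓ := (hmem _).mp ⟨i, a i, le_refl _, rfl⟩
    have h2 : ((ℓ:ℤ) - 1) ∈ Beads ℓ a := (hmem _).mpr (by linarith)
    obtain ⟨j, r, hr, hje⟩ := h2
    have hjl : ((j:ℕ):ℤ) < ℓ := by exact_mod_cast j.isLt
    have hj0 : (0:ℤ) ≤ ((j:ℕ):ℤ) := Int.natCast_nonneg _
    have heq0 : r * (ℓ:ℤ) + (j:ℤ) = 0 * ℓ + ((ℓ:ℤ) - 1) := by linarith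
    have hu := runner_unique hl1 hj0 hjl (by linarith) (by linarith) heq0
    have haj : 0 ≤ a j := hu.1 ▸ hr
    have hi0 : (0:ℤ) ≤ ((i:ℕ):ℤ) := Int.natCast_nonneg _
    have hil : ((i:ℕ):ℤ) < ℓ := by exact_mod_cast i.isLt
    have hai0 : a i ≤ 0 := by
      by_contra hpos'
      push_neg at hpos'
      have h3 : 1 * (ℓ:ℤ) ≤ a i * ℓ := mul_le_mul_of_nonneg_right (by omega) hl0.le
      linarith
    have haiv : a i = 0 := le_antisymm hai0 (le_trans haj (hmax j))
    have hiv : ((i:ℕ):ℤ) = ℓ - 1 := by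
      by_contra hne
      have hij : i ≠ j := by
        intro hij'
        exact hne (by rw [hij']; exact hu.2)
      rcases hij.lt_or_gt with h | h
      · have := hright j h
        omega
      · have hlt : (j:ℕ) < (i:ℕ) := h
        have : ((j:ℕ):ℤ) < ((i:ℕ):ℤ) := by exact_mod_cast hlt
        omega
    rw [hlnil]
    simp only [List.headD_nil]
    push_cast
    rw [haiv, hiv]
    ring
  · -- nonempty case
    have hn1 : 0 < l.length := Nat.pos_of_ne_zero hnz
    have hM1 : (hook l 0 1 : ℤ) + s ∈ Beads ℓ a := by
      rw [hs]
      exact ⟨(hook l 0 1 : ℤ), Or.inl ⟨0, hn1, rfl⟩, rfl⟩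
    have hub : (hook l 0 1 : ℤ) + s ≤ a i * ℓ + (i:ℤ) := hM2 _ hM1
    have hMmem : (a i * ℓ + (i:ℤ)) ∈ (fun y => y + s) '' BetaSet l :=
      hs ▸ ⟨i, a i, le_refl _, rfl⟩
    obtain ⟨y, hy, hye⟩ := hMmem
    replace hye : y + s = a i * ↑ℓ + ((i:ℕ):ℤ) := hye
    have hyle : y ≤ (hook l 0 1 : ℤ) := by
      rcases hy with ⟨b, hb, rfl⟩ | hy
      · have hh : hook l b 1 ≤ hook l 0 1 := by
          rcases Nat.eq_zero_or_pos b with rfl | hb0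
          · exact le_refl _
          · exact (hook_lt l hsort hpos hb0 hb).le
        exact_mod_cast hh
      · have : (0:ℤ) ≤ (hook l 0 1 : ℤ) := Int.natCast_nonneg _
        linarith
    have hEq : a i * ℓ + (i:ℤ) = (hook l 0 1 : ℤ) + s := by
      have : a i * ℓ + (i:ℤ) ≤ (hook l 0 1 : ℤ) + s := by
        rw [← hye]; linarith
      linarith
    have hform := hook_formula l hpos hn1
    have hhook0 : (hook l 0 1 : ℤ) = (l.headD 0 : ℤ) + l.length - 1 := by
      rw [hheadD]
      omega
    have hring : (a i - 1) * (ℓ:ℤ) = a i * ℓ - ℓ := by ring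
    push_cast
    linarith [hEq, hsval, hhook0]
end

section
/- Under the bijection π between the root lattice and ℓ-cores, all ℓ-cores λ with λ₁ = k > 0 correspond to lattice points lying on the affine hyperplane {(a₁,...,a_ℓ) : Σ a_j = 0 and a_i = ⌈k/ℓ⌉}, where i ∈ {1,...,ℓ} satisfies i ≡ k mod ℓ. -/
lemma filter_range_lt (m a : ℕ) (ha : a < m) :
    ((List.range m).filter (fun i => decide (a < i))).length = m - 1 - a := by
  induction m with
  | zero => omega
  | succ n ih =>
    rw [List.range_succ, List.filter_append, List.length_append]
    by_cases h : a < n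
    · rw [ih h]; simp [h]; omega
    · have : a = n := by omega
      subst this; simp; omega

lemma getD_pos_s9 (l : List ℕ) (hp : IsPartition l) (a : ℕ) (ha : a < l.length) : 1 ≤ l.getD a 0 := by
  rw [List.getD_eq_getElem l 0 ha]
  exact hp.2 _ (List.getElem_mem ha)

lemma getD_anti (l : List ℕ) (hp : IsPartition l) (a b : ℕ) (hab : a ≤ b) (hb : b < l.length) :
    l.getD b 0 ≤ l.getD a 0 := by
  have ha : a < l.length := lt_of_le_of_lt hab hb
  rw [List.getD_eq_getElem l 0 ha, List.getD_eq_getElem l 0 hb]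
  rcases eq_or_lt_of_le hab with h | h
  · subst h; rfl
  · exact List.pairwise_iff_getElem.mp hp.1 a b ha hb h

lemma hook_one_s9 (l : List ℕ) (hp : IsPartition l) (a : ℕ) (ha : a < l.length) :
    hook l a 1 = l.getD a 0 + (l.length - 1 - a) := by
  have h1 : ((List.range l.length).filter (fun i => decide (a < i ∧ 1 ≤ l.getD i 0))).length
      = ((List.range l.length).filter (fun i => decide (a < i))).length := by
    congr 1
    apply List.filter_congr
    intro x hx
    simp only [List.mem_range] at hx
    simp only [decide_eq_decide]
    have := getD_pos_s9 l hp x hx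
    tauto
  have h2 := getD_pos_s9 l hp a ha
  unfold hook
  rw [h1, filter_range_lt _ _ ha]
  omega

lemma runner_eq (ℓ : ℕ) (hℓ : 0 < ℓ) (r r' u v : ℤ) (hu : 0 ≤ u) (hu' : u < ℓ)
    (hv : 0 ≤ v) (hv' : v < ℓ) (h : r * ℓ + u = r' * ℓ + v) : r = r' ∧ u = v := by
  have h2 : (r - r') * ℓ = v - u := by ring_nf; linarith
  have hr : r = r' := by
    by_contra hne
    have h1 : 1 ≤ |r - r'| := Int.one_le_abs (by omega)
    have h3 : |r - r'| * ℓ = |v - u| := by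
      rw [← abs_of_nonneg (by positivity : (0:ℤ) ≤ (ℓ:ℤ)), ← abs_mul, h2]
    have hl : (ℓ:ℤ) ≤ |r - r'| * ℓ := by nlinarith [Int.natCast_pos.mpr hℓ]
    have : |v - u| < ℓ := by rw [abs_lt]; omega
    omega
  exact ⟨hr, by subst hr; linarith⟩

set_option maxHeartbeats 1000000 in
/-- Under π, all ℓ-cores with λ₁ = k > 0 lie on the affine hyperplane
a_i = ⌈k/ℓ⌉, where 1 ≤ i ≤ ℓ and i ≡ k (mod ℓ).  (Fin index i corresponds to
the coordinate i+1.) -/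
theorem stmt9 (ℓ k : ℕ) (hℓ : 2 ≤ ℓ) (hk : 0 < k)
    (a : Fin ℓ → ℤ) (ha : ∑ i, a i = 0)
    (l : List ℕ) (hp : IsPartition l) (hc : IsCore ℓ l) (hcor : Corresponds ℓ a l)
    (hl1 : l.headD 0 = k)
    (i : Fin ℓ) (hi : ((i : ℕ) + 1) % ℓ = k % ℓ) :
    a i = ((k + ℓ - 1) / ℓ : ℕ) := by
  classical
  obtain ⟨s, hs⟩ := hcor
  have hsmem : ∀ x : ℤ, x ∈ Beads ℓ a ↔ x - s ∈ BetaSet l := by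
    intro x
    rw [hs]
    simp only [Set.mem_image]
    constructor
    · rintro ⟨y, hy, rfl⟩
      simpa using hy
    · intro h
      exact ⟨x - s, h, by ring⟩
  set m := l.length with hm_def
  have hk0 : l.getD 0 0 = k := by
    cases l with
    | nil => simpa using hl1
    | cons x t => simpa using hl1
  have hm : 0 < m := by
    cases l with
    | nil => simp at hk0; omega
    | cons x t => simp [hm_def]
  set β : ℕ → ℤ := fun b => (l.getD b 0 : ℤ) + (m : ℤ) - 1 - b with hβ_def
  have hβ : ∀ b < m, (hook l b 1 : ℤ) = β b := by
    intro b hb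
    rw [hook_one_s9 l hp b hb]
    have := getD_pos_s9 l hp b hb
    simp only [hβ_def]
    push_cast
    omega
  have hβ0 : β 0 = (k : ℤ) + m - 1 := by
    simp only [hβ_def]
    rw [hk0]
    push_cast
    ring
  have hβpos : ∀ b < m, 1 ≤ β b := by
    intro b hb
    have := getD_pos_s9 l hp b hb
    simp only [hβ_def]; push_cast; omega
  have hβmax : ∀ b < m, β b ≤ β 0 := by
    intro b hb
    have h1 := getD_anti l hp 0 b (Nat.zero_le b) hb
    simp only [hβ_def]; push_cast; omega
  have hβinj : Set.InjOn β (Finset.range m : Set ℕ) := by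
    intro b hb c hc hbc
    simp only [Finset.coe_range, Set.mem_Iio] at hb hc
    rcases le_total b c with h1 | h1
    · have := getD_anti l hp b c h1 hc
      simp only [hβ_def] at hbc; omega
    · have := getD_anti l hp c b h1 hb
      simp only [hβ_def] at hbc; omega
  have hBmem : ∀ x : ℤ, x ∈ BetaSet l ↔ (∃ b < m, x = β b) ∨ x < 0 := by
    intro x
    constructor
    · rintro (⟨b, hb, rfl⟩ | hneg)
      · exact Or.inl ⟨b, hb, hβ b hb⟩
      · exact Or.inr hneg
    · rintro (⟨b, hb, rfl⟩ | hneg)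
      · exact Or.inl ⟨b, hb, (hβ b hb).symm⟩
      · exact Or.inr hneg
  have hBmax : ∀ x ∈ BetaSet l, x ≤ (k : ℤ) + m - 1 := by
    intro x hx
    rcases (hBmem x).mp hx with ⟨b, hb, rfl⟩ | hneg
    · rw [← hβ0]; exact hβmax b hb
    · omega
  -- window parameters
  set N : ℤ := |s| + (∑ j, |a j|) + 1 with hN_def
  have habssum : (0:ℤ) ≤ ∑ j, |a j| := Finset.sum_nonneg fun j _ => abs_nonneg (a j)
  have hN0 : 0 ≤ N := by have := abs_nonneg s; omega
  have hNs : -N ≤ s ∧ s ≤ N := by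
    have := abs_le.mp (le_refl |s|); omega
  have hNa : ∀ j, -N ≤ a j ∧ a j ≤ N := by
    intro j
    have h1 : |a j| ≤ ∑ j, |a j| :=
      Finset.single_le_sum (fun j _ => abs_nonneg (a j)) (Finset.mem_univ j)
    have h2 := abs_le.mp (le_refl |a j|)
    have h3 := abs_nonneg s
    omega
  set M : ℤ := N + k + m + 1 with hM_def
  have hℓ1 : (1:ℤ) ≤ (ℓ:ℤ) := by exact_mod_cast Nat.one_le_of_lt hℓ
  have hℓpos : (0:ℤ) < (ℓ:ℤ) := by omega
  have hM0 : 0 ≤ M := by omega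
  have hMN : N ≤ M - 1 := by omega
  have hMl : M ≤ M * ℓ := by
    have h := mul_le_mul_of_nonneg_left hℓ1 hM0
    linarith
  have hNl : N ≤ N * ℓ := by
    have h := mul_le_mul_of_nonneg_left hℓ1 hN0
    linarith
  set A : ℤ := -(N * ℓ) with hA_def
  set B : ℤ := M * ℓ with hB_def
  have hAs : A - s ≤ 0 := by simp only [hA_def]; omega
  have hBs : (k : ℤ) + m - 1 < B - s := by simp only [hB_def]; omega
  set S1 : Finset ℤ := (Finset.Ico A B).filter (· ∈ Beads ℓ a) with hS1_def
  set S2 : Finset ℤ := (Finset.Ico (A - s) (B - s)).filter (· ∈ BetaSet l) with hS2_def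
  have hshift : S1 = S2.image (· + s) := by
    ext x
    simp only [hS1_def, hS2_def, Finset.mem_image, Finset.mem_filter, Finset.mem_Ico]
    constructor
    · rintro ⟨⟨h1, h2⟩, h3⟩
      exact ⟨x - s, ⟨⟨by omega, by omega⟩, (hsmem x).mp h3⟩, by ring⟩
    · rintro ⟨y, ⟨⟨h1, h2⟩, hy⟩, rfl⟩
      refine ⟨⟨by omega, by omega⟩, (hsmem (y + s)).mpr (by simpa using hy)⟩
  have hcard12 : S1.card = S2.card := by
    rw [hshift]
    exact Finset.card_image_of_injective _ (add_left_injective s)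
  -- card of S2
  have hS2eq : S2 = Finset.Ico (A - s) 0 ∪ (Finset.range m).image β := by
    ext x
    simp only [hS2_def, Finset.mem_filter, Finset.mem_Ico, Finset.mem_union, Finset.mem_image,
      Finset.mem_range]
    constructor
    · rintro ⟨⟨h1, h2⟩, hx⟩
      rcases (hBmem x).mp hx with ⟨b, hb, rfl⟩ | hneg
      · exact Or.inr ⟨b, hb, rfl⟩
      · exact Or.inl ⟨h1, hneg⟩
    · rintro (⟨h1, h2⟩ | ⟨b, hb, rfl⟩)
      · exact ⟨⟨h1, by omega⟩, (hBmem x).mpr (Or.inr h2)⟩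
      · refine ⟨⟨?_, ?_⟩, (hBmem _).mpr (Or.inl ⟨b, hb, rfl⟩)⟩
        · have := hβpos b hb; omega
        · have h3 := hβmax b hb; rw [hβ0] at h3; omega
  have hdisj2 : Disjoint (Finset.Ico (A - s) 0) ((Finset.range m).image β) := by
    rw [Finset.disjoint_left]
    rintro x hx1 hx2
    simp only [Finset.mem_Ico] at hx1
    simp only [Finset.mem_image, Finset.mem_range] at hx2
    obtain ⟨b, hb, rfl⟩ := hx2
    have := hβpos b hb
    omega
  have hS2card : (S2.card : ℤ) = (s + N * ℓ) + m := by
    rw [hS2eq, Finset.card_union_of_disjoint hdisj2,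
      Finset.card_image_of_injOn (by simpa using hβinj), Finset.card_range, Int.card_Ico]
    push_cast [Int.toNat_of_nonneg (by omega : (0:ℤ) ≤ 0 - (A - s))]
    simp only [hA_def]
    ring
  -- card of S1
  have hcast : ∀ j : Fin ℓ, (0:ℤ) ≤ ((j:ℕ):ℤ) ∧ ((j:ℕ):ℤ) < (ℓ:ℤ) := by
    intro j
    constructor
    · exact_mod_cast Nat.zero_le (j:ℕ)
    · exact_mod_cast j.2
  have hS1eq : S1 = Finset.univ.biUnion
      (fun j : Fin ℓ => (Finset.Icc (-N) (a j)).image (fun r => r * ℓ + ((j:ℕ) : ℤ))) := by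
    ext x
    simp only [hS1_def, Finset.mem_filter, Finset.mem_Ico, Finset.mem_biUnion, Finset.mem_univ,
      Finset.mem_image, Finset.mem_Icc, true_and, Beads, Set.mem_setOf_eq]
    constructor
    · rintro ⟨⟨h1, h2⟩, j, r, hr, rfl⟩
      refine ⟨j, r, ⟨?_, hr⟩, rfl⟩
      by_contra hcon
      push_neg at hcon
      obtain ⟨hj1, hj2⟩ := hcast j
      have hr1 : r ≤ -N - 1 := by omega
      have hr2 : r * ℓ ≤ (-N - 1) * ℓ := mul_le_mul_of_nonneg_right hr1 (le_of_lt hℓpos)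
      have hr3 : (-N - 1) * ℓ = -(N * ℓ) - ℓ := by ring
      simp only [hA_def] at h1
      linarith
    · rintro ⟨j, r, ⟨hr1, hr2⟩, rfl⟩
      obtain ⟨hj1, hj2⟩ := hcast j
      refine ⟨⟨?_, ?_⟩, j, r, hr2, rfl⟩
      · have h3 : (-N) * ℓ ≤ r * ℓ := mul_le_mul_of_nonneg_right hr1 (le_of_lt hℓpos)
        have h4 : (-N) * ℓ = -(N * ℓ) := by ring
        simp only [hA_def]
        linarith
      · have hrM : r ≤ M - 1 := le_trans hr2 (le_trans (hNa j).2 hMN)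
        have h3 : r * ℓ ≤ (M - 1) * ℓ := mul_le_mul_of_nonneg_right hrM (le_of_lt hℓpos)
        have h4 : (M - 1) * ℓ = M * ℓ - ℓ := by ring
        simp only [hB_def]
        linarith
  have hmulinj : ∀ j : Fin ℓ, Function.Injective (fun r : ℤ => r * ℓ + ((j:ℕ) : ℤ)) := by
    intro j r r' h
    simp only [add_left_inj] at h
    exact mul_right_cancel₀ (by omega : (ℓ:ℤ) ≠ 0) h
  have hS1card : (S1.card : ℤ) = (ℓ:ℤ) * (N + 1) := by
    rw [hS1eq, Finset.card_biUnion]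
    · push_cast
      have hterm : ∀ j : Fin ℓ,
          ((((Finset.Icc (-N) (a j)).image (fun r => r * ℓ + ((j:ℕ) : ℤ))).card : ℤ))
          = a j + N + 1 := by
        intro j
        rw [Finset.card_image_of_injective _ (hmulinj j), Int.card_Icc,
          Int.toNat_of_nonneg (by have := (hNa j).1; omega)]
        ring
      rw [Finset.sum_congr rfl (fun j _ => hterm j)]
      rw [Finset.sum_add_distrib, Finset.sum_add_distrib, ha]
      simp only [Finset.sum_const, Finset.card_univ, Fintype.card_fin, nsmul_eq_mul]
      ring
    · intro u _ v _ huv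
      rw [Function.onFun, Finset.disjoint_left]
      rintro x hx1 hx2
      simp only [Finset.mem_image, Finset.mem_Icc] at hx1 hx2
      obtain ⟨r, _, hr⟩ := hx1
      obtain ⟨r', _, hr'⟩ := hx2
      obtain ⟨h1, h2⟩ := hcast u
      obtain ⟨h3, h4⟩ := hcast v
      have h5 := (runner_eq ℓ (by omega) r r' u v h1 h2 h3 h4 (by rw [hr, hr'])).2
      exact huv (Fin.ext (by exact_mod_cast h5))
  -- conclude s = ℓ - m
  have hs_val : s = (ℓ : ℤ) - m := by
    have h1 : (S1.card : ℤ) = (S2.card : ℤ) := by exact_mod_cast hcard12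
    rw [hS1card, hS2card] at h1
    ring_nf at h1
    linarith
  -- index arithmetic
  set q : ℕ := (k + ℓ - 1) / ℓ with hq_def
  have hmod : (k + ℓ - 1) % ℓ = (i : ℕ) := by
    have h1 : ((i:ℕ) + 1 + (ℓ - 1)) % ℓ = (k + (ℓ - 1)) % ℓ := by
      rw [Nat.add_mod, hi, ← Nat.add_mod]
    have h2 : (i : ℕ) + 1 + (ℓ - 1) = (i : ℕ) + ℓ := by omega
    rw [h2, Nat.add_mod_right, Nat.mod_eq_of_lt i.2] at h1
    have h4 : k + (ℓ - 1) = k + ℓ - 1 := by omega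
    rw [h4] at h1
    exact h1.symm
  have hdecomp : ((k : ℤ) + ℓ - 1) = (q : ℤ) * ℓ + ((i:ℕ) : ℤ) := by
    have h0 := Nat.div_add_mod (k + ℓ - 1) ℓ
    rw [hmod] at h0
    have h1 : ((ℓ * ((k + ℓ - 1) / ℓ) + (i:ℕ) : ℕ) : ℤ) = ((k + ℓ - 1 : ℕ) : ℤ) := by
      exact_mod_cast congrArg (fun n : ℕ => (n : ℤ)) h0
    push_cast at h1
    have h2 : ((k + ℓ - 1 : ℕ) : ℤ) = (k : ℤ) + ℓ - 1 := by
      push_cast [Nat.cast_sub (by omega : 1 ≤ k + ℓ)]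
      ring
    rw [h2] at h1
    rw [hq_def]
    push_cast
    linarith
  -- lower bound
  have hβ0mem : ((k : ℤ) + m - 1) ∈ BetaSet l := (hBmem _).mpr (Or.inl ⟨0, hm, hβ0.symm⟩)
  have hmem1 : ((k : ℤ) + ℓ - 1) ∈ Beads ℓ a := by
    rw [hsmem]
    have h1 : (k : ℤ) + ℓ - 1 - s = (k : ℤ) + m - 1 := by rw [hs_val]; ring
    rw [h1]
    exact hβ0mem
  obtain ⟨j, r, hr, hrx⟩ := hmem1
  obtain ⟨hj1, hj2⟩ := hcast j
  obtain ⟨hi1, hi2⟩ := hcast i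
  have heq : (q : ℤ) * ℓ + ((i:ℕ):ℤ) = r * ℓ + ((j:ℕ):ℤ) := by rw [← hdecomp, hrx]
  obtain ⟨hrq, hij⟩ := runner_eq ℓ (by omega) q r i j hi1 hi2 hj1 hj2 heq
  have hij' : i = j := Fin.ext (by exact_mod_cast hij)
  have hlow : (q : ℤ) ≤ a i := by rw [hij', hrq]; exact hr
  -- upper bound
  have hmem2 : a i * ℓ + ((i:ℕ):ℤ) ∈ Beads ℓ a := ⟨i, a i, le_refl _, rfl⟩
  have hy := hBmax _ ((hsmem _).mp hmem2)
  have hup : a i * ℓ ≤ (q : ℤ) * ℓ := by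
    rw [hs_val] at hy
    omega
  have hup2 : a i ≤ (q : ℤ) := le_of_mul_le_mul_right hup hℓpos
  omega
end
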